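/- arXiv:math/0307399 — 5 statements merged into one kernel-verified Lean document; each statement's English description precedes it below -/
import Mathlib

section
/- If X is a closed permutation class such that al(X) = ∞ (i.e., X contains, among its elements or their inverses, arbitrarily long alternating permutations), then |X ∩ S_n| ≥ 2^{n-1} for every n ≥ 1. -/
/-- A finite permutation: a length `n` together with a permutation of `{1,…,n}`
(modelled as `Fin n`). -/
def PermSeq : Type := Σ n : ℕ, Equiv.Perm (Fin n)

/-- `PermContains π ρ` : the permutation `π` is contained in `ρ` (written `π ≺ ρ`),
i.e. `ρ`, viewed as a sequence, has a subsequence order-isomorphic to `π`. -/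
def PermContains {m n : ℕ} (π : Equiv.Perm (Fin m)) (ρ : Equiv.Perm (Fin n)) : Prop :=
  ∃ f : Fin m → Fin n, StrictMono f ∧ ∀ i j : Fin m, π i < π j ↔ ρ (f i) < ρ (f j)

/-- Containment as a relation on `PermSeq`. -/
def PermLE (σ τ : PermSeq) : Prop := PermContains σ.2 τ.2

/-- A closed permutation class: downward closed under containment. -/
def IsCPC (X : Set PermSeq) : Prop := ∀ σ ∈ X, ∀ π : PermSeq, PermLE π σ → π ∈ X

/-- `countIn X n = |X ∩ S_n|`. -/
noncomputable def countIn (X : Set PermSeq) (n : ℕ) : ℕ := {π ∈ X | π.1 = n}.ncard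

/-- A permutation `σ ∈ S_n` is alternating if every value at an odd position is larger
than every value at an even position (positions are `1`-indexed, so position of
`i : Fin n` is `i.val + 1`). -/
def IsAlternating {n : ℕ} (σ : Equiv.Perm (Fin n)) : Prop :=
  ∀ i j : Fin n, Odd (i.val + 1) → Even (j.val + 1) → σ j < σ i

/-- The set of lengths of alternating permutations contained in `π` or in `π⁻¹`. -/
def alSet (π : PermSeq) : Set ℕ :=
  {m | ∃ σ : Equiv.Perm (Fin m), IsAlternating σ ∧
        (PermContains σ π.2 ∨ PermContains σ π.2⁻¹)}

/-- `al π` : the maximum length of an alternating permutation contained in `π` or `π⁻¹`. -/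
noncomputable def al (π : PermSeq) : ℕ := sSup (alSet π)


open Function Finset

namespace CPCProof

variable {α : Type*} [LinearOrder α]

theorem erdos_szekeres {r s n : ℕ} {f : Fin n → α} (hn : r * s < n) (hf : Injective f) :
    (∃ t : Finset (Fin n), r < #t ∧ StrictMonoOn f ↑t) ∨
      ∃ t : Finset (Fin n), s < #t ∧ StrictAntiOn f ↑t := by
  let inc_sequences_ending_in : Fin n → Finset (Finset (Fin n)) := fun i =>
    univ.powerset.filter fun t => Finset.max t = i ∧ StrictMonoOn f ↑t
  let dec_sequences_ending_in : Fin n → Finset (Finset (Fin n)) := fun i =>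
    univ.powerset.filter fun t => Finset.max t = i ∧ StrictAntiOn f ↑t
  have inc_i : ∀ i, {i} ∈ inc_sequences_ending_in i := fun i => by
    simp [inc_sequences_ending_in, StrictMonoOn]
  have dec_i : ∀ i, {i} ∈ dec_sequences_ending_in i := fun i => by
    simp [dec_sequences_ending_in, StrictAntiOn]
  let ab' : Fin n → ℕ × ℕ := by
    intro i
    apply
      (max' ((inc_sequences_ending_in i).image card) (Nonempty.image ⟨{i}, inc_i i⟩ _),
        max' ((dec_sequences_ending_in i).image card) (Nonempty.image ⟨{i}, dec_i i⟩ _))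
  generalize hab : ab' = ab
  rsuffices ⟨i, hi⟩ : ∃ i, r < (ab i).1 ∨ s < (ab i).2
  · refine Or.imp ?_ ?_ hi
    on_goal 1 =>
      have : (ab i).1 ∈ image card (inc_sequences_ending_in i) := by
        simp only [← hab]; exact max'_mem _ (Nonempty.image ⟨{i}, inc_i i⟩ _)
    on_goal 2 =>
      have : (ab i).2 ∈ image card (dec_sequences_ending_in i) := by
        simp only [← hab]; exact max'_mem _ (Nonempty.image ⟨{i}, dec_i i⟩ _)
    all_goals
      intro hi
      rw [mem_image] at this
      obtain ⟨t, ht₁, ht₂⟩ := this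
      refine ⟨t, by rwa [ht₂], ?_⟩
      rw [mem_filter] at ht₁
      apply ht₁.2.2
  have : Injective ab := by
    simp only [← hab]
    suffices H : ∀ i j, i < j → ab' i ≠ ab' j from fun a b h => by_contra (fun hne => (lt_or_gt_of_ne hne).elim (fun hl => H a b hl h) (fun hl => H b a hl h.symm))
    intro i j k q
    injection q with q₁ q₂
    cases lt_or_gt_of_ne fun _ => ne_of_lt ‹i < j› (hf ‹f i = f j›)
    on_goal 1 =>
      apply ne_of_lt _ q₁
      have : (ab' i).1 ∈ image card (inc_sequences_ending_in i) := by exact max'_mem _ (Nonempty.image ⟨{i}, inc_i i⟩ _)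
    on_goal 2 =>
      apply ne_of_lt _ q₂
      have : (ab' i).2 ∈ image card (dec_sequences_ending_in i) := by exact max'_mem _ (Nonempty.image ⟨{i}, dec_i i⟩ _)
    all_goals
      rw [Nat.lt_iff_add_one_le]
      apply le_max'
      rw [mem_image] at this ⊢
      rcases this with ⟨t, ht₁, ht₂⟩
      rw [mem_filter] at ht₁
      have : t.max = i := by simp only [ht₁.2.1]
      refine ⟨insert j t, ?_, ?_⟩
      · rw [mem_filter]
        refine ⟨?_, ?_, ?_⟩
        · rw [mem_powerset]; apply subset_univ
        · convert max_insert (a := j) (s := t)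
          rw [ht₁.2.1, max_eq_left]
          apply WithBot.coe_le_coe.mpr (le_of_lt ‹i < j›)
        simp only [StrictMonoOn, StrictAntiOn, coe_insert, Set.mem_insert_iff, mem_coe]
        rintro x ⟨rfl | _⟩ y ⟨rfl | _⟩ _
        · apply (irrefl _ ‹j < j›).elim
        · exfalso
          apply not_le_of_gt (_root_.trans ‹i < j› ‹j < y›) (le_max_of_eq ‹y ∈ t› ‹t.max = i›)
        · first
          | apply lt_of_le_of_lt _ ‹f i < f j›
          | apply lt_of_lt_of_le ‹f j < f i› _
          rcases lt_or_eq_of_le (le_max_of_eq ‹x ∈ t› ‹t.max = i›) with (_ | rfl)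
          · apply le_of_lt (ht₁.2.2 ‹x ∈ t› (mem_of_max ‹t.max = i›) ‹x < i›)
          · rfl
        · apply ht₁.2.2 ‹x ∈ t› ‹y ∈ t› ‹x < y›
      · rw [card_insert_of_notMem, ht₂]
        intro
        apply not_le_of_gt ‹i < j› (le_max_of_eq ‹j ∈ t› ‹t.max = i›)
  by_contra! q
  let ran : Finset (ℕ × ℕ) := (range r).image Nat.succ ×ˢ (range s).image Nat.succ
  have : image ab univ ⊆ ran := by
    rintro ⟨x₁, x₂⟩
    simp only [ran, mem_image, exists_prop, mem_range, mem_univ, mem_product, true_and,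
      Prod.ext_iff]
    rintro ⟨i, rfl, rfl⟩
    specialize q i
    have z : 1 ≤ (ab i).1 ∧ 1 ≤ (ab i).2 := by
      simp only [← hab]
      constructor <;>
        · apply le_max'
          rw [mem_image]
          exact ⟨{i}, by solve_by_elim, card_singleton i⟩
    exact ⟨⟨(ab i).1 - 1, by omega⟩, (ab i).2 - 1, by omega⟩
  apply not_le_of_gt hn
  simpa [ran, Nat.succ_injective, card_image_of_injective, ‹Injective ab›] using card_le_card this

theorem exists_mono_subseq {L M : ℕ} {f : Fin M → α}
    (hM : (L - 1) * (L - 1) < M) (hf : Function.Injective f) :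
    ∃ e : Fin L → Fin M, StrictMono e ∧ (StrictMono (f ∘ e) ∨ StrictAnti (f ∘ e)) := by
  rcases erdos_szekeres hM hf with ⟨t, ht, hmono⟩ | ⟨t, ht, hmono⟩
  all_goals
    have hL : L ≤ t.card := by omega
    refine ⟨fun i => (t.orderIsoOfFin rfl (Fin.castLE hL i) : Fin M), ?_, ?_⟩
  case _ =>
    intro i j hij
    exact Subtype.coe_lt_coe.mpr ((t.orderIsoOfFin rfl).lt_iff_lt.mpr (Fin.strictMono_castLE hL hij))
  case _ =>
    left
    intro i j hij
    exact hmono (t.orderIsoOfFin rfl _).2 (t.orderIsoOfFin rfl _).2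
      (Subtype.coe_lt_coe.mpr ((t.orderIsoOfFin rfl).lt_iff_lt.mpr (Fin.strictMono_castLE hL hij)))
  case _ =>
    intro i j hij
    exact Subtype.coe_lt_coe.mpr ((t.orderIsoOfFin rfl).lt_iff_lt.mpr (Fin.strictMono_castLE hL hij))
  case _ =>
    right
    intro i j hij
    exact hmono (t.orderIsoOfFin rfl _).2 (t.orderIsoOfFin rfl _).2
      (Subtype.coe_lt_coe.mpr ((t.orderIsoOfFin rfl).lt_iff_lt.mpr (Fin.strictMono_castLE hL hij)))

end CPCProof

open Function Finset


namespace CPCProof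

/-- direction-dependent value: `t = true` means increasing, `false` decreasing. -/
def dirv (t : Bool) (k r : ℕ) : ℕ := if t then r else k - 1 - r

lemma dirv_lt {t : Bool} {k r : ℕ} (h : r < k) : dirv t k r < k := by
  cases t <;> simp [dirv] <;> omega

lemma dirv_inj {t : Bool} {k r s : ℕ} (hr : r < k) (hs : s < k)
    (h : dirv t k r = dirv t k s) : r = s := by
  cases t <;> simp [dirv] at h <;> omega

variable {n : ℕ}

/-- rank of `i` in `S`. -/
noncomputable def rkIn (S : Finset (Fin n)) (i : Fin n) (hi : i ∈ S) : Fin S.card :=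
  (S.orderIsoOfFin rfl).symm ⟨i, hi⟩

lemma rkIn_lt_iff (S : Finset (Fin n)) {i j : Fin n} (hi : i ∈ S) (hj : j ∈ S) :
    rkIn S i hi < rkIn S j hj ↔ i < j := by
  rw [rkIn, rkIn, OrderIso.lt_iff_lt]
  exact Iff.rfl

noncomputable def mergeFun (S : Finset (Fin n)) (t b : Bool) (i : Fin n) : Fin n :=
  if hi : i ∈ S then
    ⟨n - S.card + dirv t S.card (rkIn S i hi), by
      have h1 : S.card ≤ n := by simpa using Finset.card_le_univ S
      have h2 := dirv_lt (t := t) (rkIn S i hi).2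
      omega⟩
  else
    ⟨dirv b Sᶜ.card (rkIn Sᶜ i (Finset.mem_compl.mpr hi)), by
      have h1 : Sᶜ.card ≤ n := by simpa using Finset.card_le_univ Sᶜ
      have h2 := dirv_lt (t := b) (rkIn Sᶜ i (Finset.mem_compl.mpr hi)).2
      omega⟩

lemma card_compl' (S : Finset (Fin n)) : Sᶜ.card = n - S.card := by
  simp [Finset.card_compl]

lemma mergeFun_mem {S : Finset (Fin n)} {t b : Bool} {i : Fin n} (hi : i ∈ S) :
    n - S.card ≤ (mergeFun S t b i).val := by
  simp only [mergeFun, dif_pos hi]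
  omega

lemma mergeFun_not_mem {S : Finset (Fin n)} {t b : Bool} {i : Fin n} (hi : i ∉ S) :
    (mergeFun S t b i).val < n - S.card := by
  simp only [mergeFun, dif_neg hi]
  have h2 := dirv_lt (t := b) (rkIn Sᶜ i (Finset.mem_compl.mpr hi)).2
  have h3 := card_compl' S
  omega

lemma mergeFun_injective (S : Finset (Fin n)) (t b : Bool) :
    Function.Injective (mergeFun S t b) := by
  intro i j h
  by_cases hi : i ∈ S <;> by_cases hj : j ∈ S
  · simp only [mergeFun, dif_pos hi, dif_pos hj, Fin.mk.injEq] at h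
    have hd : dirv t S.card (rkIn S i hi) = dirv t S.card (rkIn S j hj) := by omega
    have h2 : rkIn S i hi = rkIn S j hj :=
      Fin.ext (dirv_inj (rkIn S i hi).2 (rkIn S j hj).2 hd)
    have h3 := congrArg (fun r => ((S.orderIsoOfFin rfl) r : Fin n)) h2
    simpa [rkIn] using h3
  · have h1 := mergeFun_mem (t := t) (b := b) hi
    have h2 := mergeFun_not_mem (t := t) (b := b) hj
    have h3 := congrArg Fin.val h
    omega
  · have h1 := mergeFun_not_mem (t := t) (b := b) hi
    have h2 := mergeFun_mem (t := t) (b := b) hj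
    have h3 := congrArg Fin.val h
    omega
  · simp only [mergeFun, dif_neg hi, dif_neg hj, Fin.mk.injEq] at h
    have h2 : rkIn Sᶜ i (Finset.mem_compl.mpr hi) = rkIn Sᶜ j (Finset.mem_compl.mpr hj) :=
      Fin.ext (dirv_inj (rkIn Sᶜ i (Finset.mem_compl.mpr hi)).2
        (rkIn Sᶜ j (Finset.mem_compl.mpr hj)).2 h)
    have h3 := congrArg (fun r => ((Sᶜ.orderIsoOfFin rfl) r : Fin n)) h2
    simpa [rkIn] using h3

noncomputable def mergePerm (S : Finset (Fin n)) (t b : Bool) : Equiv.Perm (Fin n) :=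
  Equiv.ofBijective (mergeFun S t b)
    (Finite.injective_iff_bijective.mp (mergeFun_injective S t b))

@[simp] lemma mergePerm_apply (S : Finset (Fin n)) (t b : Bool) (i : Fin n) :
    mergePerm S t b i = mergeFun S t b i := rfl

end CPCProof

namespace CPCProof
variable {n : ℕ}

lemma mergePerm_contains {N : ℕ} (σ : Equiv.Perm (Fin N)) (t b : Bool)
    (p q : Fin n → Fin N)
    (hp : StrictMono p) (hq : StrictMono q)
    (hpq : ∀ i, p i < q i) (hqp : ∀ i j : Fin n, i < j → q i < p j)
    (htop : if t then StrictMono (fun i => σ (p i)) else StrictAnti (fun i => σ (p i)))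
    (hbot : if b then StrictMono (fun i => σ (q i)) else StrictAnti (fun i => σ (q i)))
    (hlt : ∀ i j : Fin n, σ (q i) < σ (p j)) (S : Finset (Fin n)) :
    PermContains (mergePerm S t b) σ := by
  refine ⟨fun i => if i ∈ S then p i else q i, ?_, ?_⟩
  · intro i j hij
    by_cases hi : i ∈ S <;> by_cases hj : j ∈ S <;> simp only [hi, hj, if_pos, if_neg, if_true,
      if_false]
    · exact hp hij
    · exact (hp hij).trans (hpq j)
    · exact hqp i j hij
    · exact hq hij
  · intro i j
    by_cases hi : i ∈ S <;> by_cases hj : j ∈ S <;>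
      simp only [hi, hj, if_pos, if_neg, if_true, if_false, mergePerm_apply]
    · -- both in S
      simp only [mergeFun, dif_pos hi, dif_pos hj]
      rw [Fin.mk_lt_mk, Nat.add_lt_add_iff_left]
      cases t with
      | true =>
        simp only [if_true] at htop
        simp only [dirv, if_true]
        rw [← Fin.lt_def, rkIn_lt_iff S hi hj]
        exact htop.lt_iff_lt.symm
      | false =>
        simp only [Bool.false_eq_true, if_false] at htop
        simp only [dirv, Bool.false_eq_true, if_false]
        have hri := (rkIn S i hi).2
        have hrj := (rkIn S j hj).2
        have : (S.card - 1 - (rkIn S i hi : ℕ) < S.card - 1 - (rkIn S j hj : ℕ)) ↔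
            ((rkIn S j hj : ℕ) < (rkIn S i hi : ℕ)) := by omega
        rw [this, ← Fin.lt_def, rkIn_lt_iff S hj hi]
        exact htop.lt_iff_gt.symm
    · -- i ∈ S, j ∉ S : both sides false
      constructor
      · intro hcon
        exfalso
        have h1 := mergeFun_mem (t := t) (b := b) hi
        have h2 := mergeFun_not_mem (t := t) (b := b) hj
        have := Fin.lt_def.mp hcon
        omega
      · intro hcon
        exact absurd hcon (asymm (hlt j i))
    · -- i ∉ S, j ∈ S : both sides true
      constructor
      · intro _; exact hlt i j
      · intro _
        have h1 := mergeFun_not_mem (t := t) (b := b) hi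
        have h2 := mergeFun_mem (t := t) (b := b) hj
        exact Fin.lt_def.mpr (by omega)
    · -- both not in S
      simp only [mergeFun, dif_neg hi, dif_neg hj]
      rw [Fin.mk_lt_mk]
      cases b with
      | true =>
        simp only [if_true] at hbot
        simp only [dirv, if_true]
        rw [← Fin.lt_def, rkIn_lt_iff Sᶜ (Finset.mem_compl.mpr hi) (Finset.mem_compl.mpr hj)]
        exact hbot.lt_iff_lt.symm
      | false =>
        simp only [Bool.false_eq_true, if_false] at hbot
        simp only [dirv, Bool.false_eq_true, if_false]
        have hri := (rkIn Sᶜ i (Finset.mem_compl.mpr hi)).2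
        have hrj := (rkIn Sᶜ j (Finset.mem_compl.mpr hj)).2
        have : (Sᶜ.card - 1 - (rkIn Sᶜ i (Finset.mem_compl.mpr hi) : ℕ) <
            Sᶜ.card - 1 - (rkIn Sᶜ j (Finset.mem_compl.mpr hj) : ℕ)) ↔
            ((rkIn Sᶜ j (Finset.mem_compl.mpr hj) : ℕ) <
              (rkIn Sᶜ i (Finset.mem_compl.mpr hi) : ℕ)) := by omega
        rw [this, ← Fin.lt_def, rkIn_lt_iff Sᶜ (Finset.mem_compl.mpr hj) (Finset.mem_compl.mpr hi)]
        exact hbot.lt_iff_gt.symm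

end CPCProof

namespace CPCProof
variable {n : ℕ}

/-- the marker position: first position for increasing top, last for decreasing top. -/
def marker (hn : 0 < n) (t : Bool) : Fin n :=
  if t then ⟨0, hn⟩ else ⟨n - 1, by omega⟩

lemma mergePerm_marker {hn : 0 < n} {S : Finset (Fin n)} {t b : Bool}
    (hm : marker hn t ∈ S) :
    ((mergePerm S t b) (marker hn t)).val = n - S.card := by
  have hk : 0 < S.card := Finset.card_pos.mpr ⟨_, hm⟩
  rw [mergePerm_apply]
  simp only [mergeFun, dif_pos hm]
  cases t with
  | true =>
    have hr : (rkIn S (marker hn true) hm : ℕ) = 0 := by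
      by_contra hne
      have h0 : (⟨0, by omega⟩ : Fin S.card) < rkIn S (marker hn true) hm := by
        have e0 : ((⟨0, by omega⟩ : Fin S.card) : ℕ) = 0 := rfl
        rw [Fin.lt_def]; omega
      have := (S.orderIsoOfFin rfl).lt_iff_lt.mpr h0
      simp only [rkIn, OrderIso.apply_symm_apply] at this
      have hval := Subtype.coe_lt_coe.mpr this
      have : ((S.orderIsoOfFin rfl ⟨0, by omega⟩ : Fin n) : ℕ) < (marker hn true).val := hval
      simp [marker] at this
    simp [dirv, hr]
  | false =>
    have hr : (rkIn S (marker hn false) hm : ℕ) = S.card - 1 := by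
      have hle : (rkIn S (marker hn false) hm : ℕ) ≤ S.card - 1 := by
        have := (rkIn S (marker hn false) hm).2; omega
      by_contra hne
      have h0 : rkIn S (marker hn false) hm < (⟨S.card - 1, by omega⟩ : Fin S.card) := by
        have e0 : ((⟨S.card - 1, by omega⟩ : Fin S.card) : ℕ) = S.card - 1 := rfl
        rw [Fin.lt_def]; omega
      have := (S.orderIsoOfFin rfl).lt_iff_lt.mpr h0
      simp only [rkIn, OrderIso.apply_symm_apply] at this
      have hval := Subtype.coe_lt_coe.mpr this
      have h2 : (marker hn false).val < ((S.orderIsoOfFin rfl ⟨S.card - 1, by omega⟩ : Fin n) : ℕ) :=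
        hval
      have h3 : ((S.orderIsoOfFin rfl ⟨S.card - 1, by omega⟩ : Fin n) : ℕ) < n :=
        (S.orderIsoOfFin rfl ⟨S.card - 1, by omega⟩ : Fin n).2
      have hg : (marker hn false).val = n - 1 := rfl
      omega
    simp [dirv, hr]

lemma mem_iff_le_mergePerm {S : Finset (Fin n)} {t b : Bool} {i : Fin n} :
    i ∈ S ↔ n - S.card ≤ ((mergePerm S t b) i).val := by
  constructor
  · intro hi; exact mergeFun_mem hi
  · intro h
    by_contra hi
    have := mergeFun_not_mem (t := t) (b := b) hi
    rw [mergePerm_apply] at h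
    omega

lemma mergePerm_injOn_marked {hn : 0 < n} {t b : Bool} {S T : Finset (Fin n)}
    (hS : marker hn t ∈ S) (hT : marker hn t ∈ T)
    (h : mergePerm S t b = mergePerm T t b) : S = T := by
  have h1 : n - S.card = n - T.card := by
    rw [← mergePerm_marker (b := b) hS, ← mergePerm_marker (b := b) hT, h]
  have hcS : S.card ≤ n := by simpa using Finset.card_le_univ S
  have hcT : T.card ≤ n := by simpa using Finset.card_le_univ T
  have hcard : S.card = T.card := by omega
  ext i
  rw [mem_iff_le_mergePerm (t := t) (b := b), mem_iff_le_mergePerm (t := t) (b := b), h, hcard]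

end CPCProof

namespace CPCProof

lemma permContains_trans {a b c : ℕ} {π : Equiv.Perm (Fin a)} {ρ : Equiv.Perm (Fin b)}
    {τ : Equiv.Perm (Fin c)} (h1 : PermContains π ρ) (h2 : PermContains ρ τ) :
    PermContains π τ := by
  obtain ⟨f, hf, hf2⟩ := h1
  obtain ⟨g, hg, hg2⟩ := h2
  exact ⟨g ∘ f, hg.comp hf, fun i j => (hf2 i j).trans (hg2 (f i) (f j))⟩

lemma permContains_inv {m N : ℕ} {τ : Equiv.Perm (Fin m)} {ρ : Equiv.Perm (Fin N)}
    (h : PermContains τ ρ) : PermContains τ⁻¹ ρ⁻¹ := by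
  obtain ⟨f, hf, hiff⟩ := h
  refine ⟨fun j => ρ (f (τ⁻¹ j)), ?_, ?_⟩
  · intro i j hij
    exact (hiff _ _).1 (by simpa using hij)
  · intro i j
    simp only [Equiv.Perm.inv_def, Equiv.symm_apply_apply]
    exact hf.lt_iff_lt.symm

lemma exists_alt_of_le_al {π : PermSeq} {K : ℕ} (hK : 1 ≤ K) (h : K ≤ al π) :
    ∃ m, K ≤ m ∧ m ∈ alSet π := by
  by_cases hb : BddAbove (alSet π)
  · rcases Set.eq_empty_or_nonempty (alSet π) with he | hne
    · rw [al, he] at h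
      simp [csSup_empty] at h
      omega
    · exact ⟨al π, h, Nat.sSup_mem hne hb⟩
  · rw [not_bddAbove_iff] at hb
    obtain ⟨y, hy, hKy⟩ := hb K
    exact ⟨y, le_of_lt hKy, hy⟩

/-- the required length of an alternating permutation. -/
def Kof (n : ℕ) : ℕ := 2 * (((n - 1) * (n - 1) + 1) * ((n - 1) * (n - 1) + 1) + 1)

lemma exists_merge_contains {n : ℕ} (hn : 0 < n) {m : ℕ} (σ : Equiv.Perm (Fin m))
    (hσ : IsAlternating σ) (hm : Kof n ≤ m) :
    ∃ t b : Bool, ∀ S : Finset (Fin n), PermContains (mergePerm S t b) σ := by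
  set M : ℕ := ((n - 1) * (n - 1) + 1) * ((n - 1) * (n - 1) + 1) + 1 with hM
  have hMm : 2 * M ≤ m := hm
  set m1 : ℕ := (n - 1) * (n - 1) + 2 with hm1
  -- the odd-position (0-indexed even) values
  set α : Fin M → Fin m := fun i => σ ⟨2 * i.val, by have := i.2; omega⟩ with hα
  have hαinj : Function.Injective α := by
    intro i j hij
    have := σ.injective hij
    simp only [Fin.mk.injEq] at this
    exact Fin.ext (by omega)
  obtain ⟨e, he, htop'⟩ := exists_mono_subseq (L := m1) (M := M)
    (by
      have h9 : m1 - 1 = (n - 1) * (n - 1) + 1 := by omega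
      rw [h9, hM]
      omega) hαinj
  set E : Fin (m1 - 1) → Fin M := fun j => e (Fin.castLE (by omega) j) with hE
  have hEmono : StrictMono E := fun i j hij => he (Fin.strictMono_castLE _ hij)
  set β : Fin (m1 - 1) → Fin m := fun j => σ ⟨2 * (E j).val + 1, by
    have := (E j).2; omega⟩ with hβ
  have hβinj : Function.Injective β := by
    intro i j hij
    have := σ.injective hij
    simp only [Fin.mk.injEq] at this
    exact hEmono.injective (Fin.ext (by omega))
  obtain ⟨d, hd, hbot'⟩ := exists_mono_subseq (L := n) (M := m1 - 1)
    (by rw [hm1]; omega) hβinj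
  set p : Fin n → Fin m := fun i => ⟨2 * (E (d i)).val, by have := (E (d i)).2; omega⟩ with hp'
  set q : Fin n → Fin m := fun i => ⟨2 * (E (d i)).val + 1, by have := (E (d i)).2; omega⟩ with hq'
  have hp : StrictMono p := by
    intro i j hij
    have := hEmono (hd hij)
    rw [Fin.lt_def] at this ⊢
    simp only [hp']
    omega
  have hq : StrictMono q := by
    intro i j hij
    have := hEmono (hd hij)
    rw [Fin.lt_def] at this ⊢
    simp only [hq']
    omega
  have hpq : ∀ i, p i < q i := by
    intro i
    rw [Fin.lt_def]
    simp only [hp', hq']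
    omega
  have hqp : ∀ i j : Fin n, i < j → q i < p j := by
    intro i j hij
    have := hEmono (hd hij)
    rw [Fin.lt_def] at this ⊢
    simp only [hp', hq']
    omega
  have hps : (fun i => σ (p i)) = (α ∘ e) ∘ (fun i => Fin.castLE (by omega) (d i)) := by
    funext i
    rfl
  have hqs : (fun i => σ (q i)) = β ∘ d := by
    funext i
    rfl
  have hcast : StrictMono (fun i : Fin n => Fin.castLE (by omega : m1 - 1 ≤ m1) (d i)) :=
    fun i j hij => Fin.strictMono_castLE _ (hd hij)
  have hlt : ∀ i j : Fin n, σ (q i) < σ (p j) := by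
    intro i j
    apply hσ
    · simp only [hp']
      exact ⟨(E (d j)).val, by omega⟩
    · simp only [hq']
      exact ⟨(E (d i)).val + 1, by omega⟩
  rcases htop' with ht | ht <;> rcases hbot' with hb | hb
  · exact ⟨true, true, fun S => mergePerm_contains σ true true p q hp hq hpq hqp
      (by simp only [if_true]; rw [hps]; exact ht.comp hcast)
      (by simp only [if_true]; rw [hqs]; exact hb) hlt S⟩
  · exact ⟨true, false, fun S => mergePerm_contains σ true false p q hp hq hpq hqp
      (by simp only [if_true]; rw [hps]; exact ht.comp hcast)
      (by simp only [Bool.false_eq_true, if_false]; rw [hqs]; exact hb) hlt S⟩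
  · exact ⟨false, true, fun S => mergePerm_contains σ false true p q hp hq hpq hqp
      (by simp only [Bool.false_eq_true, if_false]; rw [hps]; exact ht.comp_strictMono hcast)
      (by simp only [if_true]; rw [hqs]; exact hb) hlt S⟩
  · exact ⟨false, false, fun S => mergePerm_contains σ false false p q hp hq hpq hqp
      (by simp only [Bool.false_eq_true, if_false]; rw [hps]; exact ht.comp_strictMono hcast)
      (by simp only [Bool.false_eq_true, if_false]; rw [hqs]; exact hb) hlt S⟩

end CPCProof

namespace CPCProof

lemma card_marked {n : ℕ} (m₀ : Fin n) :
    ((Finset.univ : Finset (Finset (Fin n))).filter (fun S => m₀ ∈ S)).card = 2 ^ (n - 1) := by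
  have h : ((Finset.univ : Finset (Finset (Fin n))).filter (fun S => m₀ ∈ S)).card
      = ((Finset.univ.erase m₀).powerset).card := by
    refine Finset.card_bij' (fun S _ => S.erase m₀) (fun T _ => insert m₀ T) ?_ ?_ ?_ ?_
    · intro S hS
      rw [Finset.mem_powerset]
      exact Finset.erase_subset_erase _ (Finset.subset_univ S)
    · intro T hT
      simp only [Finset.mem_filter, Finset.mem_univ, true_and]
      exact Finset.mem_insert_self _ _
    · intro S hS
      simp only [Finset.mem_filter] at hS
      exact Finset.insert_erase hS.2
    · intro T hT
      rw [Finset.mem_powerset] at hT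
      apply Finset.erase_insert
      intro hmem
      exact (Finset.notMem_erase m₀ _) (hT hmem)
  rw [h, Finset.card_powerset, Finset.card_erase_of_mem (Finset.mem_univ _), Finset.card_univ,
    Fintype.card_fin]

end CPCProof


open CPCProof

/-- If a closed permutation class `X` contains (among its elements or their inverses)
arbitrarily long alternating permutations, then `|X ∩ S_n| ≥ 2 ^ (n - 1)` for every `n ≥ 1`. -/
theorem count_ge_of_al_infinite (X : Set PermSeq) (hX : IsCPC X)
    (hal : ∀ K : ℕ, ∃ π ∈ X, K ≤ al π) :
    ∀ n : ℕ, 1 ≤ n → 2 ^ (n - 1) ≤ countIn X n := by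
  classical
  intro n hn
  obtain ⟨π, hπX, hπal⟩ := hal (Kof n)
  have hK1 : 1 ≤ Kof n := by unfold Kof; omega
  obtain ⟨m, hm, σ, hσalt, hσcon⟩ := exists_alt_of_le_al hK1 hπal
  obtain ⟨t, b, hcont⟩ := exists_merge_contains hn σ hσalt hm
  obtain ⟨g, hginj, hgmem⟩ : ∃ g : Equiv.Perm (Fin n) → Equiv.Perm (Fin n),
      Function.Injective g ∧
        ∀ S : Finset (Fin n), (⟨n, g (mergePerm S t b)⟩ : PermSeq) ∈ X := by
    rcases hσcon with h | h
    · exact ⟨id, Function.injective_id,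
        fun S => hX π hπX ⟨n, mergePerm S t b⟩ (permContains_trans (hcont S) h)⟩
    · refine ⟨fun ρ => ρ⁻¹, fun a b hab => by simpa using congrArg (fun x => x⁻¹) hab,
        fun S => ?_⟩
      have h3 := permContains_inv (permContains_trans (hcont S) h)
      rw [inv_inv] at h3
      exact hX π hπX ⟨n, (mergePerm S t b)⁻¹⟩ h3
  set m₀ : Fin n := marker hn t with hm₀
  set D : Finset (Finset (Fin n)) := Finset.univ.filter (fun S => m₀ ∈ S) with hD
  set F : Finset (Fin n) → PermSeq := fun S => ⟨n, g (mergePerm S t b)⟩ with hF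
  have hFinj : Set.InjOn F ↑D := by
    intro S hS T hT hST
    simp only [hD, Finset.coe_filter, Set.mem_setOf_eq] at hS hT
    have h1 : g (mergePerm S t b) = g (mergePerm T t b) := by
      have := (Sigma.mk.inj_iff.mp hST).2
      exact eq_of_heq this
    exact mergePerm_injOn_marked hS.2 hT.2 (hginj h1)
  have hsub : ↑(D.image F) ⊆ {π ∈ X | π.1 = n} := by
    intro x hx
    simp only [Finset.coe_image, Set.mem_image, Finset.mem_coe] at hx
    obtain ⟨S, _, rfl⟩ := hx
    exact ⟨hgmem S, rfl⟩
  have hfin : {π ∈ X | π.1 = n}.Finite := by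
    apply Set.Finite.subset (Set.finite_range (fun ρ : Equiv.Perm (Fin n) => (⟨n, ρ⟩ : PermSeq)))
    rintro ⟨k, ρ⟩ ⟨-, hk⟩
    simp only at hk
    subst hk
    exact ⟨ρ, rfl⟩
  calc 2 ^ (n - 1) = D.card := (card_marked m₀).symm
    _ = (D.image F).card := (Finset.card_image_of_injOn hFinj).symm
    _ = (↑(D.image F) : Set PermSeq).ncard := (Set.ncard_coe_finset _).symm
    _ ≤ {π ∈ X | π.1 = n}.ncard := Set.ncard_le_ncard hsub hfin
end

section
/- For every up-indecomposable permutation π of length n > 1, there is an up-indecomposable permutation σ of length n-1 with σ ≺ π. The same holds for down-indecomposable permutations. -/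
/-- The direct sum `σ ⊕ τ` of permutations: `(σ⊕τ)(i) = σ(i)` for `i` in the first block
and `(σ⊕τ)(m+i) = m + τ(i)` on the second block. -/
def permOplus {m n : ℕ} (σ : Equiv.Perm (Fin m)) (τ : Equiv.Perm (Fin n)) :
    Equiv.Perm (Fin (m + n)) :=
  finSumFinEquiv.symm.trans ((Equiv.sumCongr σ τ).trans finSumFinEquiv)

/-- The skew sum `σ ⊖ τ` of permutations: `(σ⊖τ)(i) = n + σ(i)` for `i` in the first block
and `(σ⊖τ)(m+i) = τ(i)` on the second block. -/
def permOminus {m n : ℕ} (σ : Equiv.Perm (Fin m)) (τ : Equiv.Perm (Fin n)) :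
    Equiv.Perm (Fin (m + n)) :=
  finSumFinEquiv.symm.trans ((Equiv.sumCongr σ τ).trans
    ((Equiv.sumComm (Fin m) (Fin n)).trans (finSumFinEquiv.trans (finCongr (Nat.add_comm n m)))))

/-- Direct sum on `PermSeq`. -/
def PermSeq.oplus (σ τ : PermSeq) : PermSeq := ⟨σ.1 + τ.1, permOplus σ.2 τ.2⟩

/-- Skew sum on `PermSeq`. -/
def PermSeq.ominus (σ τ : PermSeq) : PermSeq := ⟨σ.1 + τ.1, permOminus σ.2 τ.2⟩

/-- A permutation is up-indecomposable if it is not the direct sum of two nonempty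
permutations. -/
def UpIndec (π : PermSeq) : Prop :=
  ¬ ∃ σ τ : PermSeq, 1 ≤ σ.1 ∧ 1 ≤ τ.1 ∧ π = PermSeq.oplus σ τ

/-- A permutation is down-indecomposable if it is not the skew sum of two nonempty
permutations. -/
def DownIndec (π : PermSeq) : Prop :=
  ¬ ∃ σ τ : PermSeq, 1 ≤ σ.1 ∧ 1 ≤ τ.1 ∧ π = PermSeq.ominus σ τ

namespace IndecAux

variable {N m n : ℕ}

lemma permOplus_castAdd (σ : Equiv.Perm (Fin m)) (τ : Equiv.Perm (Fin n)) (i : Fin m) :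
    permOplus σ τ (Fin.castAdd n i) = Fin.castAdd n (σ i) := by
  simp [permOplus]

lemma permOplus_natAdd (σ : Equiv.Perm (Fin m)) (τ : Equiv.Perm (Fin n)) (j : Fin n) :
    permOplus σ τ (Fin.natAdd m j) = Fin.natAdd m (τ j) := by
  simp [permOplus]

lemma permOminus_castAdd_val (σ : Equiv.Perm (Fin m)) (τ : Equiv.Perm (Fin n)) (i : Fin m) :
    (permOminus σ τ (Fin.castAdd n i)).val = n + (σ i).val := by
  simp [permOminus]; omega

lemma permOminus_natAdd_val (σ : Equiv.Perm (Fin m)) (τ : Equiv.Perm (Fin n)) (j : Fin n) :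
    (permOminus σ τ (Fin.natAdd m j)).val = (τ j).val := by
  simp [permOminus]


def Inv (π : Equiv.Perm (Fin N)) (a b : Fin N) : Prop :=
  (a < b ∧ π b < π a) ∨ (b < a ∧ π a < π b)

lemma inv_symm (π : Equiv.Perm (Fin N)) : Symmetric (Inv π) := fun _ _ h => h.elim Or.inr Or.inl

def Split (π : Equiv.Perm (Fin N)) (k : ℕ) : Prop :=
  0 < k ∧ k < N ∧ ∀ i : Fin N, i.val < k ↔ (π i).val < k

lemma oplus_split (σ : Equiv.Perm (Fin m)) (τ : Equiv.Perm (Fin n)) :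
    ∀ i : Fin (m + n), i.val < m ↔ (permOplus σ τ i).val < m := by
  intro i
  induction i using Fin.addCases with
  | left i => simp [permOplus_castAdd, i.isLt, (σ i).isLt]
  | right j => simp [permOplus_natAdd]

lemma split_decomp (k mm : ℕ) (π : Equiv.Perm (Fin (k + mm)))
    (h : ∀ i : Fin (k + mm), i.val < k ↔ (π i).val < k) :
    ∃ (σ : Equiv.Perm (Fin k)) (τ : Equiv.Perm (Fin mm)), π = permOplus σ τ := by
  have hlt : ∀ i : Fin k, (π (Fin.castAdd mm i)).val < k := fun i => (h _).mp (by simp)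
  have hge : ∀ j : Fin mm, k ≤ (π (Fin.natAdd k j)).val := by
    intro j
    by_contra hj
    have h2 := (h (Fin.natAdd k j)).mpr (by omega)
    simp [Fin.natAdd] at h2
  let s : Fin k → Fin k := fun i => ⟨(π (Fin.castAdd mm i)).val, hlt i⟩
  have hsinj : Function.Injective s := by
    intro a b hab
    rw [Fin.ext_iff] at hab
    simp only [s] at hab
    have h2 := π.injective (Fin.ext hab)
    exact Fin.ext (by simpa [Fin.ext_iff] using h2)
  let t : Fin mm → Fin mm := fun j => ⟨(π (Fin.natAdd k j)).val - k, by
    have h1 := (π (Fin.natAdd k j)).isLt; have h2 := hge j; omega⟩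
  have htinj : Function.Injective t := by
    intro a b hab
    have h2 := hge a; have h3 := hge b
    have h4 : (π (Fin.natAdd k a)).val = (π (Fin.natAdd k b)).val := by
      have h5 := congrArg Fin.val hab
      simp only [t] at h5
      omega
    have h6 := π.injective (Fin.ext h4)
    have h7 := congrArg Fin.val h6
    simp [Fin.ext_iff] at h7 ⊢
    omega
  refine ⟨Equiv.ofBijective s (Finite.injective_iff_bijective.mp hsinj),
          Equiv.ofBijective t (Finite.injective_iff_bijective.mp htinj), ?_⟩
  apply Equiv.ext
  intro x
  induction x using Fin.addCases with
  | left i =>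
    rw [permOplus_castAdd]
    exact Fin.ext rfl
  | right j =>
    rw [permOplus_natAdd]
    refine Fin.ext ?_
    have h2 := hge j
    show (π (Fin.natAdd k j)).val = k + ((π (Fin.natAdd k j)).val - k)
    omega

lemma split_decomp' (π : Equiv.Perm (Fin N)) (k : ℕ) (h : Split π k) :
    ∃ σ τ : PermSeq, 1 ≤ σ.1 ∧ 1 ≤ τ.1 ∧ (⟨N, π⟩ : PermSeq) = PermSeq.oplus σ τ := by
  obtain ⟨hk0, hkN, hs⟩ := h
  obtain ⟨mm, rfl⟩ : ∃ mm, N = k + mm := ⟨N - k, by omega⟩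
  obtain ⟨σ, τ, hστ⟩ := split_decomp k mm π hs
  refine ⟨⟨k, σ⟩, ⟨mm, τ⟩, hk0, (by show 1 ≤ mm; omega), ?_⟩
  show (⟨k + mm, π⟩ : PermSeq) = (⟨k + mm, permOplus σ τ⟩ : PermSeq)
  rw [hστ]


lemma downward_closed_finset (F : Finset (Fin N))
    (hdc : ∀ i j : Fin N, i ≤ j → j ∈ F → i ∈ F) :
    ∀ w : Fin N, w ∈ F ↔ w.val < F.card := by
  intro w
  constructor
  · intro hw
    have hsub : Finset.Iic w ⊆ F := fun x hx => hdc x w (Finset.mem_Iic.mp hx) hw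
    have h1 := Finset.card_le_card hsub
    rw [Fin.card_Iic] at h1
    omega
  · intro hw
    by_contra hwF
    have hsub : F ⊆ Finset.Iio w := by
      intro x hx
      rw [Finset.mem_Iio]
      rcases lt_or_ge x w with h1 | h1
      · exact h1
      · exact absurd (hdc w x h1 hx) hwF
    have h1 := Finset.card_le_card hsub
    rw [Fin.card_Iio] at h1
    omega

lemma not_connected_split (π : Equiv.Perm (Fin N)) (hN : 0 < N)
    (h : ¬ ∀ x y : Fin N, Relation.ReflTransGen (Inv π) x y) : ∃ k, Split π k := by
  classical
  push_neg at h
  obtain ⟨x, y, hxy⟩ := h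
  set z0 : Fin N := ⟨0, hN⟩ with hz0def
  set S : Fin N → Prop := fun w => Relation.ReflTransGen (Inv π) z0 w with hSdef
  have hz0S : S z0 := Relation.ReflTransGen.refl
  have hSnotall : ∃ z, ¬ S z := by
    by_contra hall
    push_neg at hall
    exact hxy (((@Std.Symm.symm _ _ (@Relation.ReflTransGen.stdSymm _ _ ⟨fun _ _ h => inv_symm π h⟩)) _ _ (hall x)).trans (hall y))
  -- downward closedness of the component of z0
  have hdc : ∀ i j : Fin N, i ≤ j → S j → S i := by
    intro i j hij hj
    by_contra hi
    have hi0 : z0 ≠ i := fun e => hi (e ▸ hz0S)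
    have hz0lt : z0 < i := lt_of_le_of_ne (by simp [hz0def, Fin.le_def]) hi0
    have step : ∀ a b : Fin N, S a → a < i → Inv π a b → b < i := by
      intro a b hSa hai hab
      have hSb : S b := hSa.tail hab
      have hbi : b ≠ i := fun e => hi (e ▸ hSb)
      rcases lt_or_gt_of_ne hbi with h1 | h1
      · exact h1
      · exfalso
        have hnai : ¬ Inv π a i := fun hh => hi (hSa.tail hh)
        have hnbi : ¬ Inv π b i := fun hh => hi (hSb.tail hh)
        have hab' : π b < π a := by
          rcases hab with ⟨_, h2⟩ | ⟨h2, _⟩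
          · exact h2
          · exact absurd (hai.trans h1) (asymm h2)
        have h3 : π a < π i := by
          have h4 : ¬ π i < π a := fun hh => hnai (Or.inl ⟨hai, hh⟩)
          have hne : π a ≠ π i := fun e => absurd (π.injective e) (ne_of_lt hai)
          exact lt_of_le_of_ne (le_of_not_gt h4) hne
        have h5 : π i < π b := by
          have h4 : ¬ π b < π i := fun hh => hnbi (Or.inr ⟨h1, hh⟩)
          have hne : π i ≠ π b := fun e => absurd (π.injective e) (ne_of_lt h1)
          exact lt_of_le_of_ne (le_of_not_gt h4) hne
        exact absurd (h3.trans h5) (asymm hab')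
    have main : ∀ w : Fin N, S w → w < i := by
      intro w hw
      induction hw with
      | refl => exact hz0lt
      | tail hprev hstep ih => exact step _ _ hprev ih hstep
    exact absurd (main j hj) (not_lt.mpr hij)
  set F : Finset (Fin N) := Finset.univ.filter (fun w => S w) with hFdef
  have hmemF : ∀ w, w ∈ F ↔ S w := by intro w; simp [hFdef]
  have hFdc : ∀ i j : Fin N, i ≤ j → j ∈ F → i ∈ F := by
    intro i j hij hj
    exact (hmemF i).mpr (hdc i j hij ((hmemF j).mp hj))
  have hF := downward_closed_finset F hFdc
  set k := F.card with hkdef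
  have hk0 : 0 < k := by
    have h1 : (z0 : Fin N).val < k := (hF z0).mp ((hmemF z0).mpr hz0S)
    omega
  obtain ⟨z, hz⟩ := hSnotall
  have hkN : k < N := by
    have h1 : ¬ z.val < k := fun hh => hz ((hmemF z).mp ((hF z).mpr hh))
    have h2 := z.isLt
    omega
  refine ⟨k, hk0, hkN, ?_⟩
  -- values of the component are exactly the small values
  have hvlt : ∀ i : Fin N, i ∈ F → ∀ j : Fin N, j ∉ F → π i < π j := by
    intro i hi j hj
    have hij : i < j := by
      rcases lt_trichotomy i j with h1 | h1 | h1
      · exact h1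
      · exact absurd (h1 ▸ hi) hj
      · exact absurd (hFdc j i (le_of_lt h1) hi) hj
    have hnij : ¬ Inv π i j := fun hh => hj ((hmemF j).mpr (((hmemF i).mp hi).tail hh))
    have h4 : ¬ π j < π i := fun hh => hnij (Or.inl ⟨hij, hh⟩)
    have hne : π i ≠ π j := fun e => absurd (π.injective e) (ne_of_lt hij)
    exact lt_of_le_of_ne (le_of_not_gt h4) hne
  set A : Finset (Fin N) := F.image π with hAdef
  have hcardA : A.card = k := Finset.card_image_of_injective F π.injective
  have hAdc : ∀ u v : Fin N, u ≤ v → v ∈ A → u ∈ A := by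
    intro u v huv hv
    obtain ⟨i, hi, rfl⟩ := Finset.mem_image.mp hv
    have hu : u = π (π.symm u) := (Equiv.apply_symm_apply π u).symm
    by_cases hj : π.symm u ∈ F
    · rw [hu]; exact Finset.mem_image_of_mem π hj
    · exfalso
      have h1 := hvlt i hi (π.symm u) hj
      rw [← hu] at h1
      exact absurd (lt_of_le_of_lt huv h1) (lt_irrefl _)
  have hA := downward_closed_finset A hAdc
  intro i
  have h1 : i ∈ F ↔ π i ∈ A := by
    constructor
    · exact fun hh => Finset.mem_image_of_mem π hh
    · intro hh
      obtain ⟨i', hi', he⟩ := Finset.mem_image.mp hh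
      rwa [← π.injective he]
  rw [← hF i, h1, hA (π i), hcardA]


lemma exists_noncut (hN : 2 ≤ N) (R : Fin N → Fin N → Prop) (hsym : Symmetric R)
    (hconn : ∀ x y : Fin N, Relation.ReflTransGen R x y) :
    ∃ v : Fin N, ∀ x y : Fin N, x ≠ v → y ≠ v →
      Relation.ReflTransGen (fun a b => R a b ∧ a ≠ v ∧ b ≠ v) x y := by
  classical
  have hN0 : 0 < N := by omega
  set a : Fin N := ⟨0, hN0⟩ with hadef
  have hex : ∀ x : Fin N, ∃ mm : ℕ, ∃ l : List (Fin N),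
      List.Chain R x l ∧ (x :: l).getLast (List.cons_ne_nil _ _) = a ∧ l.length = mm := by
    intro x
    obtain ⟨l, h1, h2⟩ := List.exists_isChain_cons_of_relationReflTransGen (hconn x a)
    exact ⟨l.length, l, h1, h2, rfl⟩
  set d : Fin N → ℕ := fun x => Nat.find (hex x) with hddef
  obtain ⟨v, -, hv⟩ := Finset.exists_max_image Finset.univ d ⟨a, Finset.mem_univ a⟩
  have hv' : ∀ x, d x ≤ d v := fun x => hv x (Finset.mem_univ x)
  have hda : d a = 0 :=
    Nat.eq_zero_of_le_zero (Nat.find_le ⟨[], List.Chain.nil, rfl, rfl⟩)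
  have hd0 : ∀ x : Fin N, d x = 0 → x = a := by
    intro x hx
    obtain ⟨l, hc, hl, hlen⟩ := Nat.find_spec (hex x)
    have hlen0 : l.length = 0 := by rw [hlen]; exact hx
    rcases List.length_eq_zero_iff.mp hlen0 with rfl
    simpa using hl
  have hav : a ≠ v := by
    intro he
    have h1 : ∀ x, d x = 0 := fun x => Nat.le_zero.mp (by rw [he] at hda; rw [← hda]; exact hv' x)
    have h2 := hd0 ⟨1, by omega⟩ (h1 _)
    simp [hadef, Fin.ext_iff] at h2
  have key : ∀ mm : ℕ, ∀ x : Fin N, d x ≤ mm → x ≠ v →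
      Relation.ReflTransGen (fun p q => R p q ∧ p ≠ v ∧ q ≠ v) x a := by
    intro mm
    induction mm with
    | zero =>
      intro x hx _
      rw [hd0 x (Nat.le_zero.mp hx)]
    | succ mm ih =>
      intro x hx hxv
      obtain ⟨l, hc, hl, hlen⟩ := Nat.find_spec (hex x)
      match l, hc, hl, hlen with
      | [], _, hl, _ =>
        have : x = a := by simpa using hl
        rw [this]
      | y :: l', hc, hl, hlen =>
        have hRxy : R x y := (List.chain_cons.mp hc).1
        have hcy : List.Chain R y l' := (List.chain_cons.mp hc).2
        have hly : (y :: l').getLast (List.cons_ne_nil _ _) = a := by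
          rw [← hl]; exact List.getLast_cons_cons.symm
        have hdy : d y ≤ l'.length :=
          Nat.find_le ⟨l', hcy, hly, rfl⟩
        have hlx : l'.length + 1 = d x := by simpa using hlen
        have hdylt : d y < d x := by omega
        have hyv : y ≠ v := by
          intro he
          rw [he] at hdylt
          exact absurd (hdylt.trans_le (hv' x)) (lt_irrefl _)
        exact Relation.ReflTransGen.head ⟨hRxy, hxv, hyv⟩ (ih y (by omega) hyv)
  refine ⟨v, fun x y hxv hyv => ?_⟩
  have h1 := key (d x) x le_rfl hxv
  have h2 := key (d y) y le_rfl hyv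
  exact h1.trans ((@Std.Symm.symm _ _ (@Relation.ReflTransGen.stdSymm _ _
    ⟨fun p q hpq => ⟨hsym hpq.1, hpq.2.2, hpq.2.1⟩⟩)) _ _ h2)


lemma up_case : ∀ π : PermSeq, UpIndec π → 1 < π.1 →
    ∃ σ : PermSeq, UpIndec σ ∧ σ.1 = π.1 - 1 ∧ PermLE σ π := by
  classical
  rintro ⟨N, π⟩ hind hlen
  have hlen' : 1 < N := hlen
  obtain ⟨m, rfl⟩ : ∃ m, N = m + 1 := ⟨N - 1, by omega⟩
  have hm : 1 ≤ m := by omega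
  haveI : Nonempty (Fin m) := ⟨⟨0, by omega⟩⟩
  -- connectivity of the inversion graph
  have hconn : ∀ x y : Fin (m + 1), Relation.ReflTransGen (Inv π) x y := by
    by_contra h
    obtain ⟨k, hk⟩ := not_connected_split π (by omega) h
    obtain ⟨σ, τ, hσ, hτ, heq⟩ := split_decomp' π k hk
    exact hind ⟨σ, τ, hσ, hτ, heq⟩
  obtain ⟨v, hv⟩ := exists_noncut (by omega) (Inv π) (inv_symm π) hconn
  -- delete the entry at position v
  set w : Fin (m + 1) := π v with hwdef
  have hne : ∀ i : Fin m, π (v.succAbove i) ≠ w := fun i h =>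
    Fin.succAbove_ne v i (π.injective h)
  set g : Fin m → Fin m := fun i => Function.invFun w.succAbove (π (v.succAbove i)) with hgdef
  have hg : ∀ i, w.succAbove (g i) = π (v.succAbove i) := fun i =>
    Function.invFun_eq (Fin.exists_succAbove_eq (hne i))
  have hginj : Function.Injective g := by
    intro p q hpq
    have h1 : w.succAbove (g p) = w.succAbove (g q) := by rw [hpq]
    rw [hg, hg] at h1
    exact Fin.succAbove_right_injective (π.injective h1)
  set σ : Equiv.Perm (Fin m) := Equiv.ofBijective g (Finite.injective_iff_bijective.mp hginj)
    with hσdef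
  have hσg : ∀ i, σ i = g i := fun _ => rfl
  have hσlt : ∀ i j : Fin m, σ i < σ j ↔ π (v.succAbove i) < π (v.succAbove j) := by
    intro i j
    rw [← (Fin.strictMono_succAbove w).lt_iff_lt, hσg, hσg, hg, hg]
  have hInv : ∀ i j : Fin m, Inv σ i j ↔ Inv π (v.succAbove i) (v.succAbove j) := by
    intro i j
    simp only [Inv, hσlt, (Fin.strictMono_succAbove v).lt_iff_lt]
  have hσconn : ∀ x y : Fin m, Relation.ReflTransGen (Inv σ) x y := by
    intro x y
    have h1 := hv (v.succAbove x) (v.succAbove y) (Fin.succAbove_ne v x) (Fin.succAbove_ne v y)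
    have hG : ∀ z : Fin (m + 1), z ≠ v → v.succAbove (Function.invFun v.succAbove z) = z :=
      fun z hz => Function.invFun_eq (Fin.exists_succAbove_eq hz)
    have hstep : ∀ p q : Fin (m + 1), (Inv π p q ∧ p ≠ v ∧ q ≠ v) →
        Inv σ (Function.invFun v.succAbove p) (Function.invFun v.succAbove q) := by
      intro p q hpq
      rw [hInv, hG p hpq.2.1, hG q hpq.2.2]
      exact hpq.1
    have h2 : Relation.ReflTransGen (Inv σ) (Function.invFun v.succAbove (v.succAbove x))
        (Function.invFun v.succAbove (v.succAbove y)) :=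
      Relation.ReflTransGen.lift (Function.invFun v.succAbove) hstep _ _ h1
    rwa [Function.leftInverse_invFun Fin.succAbove_right_injective x,
         Function.leftInverse_invFun Fin.succAbove_right_injective y] at h2
  have hup : UpIndec ⟨m, σ⟩ := by
    rintro ⟨⟨a, s⟩, ⟨b, t⟩, ha, hb, heq⟩
    have ha' : 1 ≤ a := ha
    have hb' : 1 ≤ b := hb
    have hm' : m = a + b := congrArg Sigma.fst heq
    subst hm'
    have heq' : (⟨a + b, σ⟩ : PermSeq) = (⟨a + b, permOplus s t⟩ : PermSeq) := heq
    have hσeq : σ = permOplus s t := eq_of_heq (Sigma.mk.inj_iff.mp heq').2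
    have hsp : ∀ i : Fin (a + b), i.val < a ↔ (σ i).val < a := by
      rw [hσeq]; exact oplus_split s t
    have hpres : ∀ p q : Fin (a + b), Inv σ p q → (p.val < a ↔ q.val < a) := by
      intro p q hpq
      rcases hpq with ⟨h1, h2⟩ | ⟨h1, h2⟩
      · constructor
        · intro hp
          by_contra hq
          have e1 : (σ p).val < a := (hsp p).mp hp
          have e2 : ¬ (σ q).val < a := fun hh => hq ((hsp q).mpr hh)
          have e3 := Fin.lt_def.mp h2
          omega
        · intro hq
          have := Fin.lt_def.mp h1
          omega
      · constructor
        · intro hp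
          have := Fin.lt_def.mp h1
          omega
        · intro hq
          by_contra hp
          have e1 : (σ q).val < a := (hsp q).mp hq
          have e2 : ¬ (σ p).val < a := fun hh => hp ((hsp p).mpr hh)
          have e3 := Fin.lt_def.mp h2
          omega
    set x0 : Fin (a + b) := ⟨0, by omega⟩
    set xk : Fin (a + b) := ⟨a, by omega⟩
    have hall : ∀ z : Fin (a + b), Relation.ReflTransGen (Inv σ) x0 z → z.val < a := by
      intro z hz
      induction hz with
      | refl => exact ha'
      | tail _ hstep ih => exact (hpres _ _ hstep).mp ih
    exact absurd (hall xk (hσconn x0 xk)) (lt_irrefl _)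
  refine ⟨⟨m, σ⟩, hup, by simp, ?_⟩
  exact ⟨v.succAbove, Fin.strictMono_succAbove v, hσlt⟩


def permComp (π : Equiv.Perm (Fin N)) : Equiv.Perm (Fin N) := π.trans Fin.revPerm

lemma permComp_apply (π : Equiv.Perm (Fin N)) (i : Fin N) :
    permComp π i = Fin.rev (π i) := rfl

lemma permComp_comp (π : Equiv.Perm (Fin N)) : permComp (permComp π) = π := by
  apply Equiv.ext
  intro i
  simp [permComp, Fin.rev_rev]

lemma permComp_oplus (σ : Equiv.Perm (Fin m)) (τ : Equiv.Perm (Fin n)) :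
    permComp (permOplus σ τ) = permOminus (permComp σ) (permComp τ) := by
  apply Equiv.ext
  intro x
  apply Fin.ext
  induction x using Fin.addCases with
  | left i =>
    have h1 := (σ i).isLt
    rw [permComp_apply, permOplus_castAdd, permOminus_castAdd_val]
    simp [Fin.val_rev, permComp_apply]
    omega
  | right j =>
    have h1 := (τ j).isLt
    rw [permComp_apply, permOplus_natAdd, permOminus_natAdd_val]
    simp [Fin.val_rev, permComp_apply]
    omega

lemma permComp_ominus (σ : Equiv.Perm (Fin m)) (τ : Equiv.Perm (Fin n)) :
    permComp (permOminus σ τ) = permOplus (permComp σ) (permComp τ) := by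
  have h := permComp_oplus (permComp σ) (permComp τ)
  rw [permComp_comp, permComp_comp] at h
  rw [← h, permComp_comp]

def cseq (P : PermSeq) : PermSeq := ⟨P.1, permComp P.2⟩

lemma cseq_cseq (P : PermSeq) : cseq (cseq P) = P := by
  obtain ⟨n, π⟩ := P
  show (⟨n, permComp (permComp π)⟩ : PermSeq) = (⟨n, π⟩ : PermSeq)
  rw [permComp_comp]

lemma cseq_oplus (S T : PermSeq) : cseq (S.oplus T) = (cseq S).ominus (cseq T) := by
  obtain ⟨p, s⟩ := S; obtain ⟨q, t⟩ := T
  show (⟨p + q, permComp (permOplus s t)⟩ : PermSeq)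
      = (⟨p + q, permOminus (permComp s) (permComp t)⟩ : PermSeq)
  rw [permComp_oplus]

lemma cseq_ominus (S T : PermSeq) : cseq (S.ominus T) = (cseq S).oplus (cseq T) := by
  obtain ⟨p, s⟩ := S; obtain ⟨q, t⟩ := T
  show (⟨p + q, permComp (permOminus s t)⟩ : PermSeq)
      = (⟨p + q, permOplus (permComp s) (permComp t)⟩ : PermSeq)
  rw [permComp_ominus]

lemma upIndec_cseq {P : PermSeq} (h : DownIndec P) : UpIndec (cseq P) := by
  rintro ⟨S, T, hS, hT, heq⟩
  apply h
  refine ⟨cseq S, cseq T, hS, hT, ?_⟩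
  have h1 := congrArg cseq heq
  rw [cseq_cseq, cseq_oplus] at h1
  exact h1

lemma downIndec_of_up {P : PermSeq} (h : UpIndec P) : DownIndec (cseq P) := by
  rintro ⟨S, T, hS, hT, heq⟩
  apply h
  refine ⟨cseq S, cseq T, hS, hT, ?_⟩
  have h1 := congrArg cseq heq
  rw [cseq_cseq, cseq_ominus] at h1
  exact h1

lemma permLE_cseq {A B : PermSeq} (h : PermLE A B) : PermLE (cseq A) (cseq B) := by
  obtain ⟨f, hf, hiff⟩ := h
  refine ⟨f, hf, fun i j => ?_⟩
  show permComp A.2 i < permComp A.2 j ↔ permComp B.2 (f i) < permComp B.2 (f j)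
  show Fin.rev (A.2 i) < Fin.rev (A.2 j) ↔ Fin.rev (B.2 (f i)) < Fin.rev (B.2 (f j))
  rw [Fin.rev_lt_rev, Fin.rev_lt_rev]
  exact hiff j i

end IndecAux

/-- Every up-indecomposable permutation of length `n > 1` contains an up-indecomposable
permutation of length `n - 1`; the same holds for down-indecomposable permutations. -/
theorem indec_contains_smaller_indec :
    (∀ π : PermSeq, UpIndec π → 1 < π.1 →
      ∃ σ : PermSeq, UpIndec σ ∧ σ.1 = π.1 - 1 ∧ PermLE σ π) ∧
    (∀ π : PermSeq, DownIndec π → 1 < π.1 →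
      ∃ σ : PermSeq, DownIndec σ ∧ σ.1 = π.1 - 1 ∧ PermLE σ π) := by
  constructor
  · exact IndecAux.up_case
  · intro π hdown hlen
    obtain ⟨σ', hup, hlen', hle⟩ :=
      IndecAux.up_case (IndecAux.cseq π) (IndecAux.upIndec_cseq hdown) hlen
    refine ⟨IndecAux.cseq σ', IndecAux.downIndec_of_up hup, hlen', ?_⟩
    have h1 := IndecAux.permLE_cseq hle
    rwa [IndecAux.cseq_cseq] at h1
end

section
/- If X is a closed permutation class such that for every k ≥ 1 there is an up-indecomposable permutation σ of length k with the k-fold direct sum σ ⊕ σ ⊕ ... ⊕ σ (k summands) belonging to X, then |X ∩ S_n| ≥ 2^{n-1} for every n ≥ 1. The analogous statement holds with down-indecomposable permutations and the skew sum ⊖. -/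
/-- The `k`-fold direct sum `σ ⊕ σ ⊕ ⋯ ⊕ σ` (`k` summands). -/
def nfoldOplus : ℕ → PermSeq → PermSeq
  | 0, _ => ⟨0, 1⟩
  | k + 1, σ => PermSeq.oplus (nfoldOplus k σ) σ

/-- The `k`-fold skew sum `σ ⊖ σ ⊖ ⋯ ⊖ σ` (`k` summands). -/
def nfoldOminus : ℕ → PermSeq → PermSeq
  | 0, _ => ⟨0, 1⟩
  | k + 1, σ => PermSeq.ominus (nfoldOminus k σ) σ

/-! ### Auxiliary lemmas -/

section Aux

open Equiv Fin

theorem permOplus_castAdd {m n : ℕ} (σ : Equiv.Perm (Fin m)) (τ : Equiv.Perm (Fin n)) (i : Fin m) :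
    permOplus σ τ (Fin.castAdd n i) = Fin.castAdd n (σ i) := by
  simp [permOplus]

theorem permOplus_natAdd {m n : ℕ} (σ : Equiv.Perm (Fin m)) (τ : Equiv.Perm (Fin n)) (i : Fin n) :
    permOplus σ τ (Fin.natAdd m i) = Fin.natAdd m (τ i) := by
  simp [permOplus]

theorem permOminus_castAdd {m n : ℕ} (σ : Equiv.Perm (Fin m)) (τ : Equiv.Perm (Fin n)) (i : Fin m) :
    (permOminus σ τ (Fin.castAdd n i)).val = n + (σ i).val := by
  simp [permOminus]; omega

theorem permOminus_natAdd {m n : ℕ} (σ : Equiv.Perm (Fin m)) (τ : Equiv.Perm (Fin n)) (i : Fin n) :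
    (permOminus σ τ (Fin.natAdd m i)).val = (τ i).val := by
  simp [permOminus]

theorem permOplus_val_lt {m n : ℕ} (σ : Equiv.Perm (Fin m)) (τ : Equiv.Perm (Fin n))
    (i : Fin (m + n)) (h : i.val < m) :
    (permOplus σ τ i).val = (σ ⟨i.val, h⟩).val := by
  have e : i = Fin.castAdd n ⟨i.val, h⟩ := by ext; rfl
  calc (permOplus σ τ i).val = (permOplus σ τ (Fin.castAdd n ⟨i.val, h⟩)).val := by rw [← e]
    _ = (σ ⟨i.val, h⟩).val := by rw [permOplus_castAdd]; rfl

theorem permOplus_val_ge {m n : ℕ} (σ : Equiv.Perm (Fin m)) (τ : Equiv.Perm (Fin n))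
    (i : Fin (m + n)) (h : m ≤ i.val) :
    (permOplus σ τ i).val = m + (τ ⟨i.val - m, by omega⟩).val := by
  have e : i = Fin.natAdd m ⟨i.val - m, by omega⟩ := by ext; simp; omega
  calc (permOplus σ τ i).val
      = (permOplus σ τ (Fin.natAdd m ⟨i.val - m, by omega⟩)).val := by rw [← e]
    _ = m + (τ ⟨i.val - m, by omega⟩).val := by rw [permOplus_natAdd]; rfl

end Aux

def RelCut {k : ℕ} (σ : Equiv.Perm (Fin k)) (c : ℕ) : Prop :=
  ∀ i j : Fin k, i.val < c → c ≤ j.val → σ i < σ j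

def NoCut {k : ℕ} (σ : Equiv.Perm (Fin k)) : Prop :=
  ∀ c : ℕ, 0 < c → c < k → ¬ RelCut σ c

theorem card_filter_lt (k c : ℕ) (hck : c ≤ k) :
    (Finset.univ.filter (fun j : Fin k => j.val < c)).card = c := by
  have : Finset.univ.filter (fun j : Fin k => j.val < c)
      = Finset.image (Fin.castLE hck) Finset.univ := by
    ext j
    simp only [Finset.mem_filter, Finset.mem_univ, true_and, Finset.mem_image]
    constructor
    · intro h; exact ⟨⟨j.val, h⟩, by ext; rfl⟩
    · rintro ⟨i, rfl⟩; exact i.isLt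
  rw [this, Finset.card_image_of_injective _ (Fin.castLE_injective hck)]
  simp

theorem card_filter_ge (k c : ℕ) (hck : c ≤ k) :
    (Finset.univ.filter (fun j : Fin k => c ≤ j.val)).card = k - c := by
  have h2 := Finset.card_filter_add_card_filter_not (s := (Finset.univ : Finset (Fin k)))
    (p := fun j : Fin k => j.val < c)
  have h1 := card_filter_lt k c hck
  simp only [not_lt] at h2
  simp only [Finset.card_univ, Fintype.card_fin] at h2
  omega

theorem relcut_val {k : ℕ} (σ : Equiv.Perm (Fin k)) (c : ℕ) (hck : c ≤ k)
    (h : RelCut σ c) : ∀ i : Fin k, ((σ i).val < c ↔ i.val < c) := by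
  intro i
  constructor
  · -- σ i < c → i < c  (contrapositive)
    intro hσ
    by_contra hi
    push_neg at hi
    -- image of {j | j < c} under σ is inside {v | v < σ i}
    have hsub : Finset.image σ (Finset.univ.filter (fun j : Fin k => j.val < c))
        ⊆ Finset.univ.filter (fun v : Fin k => v.val < (σ i).val) := by
      intro v hv
      simp only [Finset.mem_image, Finset.mem_filter, Finset.mem_univ, true_and] at hv ⊢
      obtain ⟨j, hj, rfl⟩ := hv
      exact h j i hj hi
    have hc1 := Finset.card_le_card hsub
    rw [Finset.card_image_of_injective _ σ.injective, card_filter_lt k c hck,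
      card_filter_lt k (σ i).val (le_of_lt (σ i).isLt)] at hc1
    omega
  · intro hi
    rcases Nat.lt_or_ge c k with hk | hk
    · -- image of {j | c ≤ j} under σ is inside {v | σ i < v}
      have hsub : Finset.image σ (Finset.univ.filter (fun j : Fin k => c ≤ j.val))
          ⊆ Finset.univ.filter (fun v : Fin k => (σ i).val < v.val) := by
        intro v hv
        simp only [Finset.mem_image, Finset.mem_filter, Finset.mem_univ, true_and] at hv ⊢
        obtain ⟨j, hj, rfl⟩ := hv
        exact h i j hi hj
      have hc1 := Finset.card_le_card hsub
      rw [Finset.card_image_of_injective _ σ.injective, card_filter_ge k c hck] at hc1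
      have : (Finset.univ.filter (fun v : Fin k => (σ i).val < v.val)).card
          = k - ((σ i).val + 1) := by
        have := card_filter_ge k ((σ i).val + 1) (σ i).isLt
        have he : (Finset.univ.filter (fun v : Fin k => (σ i).val + 1 ≤ v.val))
            = (Finset.univ.filter (fun v : Fin k => (σ i).val < v.val)) := by
          apply Finset.filter_congr; intro x _; exact Nat.lt_iff_add_one_le.symm
        rwa [he] at this
      rw [this] at hc1
      have := (σ i).isLt
      omega
    · have := (σ i).isLt; omega

theorem exists_decomp {k : ℕ} (σ : Equiv.Perm (Fin k)) (c : ℕ) (h0 : 0 < c) (hk : c < k)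
    (h : RelCut σ c) :
    ∃ a b : PermSeq, a.1 = c ∧ b.1 = k - c ∧ (⟨k, σ⟩ : PermSeq) = PermSeq.oplus a b := by
  have vc := relcut_val σ c (le_of_lt hk) h
  obtain ⟨d, rfl⟩ : ∃ d, k = c + d := ⟨k - c, by omega⟩
  have hlow : ∀ i : Fin c, (σ (Fin.castAdd d i)).val < c := by
    intro i
    have hval : (Fin.castAdd d i).val = i.val := rfl
    exact (vc (Fin.castAdd d i)).2 (by rw [hval]; exact i.isLt)
  have hhigh : ∀ i : Fin d, c ≤ (σ (Fin.natAdd c i)).val ∧ (σ (Fin.natAdd c i)).val < c + d := by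
    intro i
    have hval : (Fin.natAdd c i).val = c + i.val := rfl
    refine ⟨?_, (σ (Fin.natAdd c i)).isLt⟩
    by_contra hcon
    have := (vc (Fin.natAdd c i)).1 (by omega)
    omega
  let f1 : Fin c → Fin c := fun i => ⟨(σ (Fin.castAdd d i)).val, hlow i⟩
  let f2 : Fin d → Fin d := fun i => ⟨(σ (Fin.natAdd c i)).val - c, by have := hhigh i; omega⟩
  have f1inj : Function.Injective f1 := by
    intro i j hij
    have h1 : (f1 i).val = (f1 j).val := congrArg Fin.val hij
    have h2 := σ.injective (Fin.ext
      (show (σ (Fin.castAdd d i)).val = (σ (Fin.castAdd d j)).val from h1))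
    have h3 : (Fin.castAdd d i).val = (Fin.castAdd d j).val := congrArg Fin.val h2
    exact Fin.ext h3
  have f2inj : Function.Injective f2 := by
    intro i j hij
    have h1 : (f2 i).val = (f2 j).val := congrArg Fin.val hij
    have h1 : (σ (Fin.natAdd c i)).val - c = (σ (Fin.natAdd c j)).val - c := h1
    have hi := hhigh i
    have hj := hhigh j
    have h2 := σ.injective (Fin.ext (show (σ (Fin.natAdd c i)).val = (σ (Fin.natAdd c j)).val
      by omega))
    have h3 : (Fin.natAdd c i).val = (Fin.natAdd c j).val := congrArg Fin.val h2
    have hval1 : (Fin.natAdd c i).val = c + i.val := rfl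
    have hval2 : (Fin.natAdd c j).val = c + j.val := rfl
    exact Fin.ext (by omega)
  let e1 : Equiv.Perm (Fin c) := Equiv.ofBijective f1 (Finite.injective_iff_bijective.mp f1inj)
  let e2 : Equiv.Perm (Fin d) := Equiv.ofBijective f2 (Finite.injective_iff_bijective.mp f2inj)
  refine ⟨⟨c, e1⟩, ⟨d, e2⟩, rfl, by simp, ?_⟩
  have hperm : σ = permOplus e1 e2 := by
    apply Equiv.ext
    intro i
    rcases Nat.lt_or_ge i.val c with hic | hic
    · apply Fin.ext
      rw [permOplus_val_lt e1 e2 i hic]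
      have he : Fin.castAdd d ⟨i.val, hic⟩ = i := Fin.ext rfl
      have h1 : (e1 ⟨i.val, hic⟩).val = (σ (Fin.castAdd d ⟨i.val, hic⟩)).val := rfl
      rw [h1]
      exact (congrArg (fun x => (σ x).val) he).symm
    · apply Fin.ext
      rw [permOplus_val_ge e1 e2 i hic]
      have he : Fin.natAdd c (⟨i.val - c, by omega⟩ : Fin d) = i := Fin.ext (by
        show c + (i.val - c) = i.val; omega)
      have h1 : (e2 (⟨i.val - c, by omega⟩ : Fin d)).val
          = (σ (Fin.natAdd c (⟨i.val - c, by omega⟩ : Fin d))).val - c := rfl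
      rw [h1]
      have h2 : (σ (Fin.natAdd c (⟨i.val - c, by omega⟩ : Fin d))).val = (σ i).val :=
        congrArg (fun x => (σ x).val) he
      have h3 := (hhigh (⟨i.val - c, by omega⟩ : Fin d)).1
      omega
  show (⟨c + d, σ⟩ : PermSeq) = ⟨c + d, permOplus e1 e2⟩
  rw [hperm]

theorem noCut_of_upIndec {k : ℕ} (σ : Equiv.Perm (Fin k)) (h : UpIndec ⟨k, σ⟩) : NoCut σ := by
  intro c h0 hk hcut
  obtain ⟨a, b, ha, hb, heq⟩ := exists_decomp σ c h0 hk hcut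
  exact h ⟨a, b, by omega, by omega, heq⟩

theorem permContains_refl {k : ℕ} (σ : Equiv.Perm (Fin k)) : PermContains σ σ :=
  ⟨id, strictMono_id, fun _ _ => Iff.rfl⟩

theorem permContains_trans {a b c : ℕ} {σ : Equiv.Perm (Fin a)} {τ : Equiv.Perm (Fin b)}
    {ρ : Equiv.Perm (Fin c)} (h1 : PermContains σ τ) (h2 : PermContains τ ρ) :
    PermContains σ ρ := by
  obtain ⟨f, hf, hpf⟩ := h1
  obtain ⟨g, hg, hpg⟩ := h2
  exact ⟨g ∘ f, hg.comp hf, fun i j => (hpf i j).trans (hpg (f i) (f j))⟩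

theorem permLE_trans {a b c : PermSeq} (h1 : PermLE a b) (h2 : PermLE b c) : PermLE a c :=
  permContains_trans h1 h2

/-- Existence of the pattern of `σ` at an increasing set of positions. -/
theorem exists_pattern {k m : ℕ} (σ : Equiv.Perm (Fin k)) (f : Fin m → Fin k)
    (hf : StrictMono f) :
    ∃ τ : Equiv.Perm (Fin m), (∀ i j : Fin m, τ i < τ j ↔ σ (f i) < σ (f j)) := by
  classical
  have ginj : Function.Injective (fun i : Fin m => σ (f i)) :=
    fun i j hij => hf.injective (σ.injective hij)
  set s : Finset (Fin k) := Finset.image (fun i : Fin m => σ (f i)) Finset.univ with hs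
  have hcard : s.card = m := by
    rw [hs, Finset.card_image_of_injective _ ginj, Finset.card_univ, Fintype.card_fin]
  let e := s.orderIsoOfFin hcard
  have hmem : ∀ i : Fin m, σ (f i) ∈ s := fun i => Finset.mem_image_of_mem _ (Finset.mem_univ i)
  let t : Fin m → Fin m := fun i => e.symm ⟨σ (f i), hmem i⟩
  have tinj : Function.Injective t := by
    intro i j hij
    have := e.symm.injective hij
    exact ginj (congrArg Subtype.val this)
  have tb := Finite.injective_iff_bijective.mp tinj
  refine ⟨Equiv.ofBijective t tb, fun i j => ?_⟩
  have h1 : Equiv.ofBijective t tb i = t i := rfl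
  have h2 : Equiv.ofBijective t tb j = t j := rfl
  rw [h1, h2]
  show e.symm _ < e.symm _ ↔ _
  rw [← e.lt_iff_lt, e.apply_symm_apply, e.apply_symm_apply, Subtype.mk_lt_mk]

theorem permLE_oplus_left (a b : PermSeq) : PermLE a (a.oplus b) := by
  refine ⟨fun i => Fin.castAdd b.1 i, fun i j hij => hij, fun i j => ?_⟩
  show _ ↔ permOplus a.2 b.2 _ < permOplus a.2 b.2 _
  rw [permOplus_castAdd, permOplus_castAdd]
  constructor
  · intro h; exact h
  · intro h; exact h

def subIdx {m n : ℕ} (i : Fin (m + n)) (h : m ≤ i.val) : Fin n :=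
  ⟨i.val - m, by omega⟩

def sumEmb {m n m' n' : ℕ} (f : Fin m → Fin m') (g : Fin n → Fin n') (i : Fin (m + n)) :
    Fin (m' + n') :=
  if h : i.val < m then Fin.castAdd n' (f ⟨i.val, h⟩)
  else Fin.natAdd m' (g (subIdx i (not_lt.mp h)))

theorem sumEmb_val_lt {m n m' n' : ℕ} (f : Fin m → Fin m') (g : Fin n → Fin n')
    (i : Fin (m + n)) (h : i.val < m) : (sumEmb f g i).val = (f ⟨i.val, h⟩).val := by
  simp only [sumEmb, dif_pos h]; rfl

theorem sumEmb_val_ge {m n m' n' : ℕ} (f : Fin m → Fin m') (g : Fin n → Fin n')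
    (i : Fin (m + n)) (h : m ≤ i.val) :
    (sumEmb f g i).val = m' + (g ⟨i.val - m, by omega⟩).val := by
  have hh : ¬ i.val < m := by omega
  simp only [sumEmb, dif_neg hh]
  rfl

set_option maxHeartbeats 1000000 in
theorem permOplus_mono {m m' n n' : ℕ} {σ : Equiv.Perm (Fin m)} {σ' : Equiv.Perm (Fin m')}
    {τ : Equiv.Perm (Fin n)} {τ' : Equiv.Perm (Fin n')}
    (h1 : PermContains σ σ') (h2 : PermContains τ τ') :
    PermContains (permOplus σ τ) (permOplus σ' τ') := by
  obtain ⟨f, hf, hpf⟩ := h1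
  obtain ⟨g, hg, hpg⟩ := h2
  have Fval_lt := sumEmb_val_lt f g
  have Fval_ge := sumEmb_val_ge f g
  set F := sumEmb f g with hF_def
  have hF : StrictMono F := by
    intro i j hij
    have hij' : i.val < j.val := hij
    rw [Fin.lt_def]
    rcases Nat.lt_or_ge i.val m with hi | hi
    · rcases Nat.lt_or_ge j.val m with hj | hj
      · rw [Fval_lt i hi, Fval_lt j hj]
        exact hf (show (⟨i.val, hi⟩ : Fin m) < ⟨j.val, hj⟩ from hij')
      · rw [Fval_lt i hi, Fval_ge j hj]
        have := (f ⟨i.val, hi⟩).isLt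
        omega
    · have hj : m ≤ j.val := by omega
      rw [Fval_ge i hi, Fval_ge j hj]
      have hlt := hg (show (⟨i.val - m, by omega⟩ : Fin n) < ⟨j.val - m, by omega⟩ from by
        show i.val - m < j.val - m; omega)
      have hlt' : (g ⟨i.val - m, by omega⟩).val < (g ⟨j.val - m, by omega⟩).val := hlt
      omega
  refine ⟨F, hF, fun i j => ?_⟩
  have hFc : ∀ i0 : Fin m, F (Fin.castAdd n i0) = Fin.castAdd n' (f i0) := by
    intro i0
    have h : (Fin.castAdd n i0).val < m := i0.isLt
    apply Fin.ext
    rw [Fval_lt _ h]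
    have : (⟨(Fin.castAdd n i0).val, h⟩ : Fin m) = i0 := Fin.ext rfl
    rw [this]
    rfl
  have hFn : ∀ i0 : Fin n, F (Fin.natAdd m i0) = Fin.natAdd m' (g i0) := by
    intro i0
    have h : m ≤ (Fin.natAdd m i0).val := Nat.le_add_right _ _
    apply Fin.ext
    rw [Fval_ge _ h]
    have : (⟨(Fin.natAdd m i0).val - m, by omega⟩ : Fin n) = i0 := Fin.ext (by
      show m + i0.val - m = i0.val; omega)
    rw [this]
    rfl
  induction i using Fin.addCases with
  | left i0 =>
    induction j using Fin.addCases with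
    | left j0 =>
      rw [permOplus_castAdd, permOplus_castAdd, hFc, hFc, permOplus_castAdd, permOplus_castAdd]
      have hp := hpf i0 j0
      rw [Fin.lt_def, Fin.lt_def] at hp ⊢
      simp only [Fin.coe_castAdd]
      exact hp
    | right j0 =>
      rw [permOplus_castAdd, permOplus_natAdd, hFc, hFn, permOplus_castAdd, permOplus_natAdd]
      rw [Fin.lt_def, Fin.lt_def]
      have b1 := (σ i0).isLt
      have b2 := (σ' (f i0)).isLt
      simp only [Fin.coe_castAdd, Fin.coe_natAdd]
      constructor <;> intro <;> omega
  | right i0 =>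
    induction j using Fin.addCases with
    | left j0 =>
      rw [permOplus_natAdd, permOplus_castAdd, hFn, hFc, permOplus_natAdd, permOplus_castAdd]
      rw [Fin.lt_def, Fin.lt_def]
      have b1 := (σ j0).isLt
      have b2 := (σ' (f j0)).isLt
      simp only [Fin.coe_castAdd, Fin.coe_natAdd]
      constructor <;> intro <;> omega
    | right j0 =>
      rw [permOplus_natAdd, permOplus_natAdd, hFn, hFn, permOplus_natAdd, permOplus_natAdd]
      have hp := hpg i0 j0
      rw [Fin.lt_def, Fin.lt_def] at hp ⊢
      simp only [Fin.coe_natAdd]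
      omega

theorem permLE_oplus_mono {a b c d : PermSeq} (h1 : PermLE a b) (h2 : PermLE c d) :
    PermLE (a.oplus c) (b.oplus d) :=
  permOplus_mono h1 h2

theorem succAbove_val {K : ℕ} (p : Fin (K + 1)) (i : Fin K) :
    ((p.succAbove i).val = i.val ∧ i.val < p.val) ∨
      ((p.succAbove i).val = i.val + 1 ∧ p.val ≤ i.val) := by
  unfold Fin.succAbove
  split
  · rename_i h
    exact Or.inl ⟨rfl, h⟩
  · rename_i h
    rw [Fin.not_lt] at h
    exact Or.inr ⟨rfl, h⟩

theorem castLE_strictMono {m k : ℕ} (h : m ≤ k) : StrictMono (Fin.castLE h) :=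
  fun _ _ hij => hij

/-- Key structural lemma: every permutation with no cut contains, for each smaller length,
a permutation with no cut. -/
theorem main1 : ∀ k : ℕ, ∀ σ : Equiv.Perm (Fin k), NoCut σ → ∀ m : ℕ, 0 < m → m ≤ k →
    ∃ τ : Equiv.Perm (Fin m), NoCut τ ∧ PermContains τ σ := by
  intro k
  induction k using Nat.strong_induction_on with
  | _ k IH =>
  intro σ hσ m hm0 hmk
  rcases eq_or_lt_of_le hmk with heq | hlt
  · subst heq
    exact ⟨σ, hσ, permContains_refl σ⟩
  obtain ⟨K, rfl⟩ : ∃ K, k = K + 1 := ⟨k - 1, by omega⟩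
  set top : Fin (K + 1) := ⟨K, by omega⟩ with htop
  set p : Fin (K + 1) := σ.symm top with hp
  have hσp : σ p = top := σ.apply_symm_apply top
  by_cases hA : ∃ c : ℕ, p.val < c ∧ c + 2 ≤ K + 1 ∧
      (∀ i j : Fin (K + 1), i.val ≤ c → i ≠ p → c < j.val → σ i < σ j)
  · -- Case A
    obtain ⟨c, hpc, hcK, hcond⟩ := hA
    have key : ∀ m' : ℕ, c + 1 ≤ m' → ∀ hm'k : m' ≤ K + 1,
        ∃ τ : Equiv.Perm (Fin m'), NoCut τ ∧ PermContains τ σ := by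
      intro m' hcm' hm'k
      obtain ⟨τ, hτ⟩ := exists_pattern σ (Fin.castLE hm'k) (castLE_strictMono hm'k)
      refine ⟨τ, ?_, ⟨Fin.castLE hm'k, castLE_strictMono hm'k, hτ⟩⟩
      intro c' h0' hc' hcut
      have hcut' : ∀ i j : Fin m', i.val < c' → c' ≤ j.val →
          σ (Fin.castLE hm'k i) < σ (Fin.castLE hm'k j) :=
        fun i j hi hj => (hτ i j).mp (hcut i j hi hj)
      rcases le_or_gt c' p.val with hle | hgt
      · refine hσ c' h0' (by omega) ?_
        intro i j hi hj
        rcases Nat.lt_or_ge j.val m' with hjm | hjm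
        · have hi' : i.val < m' := by omega
          have e1 : Fin.castLE hm'k ⟨i.val, hi'⟩ = i := Fin.ext rfl
          have e2 : Fin.castLE hm'k ⟨j.val, hjm⟩ = j := Fin.ext rfl
          have := hcut' ⟨i.val, hi'⟩ ⟨j.val, hjm⟩ hi hj
          rwa [e1, e2] at this
        · refine hcond i j (by omega) ?_ (by omega)
          intro hip
          rw [hip] at hi
          omega
      · -- p sits inside the prefix: contradiction with max value
        have hpm : p.val < m' := by omega
        have hc'm : c' < m' := hc'
        have h1 := hcut' ⟨p.val, hpm⟩ ⟨c', hc'm⟩ (by simpa using hgt) (by simp)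
        have e1 : Fin.castLE hm'k ⟨p.val, hpm⟩ = p := Fin.ext rfl
        rw [e1, hσp] at h1
        have h2 : (σ (Fin.castLE hm'k ⟨c', hc'm⟩)).val < K + 1 := (σ _).isLt
        have h3 : (top : Fin (K + 1)).val = K := rfl
        rw [Fin.lt_def, h3] at h1
        omega
    rcases le_or_gt (c + 1) m with hcm | hcm
    · exact key m hcm (by omega)
    · obtain ⟨τ1, hτ1nc, hτ1le⟩ := key (c + 1) le_rfl (by omega)
      obtain ⟨τ, hτnc, hτle⟩ := IH (c + 1) (by omega) τ1 hτ1nc m hm0 (by omega)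
      exact ⟨τ, hτnc, permContains_trans hτle hτ1le⟩
  · -- Case B : deleting the maximum keeps it cut-free
    push_neg at hA
    set f : Fin K → Fin (K + 1) := p.succAbove with hf
    have hfmono : StrictMono f := Fin.strictMono_succAbove p
    obtain ⟨τ, hτ⟩ := exists_pattern σ f hfmono
    have hτnc : NoCut τ := by
      intro c h0 hcK hcut
      have hcut' : ∀ i j : Fin K, i.val < c → c ≤ j.val → σ (f i) < σ (f j) :=
        fun i j hi hj => (hτ i j).mp (hcut i j hi hj)
      rcases le_or_gt c p.val with hle | hgt
      · refine hσ c h0 (by omega) ?_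
        intro i j hi hj
        have hip : i ≠ p := by
          intro h; rw [h] at hi; omega
        obtain ⟨i0, hi0⟩ := Fin.exists_succAbove_eq hip
        have hi0' : f i0 = i := hi0
        have hvi := succAbove_val p i0
        rw [hi0] at hvi
        by_cases hjp : j = p
        · rw [hjp, hσp]
          have : σ i ≠ top := by
            intro h
            exact hip (by rw [hp, ← h, Equiv.symm_apply_apply])
          have h4 : (σ i).val ≠ K := fun h => this (Fin.ext h)
          have h5 := (σ i).isLt
          rw [Fin.lt_def]
          show (σ i).val < K
          omega
        · obtain ⟨j0, hj0⟩ := Fin.exists_succAbove_eq hjp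
          have hj0' : f j0 = j := hj0
          have hvj := succAbove_val p j0
          rw [hj0] at hvj
          have := hcut' i0 j0 (by omega) (by omega)
          rwa [hi0', hj0'] at this
      · -- would give a configuration of type A
        obtain ⟨i, j, hiv, hip, hj, hji⟩ := hA c hgt (by omega)
        obtain ⟨i0, hi0⟩ := Fin.exists_succAbove_eq hip
        have hi0' : f i0 = i := hi0
        have hvi := succAbove_val p i0
        rw [hi0] at hvi
        have hjp : j ≠ p := by
          intro h; rw [h] at hj; omega
        obtain ⟨j0, hj0⟩ := Fin.exists_succAbove_eq hjp
        have hj0' : f j0 = j := hj0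
        have hvj := succAbove_val p j0
        rw [hj0] at hvj
        have := hcut' i0 j0 (by omega) (by omega)
        rw [hi0', hj0'] at this
        exact absurd hji (not_le.mpr this)
    obtain ⟨τ', hτ'nc, hτ'le⟩ := IH K (by omega) τ hτnc m hm0 (by omega)
    exact ⟨τ', hτ'nc, permContains_trans hτ'le ⟨f, hfmono, hτ⟩⟩

def RelCutS (π : PermSeq) (c : ℕ) : Prop :=
  ∀ i j : Fin π.1, i.val < c → c ≤ j.val → (π.2 i).val < (π.2 j).val

theorem relcut_permOplus {m n : ℕ} (σ : Equiv.Perm (Fin m)) (τ : Equiv.Perm (Fin n)) :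
    ∀ i j : Fin (m + n), i.val < m → m ≤ j.val →
      (permOplus σ τ i).val < (permOplus σ τ j).val := by
  intro i j hi hj
  rw [permOplus_val_lt σ τ i hi, permOplus_val_ge σ τ j hj]
  have := (σ ⟨i.val, hi⟩).isLt
  omega

theorem relCutS_oplus (a b : PermSeq) : RelCutS (a.oplus b) a.1 :=
  relcut_permOplus a.2 b.2

theorem relcut_permOplus_tail {m n : ℕ} (σ : Equiv.Perm (Fin m)) (τ : Equiv.Perm (Fin n))
    (c : ℕ) (hc : c ≤ n)
    (h : ∀ i j : Fin (m + n), i.val < m + c → m + c ≤ j.val →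
      (permOplus σ τ i).val < (permOplus σ τ j).val) : RelCut τ c := by
  intro i j hi hj
  have hij := h (Fin.natAdd m i) (Fin.natAdd m j)
    (show m + i.val < m + c by omega) (show m + c ≤ m + j.val by omega)
  have e1 : (permOplus σ τ (Fin.natAdd m i)).val = m + (τ i).val := by
    rw [permOplus_natAdd]; rfl
  have e2 : (permOplus σ τ (Fin.natAdd m j)).val = m + (τ j).val := by
    rw [permOplus_natAdd]; rfl
  rw [Fin.lt_def]
  omega

theorem relCutS_oplus_tail (a b : PermSeq) (c : ℕ) (hc : c ≤ b.1)
    (h : RelCutS (a.oplus b) (a.1 + c)) : RelCut b.2 c :=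
  relcut_permOplus_tail a.2 b.2 c hc h

theorem oplus_perm_cancel {m n : ℕ} (σ σ' : Equiv.Perm (Fin m)) (τ τ' : Equiv.Perm (Fin n))
    (h : permOplus σ τ = permOplus σ' τ') : σ = σ' ∧ τ = τ' := by
  constructor
  · apply Equiv.ext; intro i
    have h1 := congrArg (fun e : Equiv.Perm (Fin (m + n)) => e (Fin.castAdd n i)) h
    simp only [permOplus_castAdd] at h1
    have h2 : (Fin.castAdd n (σ i)).val = (Fin.castAdd n (σ' i)).val := congrArg Fin.val h1
    exact Fin.ext (show (σ i).val = (σ' i).val from h2)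
  · apply Equiv.ext; intro i
    have h1 := congrArg (fun e : Equiv.Perm (Fin (m + n)) => e (Fin.natAdd m i)) h
    simp only [permOplus_natAdd] at h1
    have h2 : (Fin.natAdd m (τ i)).val = (Fin.natAdd m (τ' i)).val := congrArg Fin.val h1
    have h3 : m + (τ i).val = m + (τ' i).val := h2
    exact Fin.ext (by omega)

theorem oplus_cancel_seq {a a' b b' : PermSeq} (ha : a.1 = a'.1) (hb : b.1 = b'.1)
    (h : a.oplus b = a'.oplus b') : a = a' ∧ b = b' := by
  obtain ⟨m, σ⟩ := a; obtain ⟨m', σ'⟩ := a'; obtain ⟨n, τ⟩ := b; obtain ⟨n', τ'⟩ := b'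
  simp only at ha hb
  subst ha; subst hb
  have h2 : permOplus σ τ = permOplus σ' τ' := by
    have h' : (⟨m + n, permOplus σ τ⟩ : PermSeq) = ⟨m + n, permOplus σ' τ'⟩ := h
    injection h' with h1
  obtain ⟨e1, e2⟩ := oplus_perm_cancel σ σ' τ τ' h2
  subst e1; subst e2
  exact ⟨rfl, rfl⟩

def Fsum (T : ℕ → PermSeq) : List ℕ → PermSeq
  | [] => ⟨0, 1⟩
  | a :: L => (Fsum T L).oplus (T a)

theorem Fsum_fst (T : ℕ → PermSeq) (hT : ∀ a, (T a).1 = a) :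
    ∀ L : List ℕ, (Fsum T L).1 = L.sum := by
  intro L
  induction L with
  | nil => rfl
  | cons a L ih =>
    show (Fsum T L).1 + (T a).1 = (a :: L).sum
    rw [ih, hT, List.sum_cons]
    omega

theorem permLE_empty (S : PermSeq) : PermLE ⟨0, 1⟩ S :=
  ⟨Fin.elim0, fun i => i.elim0, fun i => i.elim0⟩

theorem Fsum_le (T : ℕ → PermSeq) (S : PermSeq) :
    ∀ (r : ℕ) (L : List ℕ), (∀ a ∈ L, PermLE (T a) S) → L.length ≤ r →
      PermLE (Fsum T L) (nfoldOplus r S) := by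
  intro r
  induction r with
  | zero =>
    intro L hL hlen
    have : L = [] := List.eq_nil_of_length_eq_zero (by omega)
    subst this
    exact permLE_empty _
  | succ r ih =>
    intro L hL hlen
    cases L with
    | nil => exact permLE_empty _
    | cons a L =>
      show PermLE ((Fsum T L).oplus (T a)) ((nfoldOplus r S).oplus S)
      exact permLE_oplus_mono (ih L (fun x hx => hL x (List.mem_cons_of_mem _ hx))
        (by simp [List.length_cons] at hlen; omega)) (hL a (List.mem_cons_self))

theorem oplus_eq_no_shift {u v A B : PermSeq} (h : u.oplus A = v.oplus B)
    (hv : v.1 < u.1) (hu : u.1 < v.1 + B.1) (hnc : NoCut B.2) : False := by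
  have h1 := relCutS_oplus u A
  rw [h] at h1
  have h1' : RelCutS (v.oplus B) (v.1 + (u.1 - v.1)) := by
    rwa [show v.1 + (u.1 - v.1) = u.1 from by omega]
  have h2 := relCutS_oplus_tail v B (u.1 - v.1) (by omega) h1'
  exact hnc (u.1 - v.1) (by omega) (by omega) h2

theorem Fsum_inj (T : ℕ → PermSeq) (hTfst : ∀ a, (T a).1 = a) :
    ∀ L L' : List ℕ, (∀ a ∈ L, 0 < a ∧ NoCut (T a).2) → (∀ a ∈ L', 0 < a ∧ NoCut (T a).2) →
      Fsum T L = Fsum T L' → L = L' := by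
  intro L
  induction L with
  | nil =>
    intro L' _ hL' h
    cases L' with
    | nil => rfl
    | cons b M' =>
      exfalso
      have hsz := congrArg Sigma.fst h
      have : (0 : ℕ) = (Fsum T M').1 + (T b).1 := hsz
      have hb := (hL' b (List.mem_cons_self)).1
      rw [hTfst] at this
      omega
  | cons a M ih =>
    intro L' hL hL' h
    cases L' with
    | nil =>
      exfalso
      have hsz := congrArg Sigma.fst h
      have : (Fsum T M).1 + (T a).1 = (0 : ℕ) := hsz
      have ha := (hL a (List.mem_cons_self)).1
      rw [hTfst] at this
      omega
    | cons b M' =>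
      have hsz : (Fsum T M).1 + (T a).1 = (Fsum T M').1 + (T b).1 := congrArg Sigma.fst h
      rw [hTfst, hTfst] at hsz
      have ha := (hL a (List.mem_cons_self)).1
      have hb := (hL' b (List.mem_cons_self)).1
      have hab : a = b := by
        by_contra hne
        rcases Nat.lt_or_ge a b with hlt | hge
        · exact oplus_eq_no_shift h (by omega) (by rw [hTfst]; omega)
            (hL' b (List.mem_cons_self)).2
        · have hlt : b < a := by omega
          exact oplus_eq_no_shift h.symm (by omega) (by rw [hTfst]; omega)
            (hL a (List.mem_cons_self)).2
      subst hab
      obtain ⟨e1, _⟩ := oplus_cancel_seq (by omega) rfl h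
      rw [ih M' (fun x hx => hL x (List.mem_cons_of_mem _ hx))
        (fun x hx => hL' x (List.mem_cons_of_mem _ hx)) e1]

def crev (π : PermSeq) : PermSeq := ⟨π.1, π.2.trans Fin.revPerm⟩

theorem crev_fst (π : PermSeq) : (crev π).1 = π.1 := rfl

theorem crev_apply (π : PermSeq) (i : Fin π.1) : ((crev π).2 i) = (π.2 i).rev := rfl

theorem crev_crev (π : PermSeq) : crev (crev π) = π := by
  obtain ⟨n, σ⟩ := π
  show (⟨n, (σ.trans Fin.revPerm).trans Fin.revPerm⟩ : PermSeq) = ⟨n, σ⟩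
  congr 1
  apply Equiv.ext
  intro i
  show ((σ i).rev).rev = σ i
  exact Fin.rev_rev _

theorem crev_injective : Function.Injective crev :=
  Function.LeftInverse.injective crev_crev

theorem permLE_crev {a b : PermSeq} (h : PermLE a b) : PermLE (crev a) (crev b) := by
  obtain ⟨f, hf, hp⟩ := h
  refine ⟨f, hf, fun i j => ?_⟩
  show (a.2 i).rev < (a.2 j).rev ↔ (b.2 (f i)).rev < (b.2 (f j)).rev
  rw [Fin.rev_lt_rev, Fin.rev_lt_rev]
  exact hp j i

theorem crev_oplus (a b : PermSeq) : crev (a.oplus b) = (crev a).ominus (crev b) := by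
  show (⟨a.1 + b.1, (permOplus a.2 b.2).trans Fin.revPerm⟩ : PermSeq)
    = ⟨a.1 + b.1, permOminus (a.2.trans Fin.revPerm) (b.2.trans Fin.revPerm)⟩
  congr 1
  apply Equiv.ext
  intro i
  apply Fin.ext
  induction i using Fin.addCases with
  | left i0 =>
    have h1 : ((permOplus a.2 b.2).trans Fin.revPerm (Fin.castAdd b.1 i0)).val
        = (Fin.castAdd b.1 (a.2 i0)).rev.val := by
      show ((permOplus a.2 b.2 (Fin.castAdd b.1 i0)).rev).val = _
      rw [permOplus_castAdd]
    have h2 := permOminus_castAdd (a.2.trans Fin.revPerm) (b.2.trans Fin.revPerm) i0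
    rw [h1, Fin.val_rev, h2]
    have h3 : ((a.2.trans Fin.revPerm) i0).val = (a.2 i0).rev.val := rfl
    rw [h3, Fin.val_rev]
    have b1 := (a.2 i0).isLt
    show a.1 + b.1 - ((a.2 i0).val + 1) = b.1 + (a.1 - ((a.2 i0).val + 1))
    omega
  | right i0 =>
    have h1 : ((permOplus a.2 b.2).trans Fin.revPerm (Fin.natAdd a.1 i0)).val
        = (Fin.natAdd a.1 (b.2 i0)).rev.val := by
      show ((permOplus a.2 b.2 (Fin.natAdd a.1 i0)).rev).val = _
      rw [permOplus_natAdd]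
    have h2 := permOminus_natAdd (a.2.trans Fin.revPerm) (b.2.trans Fin.revPerm) i0
    rw [h1, Fin.val_rev, h2]
    have h3 : ((b.2.trans Fin.revPerm) i0).val = (b.2 i0).rev.val := rfl
    rw [h3, Fin.val_rev]
    have b1 := (b.2 i0).isLt
    show a.1 + b.1 - ((a.1 + (b.2 i0).val) + 1) = b.1 - ((b.2 i0).val + 1)
    omega

theorem crev_ominus (a b : PermSeq) : crev (a.ominus b) = (crev a).oplus (crev b) := by
  have := crev_oplus (crev a) (crev b)
  rw [crev_crev, crev_crev] at this
  rw [← this, crev_crev]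

theorem crev_nfold (k : ℕ) (a : PermSeq) : crev (nfoldOplus k a) = nfoldOminus k (crev a) := by
  induction k with
  | zero =>
    show (⟨0, (1 : Equiv.Perm (Fin 0)).trans Fin.revPerm⟩ : PermSeq) = ⟨0, 1⟩
    congr 1
    apply Equiv.ext
    intro i
    exact i.elim0
  | succ k ih =>
    show crev ((nfoldOplus k a).oplus a) = (nfoldOminus k (crev a)).ominus (crev a)
    rw [crev_oplus, ih]

theorem upIndec_crev {π : PermSeq} (h : DownIndec π) : UpIndec (crev π) := by
  rintro ⟨a, b, ha, hb, heq⟩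
  refine h ⟨crev a, crev b, ha, hb, ?_⟩
  have := congrArg crev heq
  rwa [crev_crev, crev_oplus] at this

theorem finite_length_set (n : ℕ) : {π : PermSeq | π.1 = n}.Finite := by
  have hsub : {π : PermSeq | π.1 = n}
      ⊆ (fun e : Equiv.Perm (Fin n) => (⟨n, e⟩ : PermSeq)) '' Set.univ := by
    rintro ⟨m, σ⟩ hm
    have hm' : m = n := hm
    subst hm'
    exact ⟨σ, trivial, rfl⟩
  exact Set.Finite.subset (Set.Finite.image _ Set.finite_univ) hsub

theorem part1 (X : Set PermSeq) (hX : IsCPC X)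
    (hyp : ∀ k : ℕ, 1 ≤ k → ∃ σ : PermSeq, σ.1 = k ∧ UpIndec σ ∧ nfoldOplus k σ ∈ X)
    (n : ℕ) (hn : 1 ≤ n) : 2 ^ (n - 1) ≤ countIn X n := by
  classical
  obtain ⟨S, hS1, hS2, hS3⟩ := hyp n hn
  obtain ⟨k, s⟩ := S
  have hkn : k = n := hS1
  subst hkn
  have hnc : NoCut s := noCut_of_upIndec s hS2
  set T : ℕ → PermSeq := fun a =>
    if h : 0 < a ∧ a ≤ k then ⟨a, Classical.choose (main1 k s hnc a h.1 h.2)⟩ else ⟨a, 1⟩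
    with hT_def
  have hTfst : ∀ a, (T a).1 = a := by
    intro a
    simp only [hT_def]
    by_cases h : 0 < a ∧ a ≤ k
    · exact congrArg Sigma.fst (dif_pos h)
    · exact congrArg Sigma.fst (dif_neg h)
  have hTspec : ∀ a, 0 < a → a ≤ k → NoCut (T a).2 ∧ PermContains (T a).2 s := by
    intro a h1 h2
    have hh : 0 < a ∧ a ≤ k := ⟨h1, h2⟩
    have he : T a = ⟨a, Classical.choose (main1 k s hnc a hh.1 hh.2)⟩ := by
      simp only [hT_def]; exact dif_pos hh
    rw [he]
    exact Classical.choose_spec (main1 k s hnc a hh.1 hh.2)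
  set G : Composition k → PermSeq := fun c => Fsum T c.blocks with hG_def
  have hmemle : ∀ (c : Composition k), ∀ a ∈ c.blocks, 0 < a ∧ a ≤ k := by
    intro c a ha
    refine ⟨c.blocks_pos ha, ?_⟩
    have := List.single_le_sum (fun b _ => Nat.zero_le b) a ha
    rwa [c.blocks_sum] at this
  have hGX : ∀ c : Composition k, G c ∈ X := by
    intro c
    refine hX _ hS3 _ ?_
    refine Fsum_le T ⟨k, s⟩ k c.blocks ?_ ?_
    · intro a ha
      exact (hTspec a (hmemle c a ha).1 (hmemle c a ha).2).2
    · exact c.length_le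
  have hGfst : ∀ c : Composition k, (G c).1 = k := by
    intro c
    rw [hG_def]
    show (Fsum T c.blocks).1 = k
    rw [Fsum_fst T hTfst, c.blocks_sum]
  have hGinj : Function.Injective G := by
    intro c c' h
    have := Fsum_inj T hTfst c.blocks c'.blocks
      (fun a ha => ⟨(hmemle c a ha).1, (hTspec a (hmemle c a ha).1 (hmemle c a ha).2).1⟩)
      (fun a ha => ⟨(hmemle c' a ha).1, (hTspec a (hmemle c' a ha).1 (hmemle c' a ha).2).1⟩)
      h
    ext1
    exact this
  have hsub : Set.range G ⊆ {π ∈ X | π.1 = k} := by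
    rintro _ ⟨c, rfl⟩
    exact ⟨hGX c, hGfst c⟩
  have hfin : {π ∈ X | π.1 = k}.Finite :=
    Set.Finite.subset (finite_length_set k) (fun π hπ => hπ.2)
  calc 2 ^ (k - 1) = Fintype.card (Composition k) := (composition_card k).symm
    _ = Nat.card (Composition k) := Nat.card_eq_fintype_card.symm
    _ = Nat.card (Set.range G) := (Nat.card_range_of_injective hGinj).symm
    _ = (Set.range G).ncard := Nat.card_coe_set_eq _
    _ ≤ {π ∈ X | π.1 = k}.ncard := Set.ncard_le_ncard hsub hfin
    _ = countIn X k := rfl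

theorem count_ge_of_nfold_sums' :
    (∀ X : Set PermSeq, IsCPC X →
      (∀ k : ℕ, 1 ≤ k → ∃ σ : PermSeq, σ.1 = k ∧ UpIndec σ ∧ nfoldOplus k σ ∈ X) →
      ∀ n : ℕ, 1 ≤ n → 2 ^ (n - 1) ≤ countIn X n) ∧
    (∀ X : Set PermSeq, IsCPC X →
      (∀ k : ℕ, 1 ≤ k → ∃ σ : PermSeq, σ.1 = k ∧ DownIndec σ ∧ nfoldOminus k σ ∈ X) →
      ∀ n : ℕ, 1 ≤ n → 2 ^ (n - 1) ≤ countIn X n) := by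
  constructor
  · intro X hX hyp n hn
    exact part1 X hX hyp n hn
  · intro X hX hyp n hn
    have hX' : IsCPC (crev ⁻¹' X) := by
      intro σ hσ π hle
      exact hX (crev σ) hσ (crev π) (permLE_crev hle)
    have hyp' : ∀ k : ℕ, 1 ≤ k →
        ∃ σ : PermSeq, σ.1 = k ∧ UpIndec σ ∧ nfoldOplus k σ ∈ crev ⁻¹' X := by
      intro k hk
      obtain ⟨σ, h1, h2, h3⟩ := hyp k hk
      refine ⟨crev σ, h1, upIndec_crev h2, ?_⟩
      show crev (nfoldOplus k (crev σ)) ∈ X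
      rw [crev_nfold, crev_crev]
      exact h3
    have hcount := part1 (crev ⁻¹' X) hX' hyp' n hn
    have heq : countIn (crev ⁻¹' X) n = countIn X n := by
      show {π ∈ crev ⁻¹' X | π.1 = n}.ncard = {π ∈ X | π.1 = n}.ncard
      have himg : crev '' {π ∈ crev ⁻¹' X | π.1 = n} = {π ∈ X | π.1 = n} := by
        ext π
        constructor
        · rintro ⟨ρ, ⟨hρ1, hρ2⟩, rfl⟩
          exact ⟨hρ1, hρ2⟩
        · rintro ⟨h1, h2⟩
          refine ⟨crev π, ⟨?_, h2⟩, crev_crev π⟩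
          show crev (crev π) ∈ X
          rwa [crev_crev]
      rw [← himg, Set.ncard_image_of_injective _ crev_injective]
    rwa [heq] at hcount

/-- If a closed permutation class `X` contains, for every `k ≥ 1`, the `k`-fold direct sum
of some up-indecomposable permutation of length `k`, then `|X ∩ S_n| ≥ 2 ^ (n-1)` for all
`n ≥ 1`; analogously for down-indecomposable permutations and skew sums. -/
theorem count_ge_of_nfold_sums :
    (∀ X : Set PermSeq, IsCPC X →
      (∀ k : ℕ, 1 ≤ k → ∃ σ : PermSeq, σ.1 = k ∧ UpIndec σ ∧ nfoldOplus k σ ∈ X) →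
      ∀ n : ℕ, 1 ≤ n → 2 ^ (n - 1) ≤ countIn X n) ∧
    (∀ X : Set PermSeq, IsCPC X →
      (∀ k : ℕ, 1 ≤ k → ∃ σ : PermSeq, σ.1 = k ∧ DownIndec σ ∧ nfoldOminus k σ ∈ X) →
      ∀ n : ℕ, 1 ≤ n → 2 ^ (n - 1) ≤ countIn X n) :=
  count_ge_of_nfold_sums'
end

section
/- Let X, Y ⊆ ℕ be two n-element subsets, f : X → Y a bijection, and π ∈ S_n the permutation order-isomorphic to f. Suppose π ∈ H_k^+ ∪ H_k^-. Then every partition of X into r consecutive intervals J_1 < ... < J_r can be refined by a partition of X into s consecutive intervals I_1 < ... < I_s with s ≤ r + (k-1)(r-1) such that each image f(I_i) is an interval in Y. Similarly, every partition of Y into r intervals can be refined by a partition into at most r + (k-1)(r-1) intervals whose preimages under f are intervals in X. -/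
/-- Direct sum of a list of permutations. -/
def listOplus (l : List PermSeq) : PermSeq := l.foldr PermSeq.oplus ⟨0, 1⟩

/-- Skew sum of a list of permutations. -/
def listOminus (l : List PermSeq) : PermSeq := l.foldr PermSeq.ominus ⟨0, 1⟩

/-- `π ∈ H_k^+` : all up-blocks of the (unique) up-decomposition of `π` into
up-indecomposable permutations have length `< k`. -/
def HUp (k : ℕ) (π : PermSeq) : Prop :=
  ∃ l : List PermSeq, (∀ σ ∈ l, UpIndec σ ∧ σ.1 < k) ∧ π = listOplus l

/-- `π ∈ H_k^-` : all down-blocks of the (unique) down-decomposition of `π` into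
down-indecomposable permutations have length `< k`. -/
def HDown (k : ℕ) (π : PermSeq) : Prop :=
  ∃ l : List PermSeq, (∀ σ ∈ l, DownIndec σ ∧ σ.1 < k) ∧ π = listOminus l

/-- `I` is an interval in the finite set `X ⊆ ℕ`: a set of consecutive elements of `X`. -/
def IsIntervalIn (I X : Finset ℕ) : Prop :=
  I ⊆ X ∧ ∀ a ∈ I, ∀ c ∈ I, ∀ b ∈ X, a ≤ b → b ≤ c → b ∈ I

/-- `L` is a partition of `X` into (nonempty) consecutive intervals `J_1 < J_2 < ⋯ < J_r`. -/
def IsIntervalPartition (X : Finset ℕ) (L : List (Finset ℕ)) : Prop :=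
  (∀ J ∈ L, J.Nonempty ∧ IsIntervalIn J X) ∧
    L.foldr (· ∪ ·) ∅ = X ∧
    L.Pairwise fun A B => ∀ a ∈ A, ∀ b ∈ B, a < b


namespace IPRaux

/-- index of `x` within finset `Z`: number of elements of `Z` below `x`. -/
def ind (Z : Finset ℕ) (x : ℕ) : ℕ := (Z.filter (· < x)).card

/-- the segment of `Z` of elements with index in `[a,b)`. -/
def seg (Z : Finset ℕ) (a b : ℕ) : Finset ℕ :=
  Z.filter (fun x => a ≤ ind Z x ∧ ind Z x < b)

lemma filt_sub (Z : Finset ℕ) {x y : ℕ} (h : x ≤ y) :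
    Z.filter (· < x) ⊆ Z.filter (· < y) := by
  intro z hz
  simp only [Finset.mem_filter] at *
  exact ⟨hz.1, lt_of_lt_of_le hz.2 h⟩

lemma ind_mono (Z : Finset ℕ) {x y : ℕ} (h : x ≤ y) : ind Z x ≤ ind Z y :=
  Finset.card_le_card (filt_sub Z h)

lemma ind_strict (Z : Finset ℕ) {x y : ℕ} (hx : x ∈ Z) (h : x < y) :
    ind Z x < ind Z y := by
  apply Finset.card_lt_card
  constructor
  · exact filt_sub Z (le_of_lt h)
  · intro hsub
    have hm : x ∈ Z.filter (· < y) := Finset.mem_filter.2 ⟨hx, h⟩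
    have := hsub hm
    simp at this

lemma ind_lt_card (Z : Finset ℕ) {x : ℕ} (hx : x ∈ Z) : ind Z x < Z.card := by
  apply Finset.card_lt_card
  constructor
  · exact Finset.filter_subset _ _
  · intro hsub
    have := hsub hx
    simp at this

lemma ind_inj (Z : Finset ℕ) {x y : ℕ} (hx : x ∈ Z) (hy : y ∈ Z)
    (h : ind Z x = ind Z y) : x = y := by
  rcases lt_trichotomy x y with hl | he | hl
  · exact absurd h (Nat.ne_of_lt (ind_strict Z hx hl))
  · exact he
  · exact absurd h.symm (Nat.ne_of_lt (ind_strict Z hy hl))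

lemma ind_reflect (Z : Finset ℕ) {x y : ℕ} (h : ind Z x < ind Z y) :
    x < y := by
  by_contra hc
  exact absurd (lt_of_le_of_lt (ind_mono Z (not_lt.1 hc)) h) (lt_irrefl _)

lemma seg_subset (Z : Finset ℕ) (a b : ℕ) : seg Z a b ⊆ Z := Finset.filter_subset _ _

lemma mem_seg {Z : Finset ℕ} {a b x : ℕ} :
    x ∈ seg Z a b ↔ x ∈ Z ∧ a ≤ ind Z x ∧ ind Z x < b := Finset.mem_filter

lemma seg_isInterval (Z : Finset ℕ) (a b : ℕ) : IsIntervalIn (seg Z a b) Z := by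
  refine ⟨seg_subset Z a b, ?_⟩
  intro x hx z hz y hy hxy hyz
  rw [mem_seg] at hx hz ⊢
  exact ⟨hy, le_trans hx.2.1 (ind_mono Z hxy), lt_of_le_of_lt (ind_mono Z hyz) hz.2.2⟩

lemma subsingleton_isInterval {I Z : Finset ℕ} (hsub : I ⊆ Z)
    (hss : ∀ a ∈ I, ∀ b ∈ I, a = b) : IsIntervalIn I Z := by
  refine ⟨hsub, ?_⟩
  intro a ha c hc b _ hab hbc
  have : a = c := hss a ha c hc
  subst this
  have : b = a := le_antisymm hbc hab
  subst this
  exact ha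

lemma seg_succ_subsingleton (Z : Finset ℕ) (d : ℕ) :
    ∀ x ∈ seg Z d (d+1), ∀ y ∈ seg Z d (d+1), x = y := by
  intro x hx y hy
  rw [mem_seg] at hx hy
  apply ind_inj Z hx.1 hy.1
  omega

/-- membership in iterated union -/
lemma mem_foldr_union {l : List (Finset ℕ)} {x : ℕ} :
    x ∈ l.foldr (· ∪ ·) ∅ ↔ ∃ A ∈ l, x ∈ A := by
  induction l with
  | nil => simp
  | cons A t ih => simp [ih]

/-- consecutive pairs of a list -/
def pairs : List ℕ → List (ℕ × ℕ)
  | a :: b :: t => (a, b) :: pairs (b :: t)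
  | _ => []

lemma pairs_length : ∀ l : List ℕ, (pairs l).length = l.length - 1
  | [] => rfl
  | [_] => rfl
  | _ :: b :: t => by
      have := pairs_length (b :: t)
      simp [pairs, this]

lemma pairs_mem_mem : ∀ {l : List ℕ} {p : ℕ × ℕ}, p ∈ pairs l → p.1 ∈ l ∧ p.2 ∈ l
  | [], p, h => by simp [pairs] at h
  | [_], p, h => by simp [pairs] at h
  | a :: b :: t, p, h => by
      simp only [pairs, List.mem_cons] at h
      rcases h with h | h
      · subst h; simp
      · have := pairs_mem_mem h
        exact ⟨List.mem_cons_of_mem _ this.1, List.mem_cons_of_mem _ this.2⟩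

lemma pairs_sorted : ∀ {l : List ℕ}, l.Pairwise (· < ·) → ∀ {p : ℕ × ℕ}, p ∈ pairs l →
    p.1 < p.2 ∧ ∀ x ∈ l, ¬(p.1 < x ∧ x < p.2)
  | [], _, p, h => by simp [pairs] at h
  | [_], _, p, h => by simp [pairs] at h
  | a :: b :: t, hs, p, h => by
      simp only [pairs, List.mem_cons] at h
      have hab : a < b := (List.pairwise_cons.1 hs).1 b (by simp)
      rcases h with h | h
      · subst h
        refine ⟨hab, ?_⟩
        intro x hx
        rcases List.mem_cons.1 hx with rfl | hx
        · omega
        · have : b ≤ x := by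
            rcases List.mem_cons.1 hx with rfl | hx
            · exact le_refl _
            · exact le_of_lt (((List.pairwise_cons.1 ((List.pairwise_cons.1 hs).2)).1) x hx)
          intro hcon; omega
      · have ih := pairs_sorted (List.pairwise_cons.1 hs).2 h
        refine ⟨ih.1, ?_⟩
        intro x hx
        rcases List.mem_cons.1 hx with rfl | hx
        · have hp1 : b ≤ p.1 := by
            have := (pairs_mem_mem h).1
            rcases List.mem_cons.1 this with rfl | hm
            · exact le_refl _
            · exact le_of_lt ((List.pairwise_cons.1 (List.pairwise_cons.1 hs).2).1 _ hm)
          intro hcon; omega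
        · exact ih.2 x hx

lemma pairs_cover : ∀ {l : List ℕ}, l.Pairwise (· < ·) → ∀ {v : ℕ},
    (∃ a ∈ l, a ≤ v) → (∃ b ∈ l, v < b) → ∃ p ∈ pairs l, p.1 ≤ v ∧ v < p.2
  | [], _, v, h1, _ => by simp at h1
  | [a], _, v, h1, h2 => by
      simp at h1 h2; omega
  | a :: b :: t, hs, v, h1, h2 => by
      by_cases hv : v < b
      · have ha : a ≤ v := by
          obtain ⟨x, hx, hxv⟩ := h1
          rcases List.mem_cons.1 hx with rfl | hx
          · exact hxv
          · have : b ≤ x := by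
              rcases List.mem_cons.1 hx with rfl | hx
              · exact le_refl _
              · exact le_of_lt ((List.pairwise_cons.1 (List.pairwise_cons.1 hs).2).1 _ hx)
            omega
        exact ⟨(a, b), by simp [pairs], ha, hv⟩
      · have hs' := (List.pairwise_cons.1 hs).2
        have h1' : ∃ x ∈ b :: t, x ≤ v := ⟨b, by simp, not_lt.1 hv⟩
        have h2' : ∃ x ∈ b :: t, v < x := by
          obtain ⟨x, hx, hvx⟩ := h2
          rcases List.mem_cons.1 hx with he | hx
          · subst he
            have : x < b := (List.pairwise_cons.1 hs).1 b (by simp)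
            omega
          · exact ⟨x, hx, hvx⟩
        obtain ⟨p, hp, hple⟩ := pairs_cover hs' h1' h2'
        exact ⟨p, by simp [pairs, hp], hple⟩

lemma pairs_pairwise : ∀ {l : List ℕ}, l.Pairwise (· < ·) →
    (pairs l).Pairwise (fun p q => p.2 ≤ q.1)
  | [] , _ => by simp [pairs]
  | [_], _ => by simp [pairs]
  | a :: b :: t, hs => by
      have hs' := (List.pairwise_cons.1 hs).2
      have ih := pairs_pairwise hs'
      refine List.Pairwise.cons ?_ ih
      intro q hq
      have hm := (pairs_mem_mem hq).1
      rcases List.mem_cons.1 hm with rfl | hm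
      · exact le_refl _
      · exact le_of_lt ((List.pairwise_cons.1 hs').1 _ hm)

end IPRaux

namespace IPRaux

lemma ind_orderIso (Z : Finset ℕ) {n : ℕ} (h : Z.card = n) (i : Fin n) :
    ind Z ((Z.orderIsoOfFin h i : ℕ)) = (i : ℕ) := by
  set e := Z.orderIsoOfFin h with he
  have hfilt : Z.filter (· < (e i : ℕ)) = (Finset.Iio i).image (fun j => (e j : ℕ)) := by
    ext x
    simp only [Finset.mem_filter, Finset.mem_image, Finset.mem_Iio]
    constructor
    · rintro ⟨hx, hlt⟩
      refine ⟨e.symm ⟨x, hx⟩, ?_, by simp⟩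
      have : (e (e.symm ⟨x, hx⟩) : ℕ) < (e i : ℕ) := by simpa using hlt
      have h2 : e (e.symm ⟨x, hx⟩) < e i := Subtype.coe_lt_coe.1 this
      exact e.lt_iff_lt.1 h2
    · rintro ⟨j, hj, rfl⟩
      exact ⟨(e j).2, Subtype.coe_lt_coe.2 (e.lt_iff_lt.2 hj)⟩
  rw [ind, hfilt, Finset.card_image_of_injective _ (fun a b hab => e.injective (Subtype.ext hab)),
    Fin.card_Iio]

lemma exists_ind_eq (Z : Finset ℕ) {n : ℕ} (h : Z.card = n) {d : ℕ} (hd : d < n) :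
    ∃ x ∈ Z, ind Z x = d := by
  refine ⟨(Z.orderIsoOfFin h ⟨d, hd⟩ : ℕ), (Z.orderIsoOfFin h ⟨d, hd⟩).2, ?_⟩
  simpa using ind_orderIso Z h ⟨d, hd⟩

lemma orderIso_ind (Z : Finset ℕ) {n : ℕ} (h : Z.card = n) {x : ℕ} (hx : x ∈ Z)
    (hlt : ind Z x < n) : (Z.orderIsoOfFin h ⟨ind Z x, hlt⟩ : ℕ) = x := by
  apply ind_inj Z (Z.orderIsoOfFin h ⟨ind Z x, hlt⟩).2 hx
  simpa using ind_orderIso Z h ⟨ind Z x, hlt⟩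

/-- every nonempty interval of `Z` is a segment. -/
lemma interval_eq_seg {Z J : Finset ℕ} (hne : J.Nonempty) (hint : IsIntervalIn J Z) :
    J = seg Z ((Z.filter (fun y => ∀ z ∈ J, y < z)).card)
            ((Z.filter (fun y => ∃ z ∈ J, y ≤ z)).card) := by
  set lo := (Z.filter (fun y => ∀ z ∈ J, y < z)).card with hlo
  set hi := (Z.filter (fun y => ∃ z ∈ J, y ≤ z)).card with hhi
  ext x
  rw [mem_seg]
  constructor
  · intro hx
    have hxZ : x ∈ Z := hint.1 hx
    refine ⟨hxZ, ?_, ?_⟩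
    · apply Finset.card_le_card
      intro y hy
      rw [Finset.mem_filter] at hy ⊢
      exact ⟨hy.1, hy.2 x hx⟩
    · have hsub : Z.filter (· < x) ⊆ (Z.filter (fun y => ∃ z ∈ J, y ≤ z)).erase x := by
        intro y hy
        rw [Finset.mem_filter] at hy
        rw [Finset.mem_erase, Finset.mem_filter]
        exact ⟨by omega, hy.1, x, hx, le_of_lt hy.2⟩
      have hxm : x ∈ Z.filter (fun y => ∃ z ∈ J, y ≤ z) :=
        Finset.mem_filter.2 ⟨hxZ, x, hx, le_refl x⟩
      calc ind Z x ≤ ((Z.filter (fun y => ∃ z ∈ J, y ≤ z)).erase x).card :=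
            Finset.card_le_card hsub
        _ < hi := Finset.card_lt_card (Finset.erase_ssubset hxm)
  · rintro ⟨hxZ, hxlo, hxhi⟩
    by_contra hxJ
    -- x is below all of J or above all of J
    have hcase : (∀ z ∈ J, x < z) ∨ (∀ z ∈ J, z < x) := by
      by_contra hc
      push_neg at hc
      obtain ⟨⟨z1, hz1, hz1x⟩, ⟨z2, hz2, hz2x⟩⟩ := hc
      exact hxJ (hint.2 z1 hz1 z2 hz2 x hxZ hz1x hz2x)
    rcases hcase with hbelow | habove
    · -- then ind Z x < lo
      have hsub : Z.filter (· < x) ⊆ (Z.filter (fun y => ∀ z ∈ J, y < z)).erase x := by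
        intro y hy
        rw [Finset.mem_filter] at hy
        rw [Finset.mem_erase, Finset.mem_filter]
        exact ⟨by omega, hy.1, fun z hz => lt_trans hy.2 (hbelow z hz)⟩
      have hxm : x ∈ Z.filter (fun y => ∀ z ∈ J, y < z) :=
        Finset.mem_filter.2 ⟨hxZ, hbelow⟩
      have : ind Z x < lo :=
        lt_of_le_of_lt (Finset.card_le_card hsub) (Finset.card_lt_card (Finset.erase_ssubset hxm))
      omega
    · -- then hi ≤ ind Z x
      have hsub : Z.filter (fun y => ∃ z ∈ J, y ≤ z) ⊆ Z.filter (· < x) := by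
        intro y hy
        rw [Finset.mem_filter] at hy ⊢
        obtain ⟨hyZ, z, hz, hyz⟩ := hy
        exact ⟨hyZ, lt_of_le_of_lt hyz (habove z hz)⟩
      have : hi ≤ ind Z x := Finset.card_le_card hsub
      omega

end IPRaux

namespace IPRaux

def loF (Z J : Finset ℕ) : ℕ := (Z.filter (fun y => ∀ z ∈ J, y < z)).card
def hiF (Z J : Finset ℕ) : ℕ := (Z.filter (fun y => ∃ z ∈ J, y ≤ z)).card

lemma interval_eq_seg' {Z J : Finset ℕ} (hne : J.Nonempty) (hint : IsIntervalIn J Z) :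
    J = seg Z (loF Z J) (hiF Z J) := interval_eq_seg hne hint

lemma assembly {n k : ℕ} {Z : Finset ℕ} (hZ : Z.card = n)
    {B : Finset ℕ} (hB0 : 0 ∈ B) (hBn : n ∈ B)
    (hgap : ∀ a ∈ B, a < n → ∃ b ∈ B, a < b ∧ b ≤ a + (k-1))
    (Good : Finset ℕ → Prop)
    (hG1 : ∀ d d', d ∈ B → d' ∈ B → Good (seg Z d d'))
    (hG2 : ∀ d, Good (seg Z d (d+1)))
    (L : List (Finset ℕ)) (hL : IsIntervalPartition Z L) :
    ∃ L' : List (Finset ℕ), IsIntervalPartition Z L' ∧ (∀ I ∈ L', ∃ J ∈ L, I ⊆ J) ∧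
      L'.length ≤ L.length + (k-1) * (L.length - 1) ∧ ∀ I ∈ L', Good I := by
  classical
  obtain ⟨hmem, hunion, hpw⟩ := hL
  by_cases hn : n = 0
  · have hZe : Z = ∅ := Finset.card_eq_zero.1 (by rw [hZ, hn])
    exact ⟨[], ⟨by simp, by simp [hZe], by simp⟩, by simp, by simp, by simp⟩
  have hnpos : 0 < n := Nat.pos_of_ne_zero hn
  have hZne : Z.Nonempty := Finset.card_pos.1 (by omega)
  have hLne : L ≠ [] := by
    intro h
    rw [h] at hunion
    simp at hunion
    rw [← hunion] at hZ
    simp at hZ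
    omega
  set r := L.length with hr
  have hrpos : 1 ≤ r := List.length_pos_iff.2 hLne
  have hk2 : 2 ≤ k := by
    obtain ⟨b, _, hb0, hble⟩ := hgap 0 hB0 hnpos
    omega
  -- the coarse cut set C
  set C : Finset ℕ := insert 0 ((L.map (hiF Z)).toFinset) with hC
  have hC0 : 0 ∈ C := Finset.mem_insert_self _ _
  have hhimem : ∀ J ∈ L, hiF Z J ∈ C := by
    intro J hJ
    exact Finset.mem_insert_of_mem (List.mem_toFinset.2 (List.mem_map.2 ⟨J, hJ, rfl⟩))
  have hCle : ∀ c ∈ C, c ≤ n := by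
    intro c hc
    rcases Finset.mem_insert.1 hc with rfl | hc
    · omega
    · obtain ⟨J, _, rfl⟩ := List.mem_map.1 (List.mem_toFinset.1 hc)
      calc hiF Z J ≤ Z.card := Finset.card_le_card (Finset.filter_subset _ _)
        _ = n := hZ
  have hCn : n ∈ C := by
    obtain ⟨m0, hm0Z, hm0max⟩ : ∃ m0 ∈ Z, ∀ y ∈ Z, y ≤ m0 :=
      ⟨Z.max' hZne, Finset.max'_mem _ _, fun y hy => Finset.le_max' Z y hy⟩
    obtain ⟨J0, hJ0L, hmaxJ0⟩ : ∃ J ∈ L, m0 ∈ J := by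
      rw [← hunion] at hm0Z
      exact mem_foldr_union.1 hm0Z
    have : hiF Z J0 = n := by
      have hfe : Z.filter (fun y => ∃ z ∈ J0, y ≤ z) = Z := by
        apply Finset.filter_true_of_mem
        intro y hy
        exact ⟨_, hmaxJ0, hm0max y hy⟩
      rw [hiF, hfe, hZ]
    exact this ▸ hhimem J0 hJ0L
  have hCcard : C.card ≤ r + 1 := by
    calc C.card ≤ (L.map (hiF Z)).toFinset.card + 1 := Finset.card_insert_le _ _
      _ ≤ (L.map (hiF Z)).length + 1 := by
          exact Nat.add_le_add_right (List.toFinset_card_le _) 1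
      _ = r + 1 := by rw [List.length_map]
  -- block-boundary functions
  set bl : ℕ → ℕ := fun c => (insert 0 (B.filter (· ≤ c))).max' ⟨0, Finset.mem_insert_self _ _⟩
    with hbl
  set br : ℕ → ℕ := fun c => (insert n (B.filter (fun b => c ≤ b))).min'
    ⟨n, Finset.mem_insert_self _ _⟩ with hbr
  have hblB : ∀ c, bl c ∈ B := by
    intro c
    rcases Finset.mem_insert.1 (Finset.max'_mem (insert 0 (B.filter (· ≤ c)))
      ⟨0, Finset.mem_insert_self _ _⟩) with h | h
    · rw [hbl]; simp only []; rw [h]; exact hB0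
    · exact (Finset.mem_filter.1 h).1
  have hbrB : ∀ c, br c ∈ B := by
    intro c
    rcases Finset.mem_insert.1 (Finset.min'_mem (insert n (B.filter (fun b => c ≤ b)))
      ⟨n, Finset.mem_insert_self _ _⟩) with h | h
    · rw [hbr]; simp only []; rw [h]; exact hBn
    · exact (Finset.mem_filter.1 h).1
  have hblle : ∀ c, bl c ≤ c := by
    intro c
    apply Finset.max'_le
    intro y hy
    rcases Finset.mem_insert.1 hy with rfl | hy
    · omega
    · exact (Finset.mem_filter.1 hy).2
  have hbrge : ∀ c, c ≤ n → c ≤ br c := by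
    intro c hc
    apply Finset.le_min'
    intro y hy
    rcases Finset.mem_insert.1 hy with rfl | hy
    · exact hc
    · exact (Finset.mem_filter.1 hy).2
  have hbrlen : ∀ c, br c ≤ n := by
    intro c
    exact Finset.min'_le _ _ (Finset.mem_insert_self _ _)
  have hblmax : ∀ c, ∀ b ∈ B, b ≤ c → b ≤ bl c := by
    intro c b hb hbc
    exact Finset.le_max' (insert 0 (B.filter (· ≤ c))) b
      (Finset.mem_insert_of_mem (Finset.mem_filter.2 ⟨hb, hbc⟩))
  have hbrmin : ∀ c, ∀ b ∈ B, c ≤ b → br c ≤ b := by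
    intro c b hb hcb
    exact Finset.min'_le (insert n (B.filter (fun b => c ≤ b))) b
      (Finset.mem_insert_of_mem (Finset.mem_filter.2 ⟨hb, hcb⟩))
  have hbrbl : ∀ c, c < n → br c ≤ bl c + (k-1) := by
    intro c hc
    have h1 : bl c < n := lt_of_le_of_lt (hblle c) hc
    obtain ⟨b, hbB, hb1, hb2⟩ := hgap (bl c) (hblB c) h1
    have : c ≤ b := by
      by_contra hcon
      exact absurd (hblmax c b hbB (by omega)) (by omega)
    exact le_trans (hbrmin c b hbB this) hb2
  -- the refined cut set D
  set U : Finset ℕ := (C.filter (fun c => 0 < c ∧ c < n)).biUnion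
    (fun c => Finset.Icc (bl c) (br c)) with hU
  set D : Finset ℕ := C ∪ U with hD
  have hCD : C ⊆ D := Finset.subset_union_left
  have hD0 : 0 ∈ D := hCD hC0
  have hDn : n ∈ D := hCD hCn
  have hDle : ∀ d ∈ D, d ≤ n := by
    intro d hd
    rcases Finset.mem_union.1 hd with hd | hd
    · exact hCle d hd
    · obtain ⟨c, _, hdc⟩ := Finset.mem_biUnion.1 hd
      exact le_trans (Finset.mem_Icc.1 hdc).2 (hbrlen c)
  -- cardinality bound for D
  have hDcard : D.card ≤ (r + 1) + (r - 1) * (k - 1) := by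
    have h1 : D.card ≤ C.card + (U \ C).card := by
      rw [hD, ← Finset.union_sdiff_self_eq_union]
      exact Finset.card_union_le _ _
    have h2 : U \ C ⊆ (C.filter (fun c => 0 < c ∧ c < n)).biUnion
        (fun c => (Finset.Icc (bl c) (br c)).erase c) := by
      intro x hx
      obtain ⟨hxU, hxC⟩ := Finset.mem_sdiff.1 hx
      obtain ⟨c, hcf, hxc⟩ := Finset.mem_biUnion.1 hxU
      refine Finset.mem_biUnion.2 ⟨c, hcf, Finset.mem_erase.2 ⟨?_, hxc⟩⟩
      intro h
      exact hxC (h ▸ (Finset.mem_filter.1 hcf).1)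
    have h3 : ∀ c ∈ C.filter (fun c => 0 < c ∧ c < n),
        ((Finset.Icc (bl c) (br c)).erase c).card ≤ k - 1 := by
      intro c hcf
      have hcf' := Finset.mem_filter.1 hcf
      obtain ⟨hcC, hc0, hcn⟩ : _ ∧ _ ∧ _ := ⟨hcf'.1, hcf'.2.1, hcf'.2.2⟩
      have hcIcc : c ∈ Finset.Icc (bl c) (br c) :=
        Finset.mem_Icc.2 ⟨hblle c, hbrge c (le_of_lt hcn)⟩
      rw [Finset.card_erase_of_mem hcIcc, Nat.card_Icc]
      have := hbrbl c hcn
      omega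
    have h4 : (U \ C).card ≤ (C.filter (fun c => 0 < c ∧ c < n)).card * (k - 1) := by
      calc (U \ C).card ≤ ((C.filter (fun c => 0 < c ∧ c < n)).biUnion
            (fun c => (Finset.Icc (bl c) (br c)).erase c)).card := Finset.card_le_card h2
        _ ≤ ∑ c ∈ C.filter (fun c => 0 < c ∧ c < n), ((Finset.Icc (bl c) (br c)).erase c).card :=
            Finset.card_biUnion_le
        _ ≤ (C.filter (fun c => 0 < c ∧ c < n)).card * (k - 1) := by
            have := Finset.sum_le_card_nsmul (C.filter (fun c => 0 < c ∧ c < n))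
              (fun c => ((Finset.Icc (bl c) (br c)).erase c).card) (k-1) h3
            simpa [smul_eq_mul] using this
    have h5 : (C.filter (fun c => 0 < c ∧ c < n)).card ≤ r - 1 := by
      have hsub : C.filter (fun c => 0 < c ∧ c < n) ⊆ (C.erase n).erase 0 := by
        intro c hc
        obtain ⟨h1', h2'⟩ := Finset.mem_filter.1 hc
        exact Finset.mem_erase.2 ⟨by omega, Finset.mem_erase.2 ⟨by omega, h1'⟩⟩
      have hc1 : ((C.erase n).erase 0).card = C.card - 2 := by
        rw [Finset.card_erase_of_mem, Finset.card_erase_of_mem hCn]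
        · omega
        · exact Finset.mem_erase.2 ⟨by omega, hC0⟩
      have := Finset.card_le_card hsub
      omega
    calc D.card ≤ C.card + (U \ C).card := h1
      _ ≤ (r + 1) + (r - 1) * (k - 1) := by
          have := Nat.mul_le_mul_right (k - 1) h5
          omega
  -- neighbour lemmas
  have hplus : ∀ d ∈ D, d ∉ B → d < n → d + 1 ∈ D := by
    intro d hd hdB hdn
    rcases Finset.mem_union.1 hd with hdC | hdU
    · have hd0 : 0 < d := by
        rcases Nat.eq_zero_or_pos d with h | h
        · exact absurd (h ▸ hB0) (h ▸ hdB)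
        · exact h
      have hdf : d ∈ C.filter (fun c => 0 < c ∧ c < n) :=
        Finset.mem_filter.2 ⟨hdC, hd0, hdn⟩
      have hdbr : d < br d := lt_of_le_of_ne (hbrge d (le_of_lt hdn))
        (fun h => hdB (h ▸ hbrB d))
      refine Finset.mem_union_right _ (Finset.mem_biUnion.2 ⟨d, hdf, ?_⟩)
      exact Finset.mem_Icc.2 ⟨le_trans (hblle d) (by omega), by omega⟩
    · obtain ⟨c, hcf, hdc⟩ := Finset.mem_biUnion.1 hdU
      rw [Finset.mem_Icc] at hdc
      have hdbr : d < br c := lt_of_le_of_ne hdc.2 (fun h => hdB (h ▸ hbrB c))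
      refine Finset.mem_union_right _ (Finset.mem_biUnion.2 ⟨c, hcf, ?_⟩)
      exact Finset.mem_Icc.2 ⟨by omega, by omega⟩
  have hminus : ∀ d ∈ D, d ∉ B → 0 < d → d - 1 ∈ D := by
    intro d hd hdB hd0
    rcases Finset.mem_union.1 hd with hdC | hdU
    · have hdn : d < n := by
        rcases lt_or_ge d n with h | h
        · exact h
        · have : d = n := le_antisymm (hCle d hdC) h
          exact absurd (this ▸ hBn) (this ▸ hdB)
      have hdf : d ∈ C.filter (fun c => 0 < c ∧ c < n) :=
        Finset.mem_filter.2 ⟨hdC, hd0, hdn⟩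
      have hdbl : bl d < d := lt_of_le_of_ne (hblle d) (fun h => hdB (h ▸ hblB d))
      refine Finset.mem_union_right _ (Finset.mem_biUnion.2 ⟨d, hdf, ?_⟩)
      exact Finset.mem_Icc.2 ⟨by omega, le_trans (by omega) (hbrge d (le_of_lt hdn))⟩
    · obtain ⟨c, hcf, hdc⟩ := Finset.mem_biUnion.1 hdU
      rw [Finset.mem_Icc] at hdc
      have hdbl : bl c < d := lt_of_le_of_ne hdc.1 (fun h => hdB (h.symm ▸ hblB c))
      refine Finset.mem_union_right _ (Finset.mem_biUnion.2 ⟨c, hcf, ?_⟩)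
      exact Finset.mem_Icc.2 ⟨by omega, by omega⟩
  -- the refined partition L'
  set ds := D.sort (· ≤ ·) with hds
  have hsort : ds.Pairwise (· < ·) := (Finset.sortedLT_sort D).pairwise
  have hmemds : ∀ x, x ∈ ds ↔ x ∈ D := fun x => Finset.mem_sort _
  set L' := (pairs ds).map (fun p => seg Z p.1 p.2) with hL'
  have hpairprops : ∀ p ∈ pairs ds, p.1 < p.2 ∧ p.1 ∈ D ∧ p.2 ∈ D ∧
      ∀ x ∈ D, ¬(p.1 < x ∧ x < p.2) := by
    intro p hp
    have h1 := pairs_sorted hsort hp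
    have h2 := pairs_mem_mem hp
    exact ⟨h1.1, (hmemds _).1 h2.1, (hmemds _).1 h2.2,
      fun x hx => h1.2 x ((hmemds x).2 hx)⟩
  refine ⟨L', ⟨?_, ?_, ?_⟩, ?_, ?_, ?_⟩
  · -- nonempty intervals
    intro I hI
    obtain ⟨p, hp, rfl⟩ := List.mem_map.1 hI
    obtain ⟨h12, h1D, h2D, _⟩ := hpairprops p hp
    have hp1n : p.1 < n := lt_of_lt_of_le h12 (hDle _ h2D)
    obtain ⟨x, hxZ, hxind⟩ := exists_ind_eq Z hZ hp1n
    exact ⟨⟨x, mem_seg.2 ⟨hxZ, by omega, by omega⟩⟩, seg_isInterval Z _ _⟩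
  · -- union
    ext x
    rw [mem_foldr_union]
    constructor
    · rintro ⟨A, hA, hxA⟩
      obtain ⟨p, _, rfl⟩ := List.mem_map.1 hA
      exact seg_subset Z _ _ hxA
    · intro hxZ
      have hix : ind Z x < n := by rw [← hZ]; exact ind_lt_card Z hxZ
      obtain ⟨p, hp, hple, hplt⟩ := pairs_cover hsort
        ⟨0, (hmemds 0).2 hD0, Nat.zero_le _⟩ ⟨n, (hmemds n).2 hDn, hix⟩
      exact ⟨seg Z p.1 p.2, List.mem_map.2 ⟨p, hp, rfl⟩, mem_seg.2 ⟨hxZ, hple, hplt⟩⟩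
  · -- pairwise increasing
    rw [hL', List.pairwise_map]
    apply List.Pairwise.imp_of_mem ?_ (pairs_pairwise hsort)
    intro p q _ _ hpq
    intro a ha b hb
    rw [mem_seg] at ha hb
    exact ind_reflect Z (by omega)
  · -- refinement
    intro I hI
    obtain ⟨p, hp, rfl⟩ := List.mem_map.1 hI
    obtain ⟨h12, h1D, h2D, hnob⟩ := hpairprops p hp
    have hp1n : p.1 < n := lt_of_lt_of_le h12 (hDle _ h2D)
    obtain ⟨x0, hx0Z, hx0ind⟩ := exists_ind_eq Z hZ hp1n
    obtain ⟨J, hJL, hx0J⟩ : ∃ J ∈ L, x0 ∈ J := by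
      have := hx0Z
      rw [← hunion] at this
      exact mem_foldr_union.1 this
    refine ⟨J, hJL, ?_⟩
    have hJseg := interval_eq_seg' (hmem J hJL).1 (hmem J hJL).2
    have hx0seg : x0 ∈ seg Z (loF Z J) (hiF Z J) := hJseg ▸ hx0J
    rw [mem_seg] at hx0seg
    have hhiC : hiF Z J ∈ D := hCD (hhimem J hJL)
    have hhige : p.2 ≤ hiF Z J := by
      have := hnob (hiF Z J) hhiC
      omega
    intro y hy
    rw [mem_seg] at hy
    rw [hJseg, mem_seg]
    exact ⟨hy.1, by omega, by omega⟩
  · -- length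
    have hlen : L'.length = D.card - 1 := by
      rw [hL', List.length_map, pairs_length, hds, Finset.length_sort]
    rw [hlen]
    have h1 : 1 ≤ D.card := Finset.card_pos.2 ⟨0, hD0⟩
    have h2 : D.card ≤ r + 1 + (k - 1) * (r - 1) := by
      rw [Nat.mul_comm]
      exact hDcard
    generalize hgen : (k - 1) * (r - 1) = t at h2 ⊢
    omega
  · -- Goodness
    intro I hI
    obtain ⟨p, hp, rfl⟩ := List.mem_map.1 hI
    obtain ⟨h12, h1D, h2D, hnob⟩ := hpairprops p hp
    by_cases hsucc : p.2 = p.1 + 1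
    · rw [hsucc]; exact hG2 p.1
    · have hp2gt : p.1 + 1 < p.2 := by omega
      have h1B : p.1 ∈ B := by
        by_contra hc
        have hp1n : p.1 < n := lt_of_lt_of_le h12 (hDle _ h2D)
        have := hplus p.1 h1D hc hp1n
        exact hnob (p.1 + 1) this (by omega)
      have h2B : p.2 ∈ B := by
        by_contra hc
        have := hminus p.2 h2D hc (by omega)
        exact hnob (p.2 - 1) this (by omega)
      exact hG1 p.1 p.2 h1B h2B

end IPRaux

namespace IPRaux

lemma permOplus_castAdd {m n' : ℕ} (σ : Equiv.Perm (Fin m)) (τ : Equiv.Perm (Fin n'))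
    (i : Fin m) : permOplus σ τ (Fin.castAdd n' i) = Fin.castAdd n' (σ i) := by
  simp [permOplus, Equiv.trans_apply, finSumFinEquiv_symm_apply_castAdd,
    Equiv.sumCongr_apply, Sum.map_inl, finSumFinEquiv_apply_left]

lemma permOplus_natAdd {m n' : ℕ} (σ : Equiv.Perm (Fin m)) (τ : Equiv.Perm (Fin n'))
    (j : Fin n') : permOplus σ τ (Fin.natAdd m j) = Fin.natAdd m (τ j) := by
  simp [permOplus, Equiv.trans_apply, finSumFinEquiv_symm_apply_natAdd,
    Equiv.sumCongr_apply, Sum.map_inr, finSumFinEquiv_apply_right]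

lemma permOminus_castAdd_val {m n' : ℕ} (σ : Equiv.Perm (Fin m)) (τ : Equiv.Perm (Fin n'))
    (i : Fin m) : ((permOminus σ τ (Fin.castAdd n' i)) : ℕ) = n' + (σ i : ℕ) := by
  simp [permOminus, Equiv.trans_apply, finSumFinEquiv_symm_apply_castAdd,
    Equiv.sumCongr_apply, Sum.map_inl, Equiv.sumComm_apply, Sum.swap,
    finSumFinEquiv_apply_right, finCongr_apply, Fin.coe_cast, Fin.coe_natAdd]
  omega

lemma permOminus_natAdd_val {m n' : ℕ} (σ : Equiv.Perm (Fin m)) (τ : Equiv.Perm (Fin n'))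
    (j : Fin n') : ((permOminus σ τ (Fin.natAdd m j)) : ℕ) = (τ j : ℕ) := by
  simp [permOminus, Equiv.trans_apply, finSumFinEquiv_symm_apply_natAdd,
    Equiv.sumCongr_apply, Sum.map_inr, Equiv.sumComm_apply, Sum.swap,
    finSumFinEquiv_apply_left, finCongr_apply, Fin.coe_cast, Fin.coe_castAdd]

def lenSum (l : List PermSeq) : ℕ := (l.map Sigma.fst).sum

lemma listOplus_cons (σ : PermSeq) (t : List PermSeq) :
    listOplus (σ :: t) = PermSeq.oplus σ (listOplus t) := rfl

lemma listOminus_cons (σ : PermSeq) (t : List PermSeq) :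
    listOminus (σ :: t) = PermSeq.ominus σ (listOminus t) := rfl

lemma listOplus_fst (l : List PermSeq) : (listOplus l).1 = lenSum l := by
  induction l with
  | nil => rfl
  | cons σ t ih =>
      show σ.1 + (listOplus t).1 = lenSum (σ :: t)
      rw [ih]; rfl

lemma listOminus_fst (l : List PermSeq) : (listOminus l).1 = lenSum l := by
  induction l with
  | nil => rfl
  | cons σ t ih =>
      show σ.1 + (listOminus t).1 = lenSum (σ :: t)
      rw [ih]; rfl

def ssums : List PermSeq → List ℕ
  | [] => [0]
  | σ :: t => 0 :: (ssums t).map (fun c => σ.1 + c)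

lemma ssums_zero (l : List PermSeq) : 0 ∈ ssums l := by
  cases l with
  | nil => simp [ssums]
  | cons σ t => simp [ssums]

lemma ssums_le (l : List PermSeq) : ∀ c ∈ ssums l, c ≤ lenSum l := by
  induction l with
  | nil => intro c hc; simp [ssums] at hc; simp [hc, lenSum]
  | cons σ t ih =>
      intro c hc
      simp only [ssums, List.mem_cons, List.mem_map] at hc
      rcases hc with rfl | ⟨c', hc', rfl⟩
      · exact Nat.zero_le _
      · have := ih c' hc'
        show σ.1 + c' ≤ lenSum (σ :: t)
        have hl : lenSum (σ :: t) = σ.1 + lenSum t := rfl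
        omega

lemma ssums_top (l : List PermSeq) : lenSum l ∈ ssums l := by
  induction l with
  | nil => exact List.mem_singleton_self _
  | cons σ t ih =>
      have hl : lenSum (σ :: t) = σ.1 + lenSum t := rfl
      rw [hl]
      simp only [ssums, List.mem_cons, List.mem_map]
      exact Or.inr ⟨lenSum t, ih, rfl⟩

lemma ssums_gap {k : ℕ} (l : List PermSeq) (hk : ∀ σ ∈ l, σ.1 < k) :
    ∀ c ∈ ssums l, c < lenSum l → ∃ c' ∈ ssums l, c < c' ∧ c' ≤ c + (k-1) := by
  induction l with
  | nil => intro c hc hlt; change c < 0 at hlt; omega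
  | cons σ t ih =>
      intro c hc hlt
      have hl : lenSum (σ :: t) = σ.1 + lenSum t := rfl
      have hσk : σ.1 < k := hk σ (by simp)
      simp only [ssums, List.mem_cons, List.mem_map] at hc
      rcases hc with rfl | ⟨c', hc', rfl⟩
      · by_cases hσ : σ.1 = 0
        · have hlt' : (0:ℕ) < lenSum t := by omega
          obtain ⟨c', hc', h1, h2⟩ := ih (fun τ hτ => hk τ (by simp [hτ])) 0 (ssums_zero t) hlt'
          refine ⟨σ.1 + c', ?_, by omega, by omega⟩
          simp only [ssums, List.mem_cons, List.mem_map]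
          exact Or.inr ⟨c', hc', rfl⟩
        · refine ⟨σ.1 + 0, ?_, by omega, by omega⟩
          simp only [ssums, List.mem_cons, List.mem_map]
          exact Or.inr ⟨0, ssums_zero t, rfl⟩
      · have hlt' : c' < lenSum t := by omega
        obtain ⟨c'', hc'', h1, h2⟩ := ih (fun τ hτ => hk τ (by simp [hτ])) c' hc' hlt'
        refine ⟨σ.1 + c'', ?_, by omega, by omega⟩
        simp only [ssums, List.mem_cons, List.mem_map]
        exact Or.inr ⟨c'', hc'', rfl⟩

lemma up_iff (l : List PermSeq) :
    ∀ c ∈ ssums l, ∀ i : Fin (listOplus l).1,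
      ((i : ℕ) < c ↔ ((listOplus l).2 i : ℕ) < c) := by
  induction l with
  | nil => intro c hc i; exact absurd i.isLt (by change ¬ (i:ℕ) < 0; omega)
  | cons σ t ih =>
      intro c hc i
      simp only [ssums, List.mem_cons, List.mem_map] at hc
      rcases hc with rfl | ⟨c', hc', rfl⟩
      · simp
      · -- i : Fin (σ.1 + (listOplus t).1)
        refine Fin.addCases ?_ ?_ i
        · intro i'
          show ((Fin.castAdd (listOplus t).1 i' : Fin (σ.1 + (listOplus t).1)) : ℕ) < σ.1 + c' ↔
            (((listOplus (σ :: t)).2 (Fin.castAdd (listOplus t).1 i')) : ℕ) < σ.1 + c'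
          have h1 : ((Fin.castAdd (listOplus t).1 i' : Fin (σ.1 + (listOplus t).1)) : ℕ) = i' :=
            rfl
          have h2 : (((listOplus (σ :: t)).2 (Fin.castAdd (listOplus t).1 i')) : ℕ)
              = (σ.2 i' : ℕ) := by
            show ((permOplus σ.2 (listOplus t).2 (Fin.castAdd (listOplus t).1 i')) : ℕ) = _
            rw [permOplus_castAdd]
            rfl
          rw [h1, h2]
          have hlt1 : (i' : ℕ) < σ.1 := i'.isLt
          have hlt2 : (σ.2 i' : ℕ) < σ.1 := (σ.2 i').isLt
          constructor <;> intro <;> omega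
        · intro j
          show ((Fin.natAdd σ.1 j : Fin (σ.1 + (listOplus t).1)) : ℕ) < σ.1 + c' ↔
            (((listOplus (σ :: t)).2 (Fin.natAdd σ.1 j)) : ℕ) < σ.1 + c'
          have h1 : ((Fin.natAdd σ.1 j : Fin (σ.1 + (listOplus t).1)) : ℕ) = σ.1 + j := rfl
          have h2 : (((listOplus (σ :: t)).2 (Fin.natAdd σ.1 j)) : ℕ)
              = σ.1 + ((listOplus t).2 j : ℕ) := by
            show ((permOplus σ.2 (listOplus t).2 (Fin.natAdd σ.1 j)) : ℕ) = _
            exact congrArg Fin.val (permOplus_natAdd σ.2 (listOplus t).2 j)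
          rw [h1, h2]
          have := ih c' hc' j
          constructor <;> intro <;> omega

lemma dn_iff (l : List PermSeq) :
    ∀ c ∈ ssums l, ∀ i : Fin (listOminus l).1,
      ((i : ℕ) < c ↔ lenSum l ≤ ((listOminus l).2 i : ℕ) + c) := by
  induction l with
  | nil => intro c hc i; exact absurd i.isLt (by change ¬ (i:ℕ) < 0; omega)
  | cons σ t ih =>
      intro c hc i
      have hl : lenSum (σ :: t) = σ.1 + lenSum t := rfl
      have hfst : (listOminus t).1 = lenSum t := listOminus_fst t
      simp only [ssums, List.mem_cons, List.mem_map] at hc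
      rcases hc with rfl | ⟨c', hc', rfl⟩
      · have hv : ((listOminus (σ :: t)).2 i : ℕ) < lenSum (σ :: t) := by
          have h := ((listOminus (σ :: t)).2 i).isLt
          have h2 := listOminus_fst (σ :: t)
          omega
        constructor <;> intro <;> omega
      · have hc'le : c' ≤ lenSum t := ssums_le t c' hc'
        refine Fin.addCases ?_ ?_ i
        · intro i'
          show ((Fin.castAdd (listOminus t).1 i' : Fin (σ.1 + (listOminus t).1)) : ℕ) < σ.1 + c' ↔
            lenSum (σ :: t) ≤
              (((listOminus (σ :: t)).2 (Fin.castAdd (listOminus t).1 i')) : ℕ) + (σ.1 + c')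
          have h2 : (((listOminus (σ :: t)).2 (Fin.castAdd (listOminus t).1 i')) : ℕ)
              = (listOminus t).1 + (σ.2 i' : ℕ) := by
            show ((permOminus σ.2 (listOminus t).2 (Fin.castAdd (listOminus t).1 i')) : ℕ) = _
            rw [permOminus_castAdd_val]
          have h1 : ((Fin.castAdd (listOminus t).1 i' : Fin (σ.1 + (listOminus t).1)) : ℕ)
              = (i' : ℕ) := rfl
          rw [h1, h2, hfst, hl]
          have hlt1 : (i' : ℕ) < σ.1 := i'.isLt
          constructor <;> intro <;> omega
        · intro j
          show ((Fin.natAdd σ.1 j : Fin (σ.1 + (listOminus t).1)) : ℕ) < σ.1 + c' ↔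
            lenSum (σ :: t) ≤ (((listOminus (σ :: t)).2 (Fin.natAdd σ.1 j)) : ℕ) + (σ.1 + c')
          have h2 : (((listOminus (σ :: t)).2 (Fin.natAdd σ.1 j)) : ℕ)
              = ((listOminus t).2 j : ℕ) := by
            show ((permOminus σ.2 (listOminus t).2 (Fin.natAdd σ.1 j)) : ℕ) = _
            exact permOminus_natAdd_val σ.2 (listOminus t).2 j
          have h1 : ((Fin.natAdd σ.1 j : Fin (σ.1 + (listOminus t).1)) : ℕ) = σ.1 + j := rfl
          rw [h1, h2, hl]
          have := ih c' hc' j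
          constructor <;> intro <;> omega

end IPRaux

namespace IPRaux

lemma extract {n k : ℕ} (π : Equiv.Perm (Fin n)) (hH : HUp k ⟨n, π⟩ ∨ HDown k ⟨n, π⟩) :
    ∃ B : Finset ℕ, 0 ∈ B ∧ n ∈ B ∧ (∀ b ∈ B, b ≤ n) ∧
      (∀ a ∈ B, a < n → ∃ b ∈ B, a < b ∧ b ≤ a + (k-1)) ∧
      ((∀ c ∈ B, ∀ i : Fin n, ((i:ℕ) < c ↔ ((π i : ℕ) < c))) ∨
       (∀ c ∈ B, ∀ i : Fin n, ((i:ℕ) < c ↔ n ≤ (π i : ℕ) + c))) := by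
  rcases hH with ⟨l, hbl, heq⟩ | ⟨l, hbl, heq⟩
  · have hfst : n = lenSum l := by
      have := congrArg Sigma.fst heq
      simpa [listOplus_fst] using this
    refine ⟨(ssums l).toFinset, ?_, ?_, ?_, ?_, Or.inl ?_⟩
    · exact List.mem_toFinset.2 (ssums_zero l)
    · rw [hfst]; exact List.mem_toFinset.2 (ssums_top l)
    · intro b hb; rw [hfst]; exact ssums_le l b (List.mem_toFinset.1 hb)
    · intro a ha hlt
      obtain ⟨c', hc', h1, h2⟩ := ssums_gap l (fun σ hσ => (hbl σ hσ).2) a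
        (List.mem_toFinset.1 ha) (by omega)
      exact ⟨c', List.mem_toFinset.2 hc', h1, h2⟩
    · intro c hc i
      have H := up_iff l c (List.mem_toFinset.1 hc)
      -- transport along heq
      rcases hp : listOplus l with ⟨N, ρ⟩
      rw [hp] at heq H
      have hnN : n = N := congrArg Sigma.fst heq
      subst hnN
      have heq' : (⟨n, π⟩ : Σ m : ℕ, Equiv.Perm (Fin m)) = ⟨n, ρ⟩ := heq
      injection heq' with h1 h2
      have hπρ : π = ρ := h2
      subst hπρ
      exact H i
  · have hfst : n = lenSum l := by
      have := congrArg Sigma.fst heq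
      simpa [listOminus_fst] using this
    refine ⟨(ssums l).toFinset, ?_, ?_, ?_, ?_, Or.inr ?_⟩
    · exact List.mem_toFinset.2 (ssums_zero l)
    · rw [hfst]; exact List.mem_toFinset.2 (ssums_top l)
    · intro b hb; rw [hfst]; exact ssums_le l b (List.mem_toFinset.1 hb)
    · intro a ha hlt
      obtain ⟨c', hc', h1, h2⟩ := ssums_gap l (fun σ hσ => (hbl σ hσ).2) a
        (List.mem_toFinset.1 ha) (by omega)
      exact ⟨c', List.mem_toFinset.2 hc', h1, h2⟩
    · intro c hc i
      have H := dn_iff l c (List.mem_toFinset.1 hc)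
      rcases hp : listOminus l with ⟨N, ρ⟩
      rw [hp] at heq H
      have hnN : n = N := congrArg Sigma.fst heq
      subst hnN
      have heq' : (⟨n, π⟩ : Σ m : ℕ, Equiv.Perm (Fin m)) = ⟨n, ρ⟩ := heq
      injection heq' with h1 h2
      have hπρ : π = ρ := h2
      subst hπρ
      have hHi : ((i:ℕ) < c ↔ lenSum l ≤ (π i : ℕ) + c) := H i
      omega

lemma gap_down {k n : ℕ} {B : Finset ℕ} (hB0 : 0 ∈ B) (hBle : ∀ b ∈ B, b ≤ n)
    (hgap : ∀ a ∈ B, a < n → ∃ b ∈ B, a < b ∧ b ≤ a + (k-1)) :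
    ∀ b ∈ B, 0 < b → ∃ b2 ∈ B, b2 < b ∧ b ≤ b2 + (k-1) := by
  intro b hb hb0
  have hne : (B.filter (· ≤ b - 1)).Nonempty := ⟨0, Finset.mem_filter.2 ⟨hB0, by omega⟩⟩
  set m := (B.filter (· ≤ b - 1)).max' hne with hm
  have hmmem := Finset.max'_mem (B.filter (· ≤ b - 1)) hne
  have hmB : m ∈ B := (Finset.mem_filter.1 hmmem).1
  have hmle : m ≤ b - 1 := (Finset.mem_filter.1 hmmem).2
  have hmn : m < n := by have := hBle b hb; omega
  obtain ⟨b3, hb3B, h1, h2⟩ := hgap m hmB hmn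
  have hb3 : b ≤ b3 := by
    by_contra hcon
    have : b3 ≤ m := Finset.le_max' _ _ (Finset.mem_filter.2 ⟨hb3B, by omega⟩)
    omega
  exact ⟨m, hmB, by omega, by omega⟩

lemma strictmono_fin_id {n : ℕ} (h : Fin n → ℕ)
    (hsm : ∀ i j : Fin n, i < j → h i < h j) (hlt : ∀ i, h i < n) :
    ∀ i, h i = (i : ℕ) := by
  have hstep : ∀ (d : ℕ) (i j : Fin n), (j:ℕ) = (i:ℕ) + d → h i + d ≤ h j := by
    intro d
    induction d with
    | zero =>
        intro i j hj
        have hji : j = i := Fin.ext (by omega)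
        subst hji
        omega
    | succ d ih =>
        intro i j hj
        have hlt' : (i:ℕ) + d < n := by have := j.isLt; omega
        have h1 := ih i ⟨(i:ℕ)+d, hlt'⟩ rfl
        have h2 : h ⟨(i:ℕ)+d, hlt'⟩ < h j := by
          apply hsm
          show (i:ℕ) + d < (j:ℕ)
          omega
        omega
  intro i
  have hnpos : 0 < n := i.pos
  have hlb := hstep (i:ℕ) ⟨0, hnpos⟩ i (by show (i:ℕ) = 0 + (i:ℕ); omega)
  have hub := hstep (n-1-(i:ℕ)) i ⟨n-1, by omega⟩
    (by show n-1 = (i:ℕ) + (n-1-(i:ℕ)); have := i.isLt; omega)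
  have hl := hlt ⟨n-1, by omega⟩
  have := i.isLt
  omega

end IPRaux

namespace IPRaux

lemma image_seg {n : ℕ} {X Y : Finset ℕ} (hX : X.card = n)
    {f : ℕ → ℕ} (hf : Set.BijOn f ↑X ↑Y) (π : Equiv.Perm (Fin n))
    (hkey : ∀ i : Fin n, ind Y (f ((X.orderIsoOfFin hX i : ℕ))) = (π i : ℕ))
    {d d' a a' : ℕ}
    (H : ∀ i : Fin n, ((d ≤ (i:ℕ) ∧ (i:ℕ) < d') ↔ (a ≤ (π i : ℕ) ∧ (π i : ℕ) < a'))) :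
    (seg X d d').image f = seg Y a a' := by
  ext y
  simp only [Finset.mem_image]
  constructor
  · rintro ⟨x, hxseg, rfl⟩
    rw [mem_seg] at hxseg
    obtain ⟨hxX, hil, hiu⟩ := hxseg
    have hlt : ind X x < n := by rw [← hX]; exact ind_lt_card X hxX
    have hex : (X.orderIsoOfFin hX ⟨ind X x, hlt⟩ : ℕ) = x := orderIso_ind X hX hxX hlt
    have hkey' : ind Y (f x) = (π ⟨ind X x, hlt⟩ : ℕ) := by
      have h3 := hkey ⟨ind X x, hlt⟩
      rwa [hex] at h3
    have hfY : f x ∈ Y := hf.mapsTo (Finset.mem_coe.2 hxX)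
    have hHi := (H ⟨ind X x, hlt⟩).1 ⟨hil, hiu⟩
    exact mem_seg.2 ⟨hfY, by omega, by omega⟩
  · intro hy
    rw [mem_seg] at hy
    obtain ⟨hyY, hal, hau⟩ := hy
    obtain ⟨x, hxX', hfx⟩ := hf.surjOn (Finset.mem_coe.2 hyY)
    have hxX : x ∈ X := hxX'
    have hlt : ind X x < n := by rw [← hX]; exact ind_lt_card X hxX
    have hex : (X.orderIsoOfFin hX ⟨ind X x, hlt⟩ : ℕ) = x := orderIso_ind X hX hxX hlt
    have hkey' : ind Y y = (π ⟨ind X x, hlt⟩ : ℕ) := by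
      have h3 := hkey ⟨ind X x, hlt⟩
      rwa [hex, hfx] at h3
    have hHi := (H ⟨ind X x, hlt⟩).2 ⟨by omega, by omega⟩
    refine ⟨x, mem_seg.2 ⟨hxX, hHi.1, hHi.2⟩, hfx⟩

lemma preimage_seg {n : ℕ} {X Y : Finset ℕ} (hX : X.card = n)
    {f : ℕ → ℕ} (hf : Set.BijOn f ↑X ↑Y) (π : Equiv.Perm (Fin n))
    (hkey : ∀ i : Fin n, ind Y (f ((X.orderIsoOfFin hX i : ℕ))) = (π i : ℕ))
    {d d' a a' : ℕ}
    (H : ∀ i : Fin n, ((a ≤ (i:ℕ) ∧ (i:ℕ) < a') ↔ (d ≤ (π i : ℕ) ∧ (π i : ℕ) < d'))) :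
    X.filter (fun x => f x ∈ seg Y d d') = seg X a a' := by
  ext x
  constructor
  · intro hx
    obtain ⟨hxX, hfseg⟩ := Finset.mem_filter.1 hx
    obtain ⟨hfY, h1, h2⟩ := mem_seg.1 hfseg
    have hlt : ind X x < n := by rw [← hX]; exact ind_lt_card X hxX
    have hex : (X.orderIsoOfFin hX ⟨ind X x, hlt⟩ : ℕ) = x := orderIso_ind X hX hxX hlt
    have hkey' : ind Y (f x) = (π ⟨ind X x, hlt⟩ : ℕ) := by
      have h3 := hkey ⟨ind X x, hlt⟩
      rwa [hex] at h3
    have hHi := (H ⟨ind X x, hlt⟩).2 ⟨by omega, by omega⟩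
    exact mem_seg.2 ⟨hxX, hHi.1, hHi.2⟩
  · intro hx
    obtain ⟨hxX, hal, hau⟩ := mem_seg.1 hx
    have hlt : ind X x < n := by rw [← hX]; exact ind_lt_card X hxX
    have hex : (X.orderIsoOfFin hX ⟨ind X x, hlt⟩ : ℕ) = x := orderIso_ind X hX hxX hlt
    have hkey' : ind Y (f x) = (π ⟨ind X x, hlt⟩ : ℕ) := by
      have h3 := hkey ⟨ind X x, hlt⟩
      rwa [hex] at h3
    have hfY : f x ∈ Y := hf.mapsTo (Finset.mem_coe.2 hxX)
    have hHi := (H ⟨ind X x, hlt⟩).1 ⟨hal, hau⟩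
    exact Finset.mem_filter.2 ⟨hxX, mem_seg.2 ⟨hfY, by omega, by omega⟩⟩

end IPRaux
/-- Refinement lemma: if `f : X → Y` is a bijection between `n`-element subsets of `ℕ`
whose order-isomorphic permutation `π` lies in `H_k^+ ∪ H_k^-`, then every partition of `X`
into `r` intervals can be refined into at most `r + (k-1)(r-1)` intervals whose images under
`f` are intervals in `Y`, and every partition of `Y` into `r` intervals can be refined into
at most `r + (k-1)(r-1)` intervals whose preimages under `f` are intervals in `X`. -/
theorem interval_partition_refinement (n k : ℕ) (X Y : Finset ℕ)
    (hX : X.card = n) (hY : Y.card = n) (f : ℕ → ℕ) (hf : Set.BijOn f ↑X ↑Y)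
    (π : Equiv.Perm (Fin n))
    (hπ : ∀ i j : Fin n, π i < π j ↔ f ((X.orderIsoOfFin hX) i : ℕ) <
      f ((X.orderIsoOfFin hX) j : ℕ))
    (hH : HUp k ⟨n, π⟩ ∨ HDown k ⟨n, π⟩) :
    (∀ L : List (Finset ℕ), IsIntervalPartition X L →
      ∃ L' : List (Finset ℕ), IsIntervalPartition X L' ∧
        (∀ I ∈ L', ∃ J ∈ L, I ⊆ J) ∧
        L'.length ≤ L.length + (k - 1) * (L.length - 1) ∧
        ∀ I ∈ L', IsIntervalIn (I.image f) Y) ∧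
    (∀ L : List (Finset ℕ), IsIntervalPartition Y L →
      ∃ L' : List (Finset ℕ), IsIntervalPartition Y L' ∧
        (∀ I ∈ L', ∃ J ∈ L, I ⊆ J) ∧
        L'.length ≤ L.length + (k - 1) * (L.length - 1) ∧
        ∀ I ∈ L', IsIntervalIn (X.filter fun x => f x ∈ I) X) := by
  classical
  obtain ⟨B, hB0, hBn, hBle, hgap, hiff⟩ := IPRaux.extract π hH
  -- the key compatibility between f and π
  have hkey : ∀ i : Fin n, IPRaux.ind Y (f ((X.orderIsoOfFin hX i : ℕ))) = (π i : ℕ) := by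
    have hmemY : ∀ i : Fin n, f ((X.orderIsoOfFin hX i : ℕ)) ∈ Y := fun i =>
      hf.mapsTo (Finset.mem_coe.2 (X.orderIsoOfFin hX i).2)
    have hsm : ∀ i j : Fin n, i < j →
        IPRaux.ind Y (f ((X.orderIsoOfFin hX (π.symm i) : ℕ))) <
          IPRaux.ind Y (f ((X.orderIsoOfFin hX (π.symm j) : ℕ))) := by
      intro i j hij
      apply IPRaux.ind_strict Y (hmemY _)
      apply (hπ (π.symm i) (π.symm j)).1
      rw [Equiv.apply_symm_apply, Equiv.apply_symm_apply]
      exact hij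
    have hltn : ∀ i : Fin n, IPRaux.ind Y (f ((X.orderIsoOfFin hX (π.symm i) : ℕ))) < n := by
      intro i
      have h2 := IPRaux.ind_lt_card Y (hmemY (π.symm i))
      omega
    have hid := IPRaux.strictmono_fin_id _ hsm hltn
    intro i
    have h2 := hid (π i)
    rwa [Equiv.symm_apply_apply] at h2
  constructor
  · -- X side
    intro L hL
    apply IPRaux.assembly hX hB0 hBn hgap (fun I => IsIntervalIn (I.image f) Y) ?_ ?_ L hL
    · -- hG1
      intro d d' hd hd'
      rcases hiff with hup | hdn
      · rw [IPRaux.image_seg hX hf π hkey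
          (d := d) (d' := d') (a := d) (a' := d') ?_]
        · exact IPRaux.seg_isInterval Y d d'
        · intro i
          have h1 := hup d hd i
          have h2 := hup d' hd' i
          omega
      · rw [IPRaux.image_seg hX hf π hkey
          (d := d) (d' := d') (a := n - d') (a' := n - d) ?_]
        · exact IPRaux.seg_isInterval Y _ _
        · intro i
          have h1 := hdn d hd i
          have h2 := hdn d' hd' i
          have h3 := hBle d hd
          have h4 := hBle d' hd'
          have h5 := (π i).isLt
          omega
    · -- hG2 : singletons
      intro d
      apply IPRaux.subsingleton_isInterval
      · intro y hy
        obtain ⟨x, hx, rfl⟩ := Finset.mem_image.1 hy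
        exact hf.mapsTo (Finset.mem_coe.2 (IPRaux.seg_subset X _ _ hx))
      · intro y1 h1 y2 h2
        obtain ⟨x1, hx1, rfl⟩ := Finset.mem_image.1 h1
        obtain ⟨x2, hx2, rfl⟩ := Finset.mem_image.1 h2
        exact congrArg f (IPRaux.seg_succ_subsingleton X d x1 hx1 x2 hx2)
  · -- Y side
    intro L hL
    have hG2Y : ∀ d, IsIntervalIn (X.filter fun x => f x ∈ IPRaux.seg Y d (d+1)) X := by
      intro d
      apply IPRaux.subsingleton_isInterval (Finset.filter_subset _ _)
      intro x1 h1 x2 h2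
      obtain ⟨hx1X, hf1⟩ := Finset.mem_filter.1 h1
      obtain ⟨hx2X, hf2⟩ := Finset.mem_filter.1 h2
      exact hf.injOn (Finset.mem_coe.2 hx1X) (Finset.mem_coe.2 hx2X)
        (IPRaux.seg_succ_subsingleton Y d _ hf1 _ hf2)
    rcases hiff with hup | hdn
    · apply IPRaux.assembly hY hB0 hBn hgap
        (fun I => IsIntervalIn (X.filter fun x => f x ∈ I) X) ?_ hG2Y L hL
      intro d d' hd hd'
      rw [IPRaux.preimage_seg hX hf π hkey (d := d) (d' := d') (a := d) (a' := d') ?_]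
      · exact IPRaux.seg_isInterval X d d'
      · intro i
        have h1 := hup d hd i
        have h2 := hup d' hd' i
        omega
    · -- flipped case: use the reflected cut set for Y
      have hB'0 : (0:ℕ) ∈ B.image (fun b => n - b) :=
        Finset.mem_image.2 ⟨n, hBn, by omega⟩
      have hB'n : n ∈ B.image (fun b => n - b) :=
        Finset.mem_image.2 ⟨0, hB0, by omega⟩
      have hgap' : ∀ a ∈ B.image (fun b => n - b), a < n →
          ∃ b ∈ B.image (fun b => n - b), a < b ∧ b ≤ a + (k-1) := by
        intro a ha hlt
        obtain ⟨b, hbB, rfl⟩ := Finset.mem_image.1 ha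
        have hbn : b ≤ n := hBle b hbB
        have hb0 : 0 < b := by omega
        obtain ⟨b2, hb2B, h1, h2⟩ := IPRaux.gap_down hB0 hBle hgap b hbB hb0
        have hb2n : b2 ≤ n := hBle b2 hb2B
        exact ⟨n - b2, Finset.mem_image.2 ⟨b2, hb2B, rfl⟩, by omega, by omega⟩
      apply IPRaux.assembly hY hB'0 hB'n hgap'
        (fun I => IsIntervalIn (X.filter fun x => f x ∈ I) X) ?_ hG2Y L hL
      intro d d' hd hd'
      obtain ⟨b, hbB, rfl⟩ := Finset.mem_image.1 hd
      obtain ⟨b', hb'B, rfl⟩ := Finset.mem_image.1 hd'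
      rw [IPRaux.preimage_seg hX hf π hkey
        (d := n - b) (d' := n - b') (a := b') (a' := b) ?_]
      · exact IPRaux.seg_isInterval X _ _
      · intro i
        have h1 := hdn b hbB i
        have h2 := hdn b' hb'B i
        have h3 := hBle b hbB
        have h4 := hBle b' hb'B
        have h5 := (π i).isLt
        have h6 := i.isLt
        omega
end

section
/- Let P and Q be sets of finite permutations such that P is finite and (Q, ≺) is a well partial order. Then (P[Q], ≺) is a well partial order, where P[Q] = {π[σ_1,...,σ_m] : m ≥ 1, π ∈ P ∩ S_m, σ_1,...,σ_m ∈ Q}. -/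
/-- `(s, ≺)` is a well partial order: it has no infinite strictly descending chains and
no infinite antichains. -/
def IsWpoOn (s : Set PermSeq) : Prop :=
  (¬ ∃ f : ℕ → PermSeq, (∀ i, f i ∈ s) ∧
      ∀ i, PermLE (f (i + 1)) (f i) ∧ f (i + 1) ≠ f i) ∧
  (¬ ∃ f : ℕ → PermSeq, (∀ i, f i ∈ s) ∧ ∀ i j, i ≠ j → ¬ PermLE (f i) (f j))

/-- The permutation order-isomorphic to a given sequence of (distinct) natural numbers,
presented as a list (one-line notation). -/
noncomputable def ofList (l : List ℕ) : PermSeq := ⟨l.length, (Tuple.sort l.get)⁻¹⟩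

/-- One-line notation of the inflation `π[τ_1,…,τ_m]`: for each position `i` of `π` (from
the left) we write down the values of the block `τ_i`, shifted up by the total size of all
blocks `τ_{i'}` with `π i' < π i`; the `i`-th point of the graph of `π` is thus replaced by
a downsized copy of the graph of `τ_i`. -/
def inflateList {m : ℕ} (π : Equiv.Perm (Fin m)) (τ : Fin m → PermSeq) : List ℕ :=
  (List.finRange m).flatMap fun i =>
    (List.finRange (τ i).1).map fun j =>
      (∑ i' ∈ Finset.univ.filter fun i' : Fin m => π i' < π i, (τ i').1) + ((τ i).2 j).val + 1

/-- The inflation `π[τ_1,…,τ_m]`. -/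
noncomputable def inflate {m : ℕ} (π : Equiv.Perm (Fin m)) (τ : Fin m → PermSeq) : PermSeq :=
  ofList (inflateList π τ)

/-- `P[Q] = {π[σ_1,…,σ_m] : m ≥ 1, π ∈ P ∩ S_m, σ_i ∈ Q}`. -/
noncomputable def inflateSet (P Q : Set PermSeq) : Set PermSeq :=
  {ρ | ∃ m : ℕ, 1 ≤ m ∧ ∃ π : Equiv.Perm (Fin m), (⟨m, π⟩ : PermSeq) ∈ P ∧
        ∃ τ : Fin m → PermSeq, (∀ i, τ i ∈ Q) ∧ ρ = inflate π τ}

/-! ### Auxiliary lemmas -/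

section Aux

open Set List

lemma permLE_refl (σ : PermSeq) : PermLE σ σ :=
  ⟨id, strictMono_id, fun _ _ => Iff.rfl⟩

lemma permLE_trans_s7 {σ τ ρ : PermSeq} (h₁ : PermLE σ τ) (h₂ : PermLE τ ρ) : PermLE σ ρ := by
  obtain ⟨f, hf, hfv⟩ := h₁
  obtain ⟨g, hg, hgv⟩ := h₂
  exact ⟨g ∘ f, hg.comp hf, fun i j => (hfv i j).trans (hgv (f i) (f j))⟩

lemma finStrictMono_le_apply {n : ℕ} {f : Fin n → Fin n} (hf : StrictMono f) :
    ∀ i, i ≤ f i := by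
  have key : ∀ k : ℕ, ∀ i : Fin n, i.val ≤ k → i ≤ f i := by
    intro k
    induction k with
    | zero =>
      intro i hi
      by_contra h
      push_neg at h
      have := Fin.lt_iff_val_lt_val.mp h
      omega
    | succ k ih =>
      intro i hi
      by_contra h
      push_neg at h
      have hfi : (f i).val < i.val := Fin.lt_iff_val_lt_val.mp h
      have h1 : f i ≤ f (f i) := ih (f i) (by omega)
      have h2 : f (f i) < f i := hf h
      exact absurd h1 (not_le.mpr h2)
  exact fun i => key i.val i le_rfl

lemma finStrictMono_id {n : ℕ} {f : Fin n → Fin n} (hf : StrictMono f) : ∀ i, f i = i := by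
  have hbij : Function.Bijective f := ⟨hf.injective, Finite.surjective_of_injective hf.injective⟩
  set e := Equiv.ofBijective f hbij with he
  have happ : ∀ x, e x = f x := fun x => rfl
  have hfsymm : ∀ x, f (e.symm x) = x := fun x => e.apply_symm_apply x
  have hsymm : StrictMono ⇑e.symm := by
    intro a b hab
    rcases lt_trichotomy (e.symm a) (e.symm b) with h | h | h
    · exact h
    · exact absurd (by rw [← hfsymm a, ← hfsymm b, h]) hab.ne
    · have := hf h
      rw [hfsymm, hfsymm] at this
      exact absurd hab (not_lt.mpr this.le)
  intro i
  have h1 := finStrictMono_le_apply hf i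
  have h2 := finStrictMono_le_apply hsymm (f i)
  have h3 : e.symm (f i) = i := e.symm_apply_apply i
  rw [h3] at h2
  exact le_antisymm h2 h1

lemma permLE_antisymm {σ τ : PermSeq} (h₁ : PermLE σ τ) (h₂ : PermLE τ σ) : σ = τ := by
  obtain ⟨m, π⟩ := σ
  obtain ⟨n, ρ⟩ := τ
  obtain ⟨f, hf, hfv⟩ := h₁
  obtain ⟨g, hg, -⟩ := h₂
  have hmn : m = n := le_antisymm
    (by simpa using Fintype.card_le_of_injective f hf.injective)
    (by simpa using Fintype.card_le_of_injective g hg.injective)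
  subst hmn
  have hfid : ∀ i, f i = i := finStrictMono_id hf
  have key : ∀ i j : Fin m, π i < π j ↔ ρ i < ρ j := by
    intro i j
    have := hfv i j
    rwa [hfid i, hfid j] at this
  have hsm : StrictMono fun k => ρ (π.symm k) := by
    intro k k' hkk'
    have : π (π.symm k) < π (π.symm k') := by simpa using hkk'
    exact (key _ _).1 this
  have : ∀ k, ρ (π.symm k) = k := finStrictMono_id hsm
  have hπρ : π = ρ := by
    ext i
    have h2 := this (π i)
    rw [Equiv.symm_apply_apply] at h2
    exact congrArg Fin.val h2.symm
  rw [hπρ]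

lemma isWpoOn_of_pwo {s : Set PermSeq} (h : s.PartiallyWellOrderedOn PermLE) : IsWpoOn s := by
  constructor
  · rintro ⟨f, hmem, hdesc⟩
    obtain ⟨a, b, hab, hle⟩ := (partiallyWellOrderedOn_iff_exists_lt.mp h) f hmem
    -- chain: f b ≤ f (a+1)
    have chain : ∀ c d : ℕ, c ≤ d → PermLE (f d) (f c) := by
      intro c d hcd
      induction d with
      | zero => simpa [Nat.le_zero.mp hcd] using permLE_refl (f 0)
      | succ d ih =>
        rcases Nat.lt_or_ge c (d+1) with h' | h'
        · exact permLE_trans_s7 (hdesc d).1 (ih (Nat.lt_succ_iff.mp h'))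
        · have : c = d + 1 := le_antisymm hcd h'
          simpa [this] using permLE_refl (f (d+1))
    have h1 : PermLE (f a) (f (a+1)) := permLE_trans_s7 hle (chain (a+1) b hab)
    have h2 : PermLE (f (a+1)) (f a) := (hdesc a).1
    exact (hdesc a).2 (permLE_antisymm h2 h1)
  · rintro ⟨f, hmem, hanti⟩
    obtain ⟨a, b, hab, hle⟩ := (partiallyWellOrderedOn_iff_exists_lt.mp h) f hmem
    exact hanti a b hab.ne hle

lemma pwo_of_isWpoOn {s : Set PermSeq} (h : IsWpoOn s) :
    s.PartiallyWellOrderedOn PermLE := by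
  rw [partiallyWellOrderedOn_iff_exists_lt]
  intro f hmem
  by_contra hbad
  push_neg at hbad
  obtain ⟨g, hg | hg⟩ := exists_increasing_or_nonincreasing_subseq'
    (fun a b => PermLE b a) f
  · refine h.1 ⟨f ∘ g, fun i => hmem _, fun i => ⟨hg i, fun heq => ?_⟩⟩
    have heq' : f (g (i+1)) = f (g i) := heq
    refine hbad (g i) (g (i+1)) (g.strictMono (Nat.lt_succ_self i)) ?_
    rw [heq']
    exact permLE_refl _
  · refine h.2 ⟨f ∘ g, fun i => hmem _, fun i j hij => ?_⟩
    rcases hij.lt_or_gt with h' | h'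
    · exact hbad (g i) (g j) (g.strictMono h')
    · exact hg j i h'

/-! ### Rank lemma for `ofList` -/

lemma ofList_snd_lt_iff {l : List ℕ} (hl : Function.Injective l.get)
    (i j : Fin l.length) :
    (Tuple.sort l.get)⁻¹ i < (Tuple.sort l.get)⁻¹ j ↔ l.get i < l.get j := by
  set σ := Tuple.sort l.get with hσ
  have hs : StrictMono (l.get ∘ σ) :=
    (Tuple.monotone_sort l.get).strictMono_of_injective (hl.comp σ.injective)
  have key : ∀ k, l.get k = (l.get ∘ σ) (σ⁻¹ k) := by
    intro k; simp
  rw [key i, key j, hs.lt_iff_lt]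

/-- Containment of permutations, via their one-line lists. -/
lemma ofList_permLE {l l' : List ℕ} (hl : Function.Injective l.get)
    (hl' : Function.Injective l'.get)
    (f : Fin l.length → Fin l'.length) (hf : StrictMono f)
    (hval : ∀ i j, l.get i < l.get j ↔ l'.get (f i) < l'.get (f j)) :
    PermLE (ofList l) (ofList l') := by
  refine ⟨f, hf, fun i j => ?_⟩
  show (Tuple.sort l.get)⁻¹ i < (Tuple.sort l.get)⁻¹ j ↔
    (Tuple.sort l'.get)⁻¹ (f i) < (Tuple.sort l'.get)⁻¹ (f j)
  exact (ofList_snd_lt_iff hl i j).trans ((hval i j).trans (ofList_snd_lt_iff hl' (f i) (f j)).symm)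

/-! ### Positions in a `flatMap` -/

variable {α : Type*}

/-- Offset of the `k`-th block inside `L.flatMap G`. -/
def offL (L : List α) (G : α → List ℕ) (k : ℕ) : ℕ := ((L.take k).flatMap G).length

lemma offL_succ (L : List α) (G : α → List ℕ) {k : ℕ} (hk : k < L.length) :
    offL L G (k+1) = offL L G k + (G L[k]).length := by
  unfold offL
  rw [List.take_succ, List.getElem?_eq_getElem hk, Option.toList_some, List.flatMap_append,
    List.length_append, List.flatMap_cons, List.flatMap_nil, List.append_nil]

lemma offL_mono (L : List α) (G : α → List ℕ) : Monotone (offL L G) := by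
  apply monotone_nat_of_le_succ
  intro k
  rcases Nat.lt_or_ge k L.length with hk | hk
  · rw [offL_succ L G hk]; omega
  · unfold offL
    rw [List.take_of_length_le hk, List.take_of_length_le (by omega)]

lemma flatMap_decomp (L : List α) (G : α → List ℕ) {k : ℕ} (hk : k < L.length) :
    L.flatMap G = (L.take k).flatMap G ++ (G L[k] ++ (L.drop (k+1)).flatMap G) := by
  conv_lhs => rw [← List.take_append_drop k L]
  rw [List.flatMap_append, List.drop_eq_getElem_cons hk, List.flatMap_cons]

lemma encode_lt_length (L : List α) (G : α → List ℕ) {k j : ℕ} (hk : k < L.length)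
    (hj : j < (G L[k]).length) : offL L G k + j < (L.flatMap G).length := by
  rw [flatMap_decomp L G hk]
  simp only [List.length_append]
  unfold offL
  omega

lemma flatMap_getElem_encode (L : List α) (G : α → List ℕ) {k j : ℕ} (hk : k < L.length)
    (hj : j < (G L[k]).length) :
    (L.flatMap G)[offL L G k + j]'(encode_lt_length L G hk hj) = (G L[k])[j] := by
  have hd := flatMap_decomp L G hk
  rw [List.getElem_of_eq hd]
  rw [List.getElem_append_right (by unfold offL; omega)]
  have : offL L G k + j - ((L.take k).flatMap G).length = j := by unfold offL; omega
  simp_rw [this]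
  rw [List.getElem_append_left hj]

lemma encode_strict_lt (L : List α) (G : α → List ℕ) {k k' j j' : ℕ} (hk : k < L.length)
    (hj : j < (G L[k]).length) (hkk' : k < k') :
    offL L G k + j < offL L G k' + j' := by
  have h1 : offL L G k + j < offL L G (k+1) := by rw [offL_succ L G hk]; omega
  have h2 : offL L G (k+1) ≤ offL L G k' := offL_mono L G hkk'
  omega

lemma flatMap_index_decomp (L : List α) (G : α → List ℕ) :
    ∀ p : ℕ, p < (L.flatMap G).length →
      ∃ k j, ∃ (hk : k < L.length), j < (G L[k]).length ∧ p = offL L G k + j := by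
  induction L with
  | nil => intro p hp; simp at hp
  | cons a L ih =>
    intro p hp
    rw [List.flatMap_cons, List.length_append] at hp
    rcases Nat.lt_or_ge p (G a).length with h' | h'
    · exact ⟨0, p, Nat.succ_pos _, by simpa using h', by simp [offL]⟩
    · obtain ⟨k, j, hk, hj, henc⟩ := ih (p - (G a).length) (by omega)
      refine ⟨k+1, j, by simpa using Nat.succ_lt_succ hk, by simpa using hj, ?_⟩
      have : offL (a :: L) G (k+1) = (G a).length + offL L G k := by
        simp [offL, List.take_succ_cons]
      omega

end Aux

section Inflate

open List

variable {m : ℕ}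

/-- The `i`-th block of the inflation, as a list. -/
def blockG (π : Equiv.Perm (Fin m)) (τ : Fin m → PermSeq) (i : Fin m) : List ℕ :=
  (List.finRange (τ i).1).map fun j =>
    (∑ i' ∈ Finset.univ.filter fun i' : Fin m => π i' < π i, (τ i').1) + ((τ i).2 j).val + 1

/-- Shorthand for the shift of the `i`-th block. -/
def blockS (π : Equiv.Perm (Fin m)) (τ : Fin m → PermSeq) (i : Fin m) : ℕ :=
  ∑ i' ∈ Finset.univ.filter fun i' : Fin m => π i' < π i, (τ i').1

lemma inflateList_eq (π : Equiv.Perm (Fin m)) (τ : Fin m → PermSeq) :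
    inflateList π τ = (List.finRange m).flatMap (blockG π τ) := rfl

lemma blockG_length (π : Equiv.Perm (Fin m)) (τ : Fin m → PermSeq) (i : Fin m) :
    (blockG π τ i).length = (τ i).1 := by simp [blockG]

lemma finRange_getElem {k : ℕ} (h : k < (List.finRange m).length) :
    (List.finRange m)[k] = ⟨k, by simpa using h⟩ := by
  simp

lemma blockG_getElem (π : Equiv.Perm (Fin m)) (τ : Fin m → PermSeq) (i : Fin m)
    {j : ℕ} (hj : j < (τ i).1) :
    (blockG π τ i)[j]'(by simpa [blockG_length] using hj) =
      blockS π τ i + ((τ i).2 ⟨j, hj⟩).val + 1 := by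
  simp [blockG, blockS]

/-- Values in a lower block are strictly below values in a higher block. -/
lemma blockVal_lt (π : Equiv.Perm (Fin m)) (τ : Fin m → PermSeq) {i i' : Fin m}
    (h : π i < π i') {a : ℕ} (ha : a < (τ i).1) :
    blockS π τ i + a + 1 ≤ blockS π τ i' := by
  have hnot : i ∉ Finset.univ.filter fun x : Fin m => π x < π i := by simp
  have hins : insert i (Finset.univ.filter fun x : Fin m => π x < π i) ⊆
      Finset.univ.filter fun x : Fin m => π x < π i' := by
    intro x hx
    simp only [Finset.mem_insert, Finset.mem_filter, Finset.mem_univ, true_and] at hx ⊢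
    rcases hx with rfl | hx
    · exact h
    · exact hx.trans h
  have hsum : ∑ x ∈ insert i (Finset.univ.filter fun x : Fin m => π x < π i), (τ x).1 ≤
      blockS π τ i' := Finset.sum_le_sum_of_subset hins
  rw [Finset.sum_insert hnot] at hsum
  have hfi : blockS π τ i = ∑ x ∈ Finset.univ.filter fun x : Fin m => π x < π i, (τ x).1 := rfl
  omega

/-- Decomposition of a position in an inflated list, together with the value there. -/
lemma inflate_decomp (π : Equiv.Perm (Fin m)) (τ : Fin m → PermSeq) (p : ℕ)
    (hp : p < (inflateList π τ).length) :
    ∃ (k j : ℕ) (hk : k < m) (hj : j < (τ ⟨k, hk⟩).1),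
      p = offL (List.finRange m) (blockG π τ) k + j ∧
      (inflateList π τ)[p] = blockS π τ ⟨k, hk⟩ + ((τ ⟨k, hk⟩).2 ⟨j, hj⟩).val + 1 := by
  rw [inflateList_eq] at hp
  obtain ⟨k, j, hk, hj, henc⟩ := flatMap_index_decomp (List.finRange m) (blockG π τ) p hp
  have hk' : k < m := by simpa using hk
  rw [finRange_getElem hk, blockG_length] at hj
  refine ⟨k, j, hk', hj, henc, ?_⟩
  subst henc
  have hval := flatMap_getElem_encode (List.finRange m) (blockG π τ) hk
    (j := j) (by rw [finRange_getElem hk, blockG_length]; exact hj)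
  have hbl : blockG π τ ((List.finRange m)[k]) = blockG π τ ⟨k, hk'⟩ := by
    rw [finRange_getElem hk]
  refine hval.trans ?_
  rw [List.getElem_of_eq hbl, blockG_getElem π τ _ hj]

/-- The value of the inflated list at an encoded position. -/
lemma inflate_encode (π : Equiv.Perm (Fin m)) (τ : Fin m → PermSeq) {k j : ℕ}
    (hk : k < m) (hj : j < (τ ⟨k, hk⟩).1) :
    ∃ hb : offL (List.finRange m) (blockG π τ) k + j < (inflateList π τ).length,
      (inflateList π τ)[offL (List.finRange m) (blockG π τ) k + j]'hb =
        blockS π τ ⟨k, hk⟩ + ((τ ⟨k, hk⟩).2 ⟨j, hj⟩).val + 1 := by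
  have hk0 : k < (List.finRange m).length := by simpa using hk
  have hj0 : j < (blockG π τ ((List.finRange m)[k])).length := by
    rw [finRange_getElem hk0, blockG_length]; exact hj
  have hb := encode_lt_length (List.finRange m) (blockG π τ) hk0 hj0
  refine ⟨hb, ?_⟩
  have hval := flatMap_getElem_encode (List.finRange m) (blockG π τ) hk0 hj0
  have hbl : blockG π τ ((List.finRange m)[k]) = blockG π τ ⟨k, hk⟩ := by
    rw [finRange_getElem hk0]
  refine hval.trans ?_
  rw [List.getElem_of_eq hbl, blockG_getElem π τ _ hj]

lemma inflateList_get_injective (π : Equiv.Perm (Fin m)) (τ : Fin m → PermSeq) :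
    Function.Injective (inflateList π τ).get := by
  intro p q hpq
  obtain ⟨k, j, hk, hj, henc, hv⟩ := inflate_decomp π τ p.val p.isLt
  obtain ⟨k', j', hk', hj', henc', hv'⟩ := inflate_decomp π τ q.val q.isLt
  rw [List.get_eq_getElem, List.get_eq_getElem, hv, hv'] at hpq
  have hkk : k = k' := by
    by_contra hne
    have hπ : π ⟨k, hk⟩ ≠ π ⟨k', hk'⟩ := fun he => hne (by
      have h2 := π.injective he
      exact congrArg Fin.val h2)
    rcases hπ.lt_or_gt with h' | h'
    · have := blockVal_lt π τ h' (((τ ⟨k, hk⟩).2 ⟨j, hj⟩).isLt)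
      omega
    · have := blockVal_lt π τ h' (((τ ⟨k', hk'⟩).2 ⟨j', hj'⟩).isLt)
      omega
  subst hkk
  have hjj : j = j' := by
    have hvv : ((τ ⟨k, hk⟩).2 ⟨j, hj⟩).val = ((τ ⟨k, hk⟩).2 ⟨j', hj'⟩).val := by omega
    have := (τ ⟨k, hk⟩).2.injective (Fin.ext hvv)
    exact congrArg Fin.val this
  apply Fin.ext
  omega

end Inflate

section InflateMono

open List

variable {m : ℕ}

lemma inflate_permLE (π : Equiv.Perm (Fin m)) (τ τ' : Fin m → PermSeq)
    (h : ∀ i, PermLE (τ i) (τ' i)) : PermLE (inflate π τ) (inflate π τ') := by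
  classical
  have h' : ∀ i, ∃ f : Fin (τ i).1 → Fin (τ' i).1, StrictMono f ∧
      ∀ a b, (τ i).2 a < (τ i).2 b ↔ (τ' i).2 (f a) < (τ' i).2 (f b) := h
  choose g hg hgv using h'
  have gcongr : ∀ (i i' : Fin m) (_ : i = i') (j : ℕ) (hj : j < (τ i).1)
      (hj' : j < (τ i').1),
      ((τ' i).2 (g i ⟨j, hj⟩)).val = ((τ' i').2 (g i' ⟨j, hj'⟩)).val := by
    rintro i i' rfl j hj hj'; rfl
  have scongr : ∀ (i i' : Fin m) (_ : i = i') (j : ℕ) (hj : j < (τ i).1)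
      (hj' : j < (τ i').1),
      ((τ i).2 ⟨j, hj⟩).val = ((τ i').2 ⟨j, hj'⟩).val := by
    rintro i i' rfl j hj hj'; rfl
  have gvcongr : ∀ (i i' : Fin m) (_ : i = i') (j : ℕ) (hj : j < (τ i).1)
      (hj' : j < (τ i').1), (g i ⟨j, hj⟩).val = (g i' ⟨j, hj'⟩).val := by
    rintro i i' rfl j hj hj'; rfl
  set l := inflateList π τ with hl
  set l' := inflateList π τ' with hl'
  have hdec : ∀ p : Fin l.length, ∃ (k : Fin m) (j : ℕ) (hj : j < (τ k).1),
      (p : ℕ) = offL (List.finRange m) (blockG π τ) k.val + j ∧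
      l.get p = blockS π τ k + ((τ k).2 ⟨j, hj⟩).val + 1 := by
    intro p
    obtain ⟨k, j, hk, hj, henc, hval⟩ := inflate_decomp π τ p.val p.isLt
    exact ⟨⟨k, hk⟩, j, hj, henc, hval⟩
  choose K J hJ hEnc hVal using hdec
  -- the embedding
  have hbound : ∀ p : Fin l.length,
      offL (List.finRange m) (blockG π τ') (K p).val + (g (K p) ⟨J p, hJ p⟩).val <
        l'.length :=
    fun p => (inflate_encode π τ' (K p).isLt (g (K p) ⟨J p, hJ p⟩).isLt).1
  set f : Fin l.length → Fin l'.length := fun p =>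
    ⟨offL (List.finRange m) (blockG π τ') (K p).val + (g (K p) ⟨J p, hJ p⟩).val,
      hbound p⟩ with hf
  have hVal' : ∀ p : Fin l.length,
      l'.get (f p) = blockS π τ' (K p) + ((τ' (K p)).2 (g (K p) ⟨J p, hJ p⟩)).val + 1 :=
    fun p => (inflate_encode π τ' (K p).isLt (g (K p) ⟨J p, hJ p⟩).isLt).2
  -- strict monotonicity
  have hmono : StrictMono f := by
    intro p q hpq
    have hlt : (p : ℕ) < (q : ℕ) := hpq
    rcases Nat.lt_trichotomy (K p).val (K q).val with hK | hK | hK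
    · show (f p : ℕ) < (f q : ℕ)
      exact encode_strict_lt (List.finRange m) (blockG π τ') (by simpa using (K p).isLt)
        (by rw [finRange_getElem, blockG_length]; exact (g (K p) ⟨J p, hJ p⟩).isLt) hK
    · have hkk : K p = K q := Fin.ext hK
      have hoff : offL (List.finRange m) (blockG π τ) (K p).val =
          offL (List.finRange m) (blockG π τ) (K q).val := by rw [hK]
      have hJpq : J p < J q := by
        have h1 := hEnc p; have h2 := hEnc q; omega
      have hJq2 : J q < (τ (K p)).1 := hkk ▸ hJ q
      have hglt : (g (K p) ⟨J p, hJ p⟩).val < (g (K p) ⟨J q, hJq2⟩).val :=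
        hg (K p) (show (⟨J p, hJ p⟩ : Fin (τ (K p)).1) < ⟨J q, hJq2⟩ from hJpq)
      have hgq : (g (K p) ⟨J q, hJq2⟩).val = (g (K q) ⟨J q, hJ q⟩).val :=
        gvcongr _ _ hkk _ _ _
      show (f p : ℕ) < (f q : ℕ)
      have hoff' : offL (List.finRange m) (blockG π τ') (K p).val =
          offL (List.finRange m) (blockG π τ') (K q).val := by rw [hK]
      simp only [hf]
      omega
    · exfalso
      have := encode_strict_lt (List.finRange m) (blockG π τ) (j' := J p)
        (by simpa using (K q).isLt)
        (by rw [finRange_getElem, blockG_length]; exact hJ q) hK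
      have h1 := hEnc p; have h2 := hEnc q
      omega
  refine ofList_permLE (inflateList_get_injective π τ) (inflateList_get_injective π τ')
    f hmono ?_
  intro p q
  rw [hVal p, hVal q, hVal' p, hVal' q]
  by_cases hkk : K p = K q
  · have hJq2 : J q < (τ (K p)).1 := hkk ▸ hJ q
    have e1 : blockS π τ (K q) = blockS π τ (K p) := by rw [hkk]
    have e2 : ((τ (K q)).2 ⟨J q, hJ q⟩).val = ((τ (K p)).2 ⟨J q, hJq2⟩).val :=
      scongr _ _ hkk.symm _ _ _
    have e3 : blockS π τ' (K q) = blockS π τ' (K p) := by rw [hkk]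
    have e4 : ((τ' (K q)).2 (g (K q) ⟨J q, hJ q⟩)).val =
        ((τ' (K p)).2 (g (K p) ⟨J q, hJq2⟩)).val := gcongr _ _ hkk.symm _ _ _
    rw [e1, e2, e3, e4]
    have hiff := hgv (K p) ⟨J p, hJ p⟩ ⟨J q, hJq2⟩
    rw [Fin.lt_iff_val_lt_val, Fin.lt_iff_val_lt_val] at hiff
    constructor
    · intro hlt
      have : ((τ (K p)).2 ⟨J p, hJ p⟩).val < ((τ (K p)).2 ⟨J q, hJq2⟩).val := by omega
      have := hiff.1 this
      omega
    · intro hlt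
      have : ((τ' (K p)).2 (g (K p) ⟨J p, hJ p⟩)).val <
          ((τ' (K p)).2 (g (K p) ⟨J q, hJq2⟩)).val := by omega
      have := hiff.2 this
      omega
  · have hπ : π (K p) ≠ π (K q) := fun he => hkk (π.injective he)
    rcases hπ.lt_or_gt with h' | h'
    · have b1 := blockVal_lt π τ h' ((τ (K p)).2 ⟨J p, hJ p⟩).isLt
      have b2 := blockVal_lt π τ' h' ((τ' (K p)).2 (g (K p) ⟨J p, hJ p⟩)).isLt
      constructor
      · intro _; omega
      · intro _; omega
    · have b1 := blockVal_lt π τ h' ((τ (K q)).2 ⟨J q, hJ q⟩).isLt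
      have b2 := blockVal_lt π τ' h' ((τ' (K q)).2 (g (K q) ⟨J q, hJ q⟩)).isLt
      constructor
      · intro hc; omega
      · intro hc; omega

end InflateMono

section Assembly

instance : IsRefl PermSeq PermLE := ⟨permLE_refl⟩

instance : IsTrans PermSeq PermLE := ⟨fun _ _ _ => permLE_trans_s7⟩

instance : IsPreorder PermSeq PermLE where
  refl := permLE_refl
  trans := fun _ _ _ => permLE_trans_s7

/-- Extraction of a pointwise-increasing subsequence from a sequence of tuples over a
pwo set (finite Dickson/Higman-style argument). -/
lemma pi_subseq {Q : Set PermSeq} (hQ : Q.PartiallyWellOrderedOn PermLE) :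
    ∀ (m : ℕ) (τ : ℕ → Fin m → PermSeq), (∀ k i, τ k i ∈ Q) →
      ∃ g : ℕ ↪o ℕ, ∀ k l : ℕ, k ≤ l → ∀ i, PermLE (τ (g k) i) (τ (g l) i) := by
  intro m
  induction m with
  | zero =>
    intro τ _
    exact ⟨OrderEmbedding.ofStrictMono id strictMono_id, fun k l _ i => i.elim0⟩
  | succ m ih =>
    intro τ hτ
    obtain ⟨g1, hg1⟩ := ih (fun k i => τ k i.succ) (fun k i => hτ k i.succ)
    obtain ⟨g2, hg2⟩ := hQ.exists_monotone_subseq (f := fun k => τ (g1 k) 0)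
      (fun k => hτ (g1 k) 0)
    refine ⟨g2.trans g1, fun k l hkl i => ?_⟩
    refine Fin.cases ?_ ?_ i
    · exact hg2 k l hkl
    · intro i'
      exact hg1 (g2 k) (g2 l) (g2.monotone hkl) i'

/-- An infinite constant subsequence for a map into a finite set. -/
lemma exists_const_subseq {β : Type*} {s : Set β} (hs : s.Finite) (F : ℕ → β)
    (hF : ∀ k, F k ∈ s) : ∃ a, ∃ g : ℕ ↪o ℕ, ∀ k, F (g k) = a := by
  classical
  haveI := hs.to_subtype
  obtain ⟨y, hy⟩ := Finite.exists_infinite_fiber (fun k : ℕ => (⟨F k, hF k⟩ : s))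
  haveI : Infinite ((fun k : ℕ => (⟨F k, hF k⟩ : s)) ⁻¹' {y}) := hy
  refine ⟨y.val, Nat.orderEmbeddingOfSet ((fun k : ℕ => (⟨F k, hF k⟩ : s)) ⁻¹' {y}), fun k => ?_⟩
  have hmem : (Nat.orderEmbeddingOfSet ((fun k : ℕ => (⟨F k, hF k⟩ : s)) ⁻¹' {y}) k) ∈
      ((fun k : ℕ => (⟨F k, hF k⟩ : s)) ⁻¹' {y}) := by
    have := Set.mem_range_self
      (f := ⇑(Nat.orderEmbeddingOfSet ((fun k : ℕ => (⟨F k, hF k⟩ : s)) ⁻¹' {y}))) k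
    rwa [Nat.orderEmbeddingOfSet_range] at this
  simpa using congrArg Subtype.val hmem

lemma inflateSet_pwo {P Q : Set PermSeq} (hP : P.Finite)
    (hQ : Q.PartiallyWellOrderedOn PermLE) :
    (inflateSet P Q).PartiallyWellOrderedOn PermLE := by
  rw [Set.partiallyWellOrderedOn_iff_exists_lt]
  intro f hmem
  have h1 : ∀ k, ∃ p : PermSeq, p ∈ P ∧ ∃ τ : Fin p.1 → PermSeq,
      (∀ i, τ i ∈ Q) ∧ f k = inflate p.2 τ := by
    intro k
    obtain ⟨m, -, π, hπ, τ, hτ, heq⟩ := hmem k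
    exact ⟨⟨m, π⟩, hπ, τ, hτ, heq⟩
  choose p hp τ hτQ hτeq using h1
  obtain ⟨p₀, g, hg⟩ := exists_const_subseq hP p hp
  have h2 : ∀ k, ∃ σ : Fin p₀.1 → PermSeq, (∀ i, σ i ∈ Q) ∧
      f (g k) = inflate p₀.2 σ := by
    intro k
    rw [← hg k]
    exact ⟨τ (g k), hτQ _, hτeq _⟩
  choose σ hσQ hσeq using h2
  obtain ⟨g', hg'⟩ := pi_subseq hQ p₀.1 σ (fun k i => hσQ k i)
  refine ⟨g (g' 0), g (g' 1), g.strictMono (g'.strictMono Nat.zero_lt_one), ?_⟩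
  rw [hσeq (g' 0), hσeq (g' 1)]
  exact inflate_permLE p₀.2 _ _ (hg' 0 1 (Nat.zero_le 1))

end Assembly

/-- If `P` is a finite set of permutations and `(Q, ≺)` is a well partial order,
then `(P[Q], ≺)` is a well partial order. -/
theorem inflateSet_wpo (P Q : Set PermSeq) (hP : P.Finite) (hQ : IsWpoOn Q) :
    IsWpoOn (inflateSet P Q) :=
  isWpoOn_of_pwo (inflateSet_pwo hP (pwo_of_isWpoOn hQ))
end
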